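/- arXiv:1710.02501 — 2 statements merged into one kernel-verified Lean document; each statement's English description precedes it below -/
import Mathlib

section
/- Let r ≥ 2 and let (P,ℒ) be an r-uniform linear system with |ℒ| > ν₂ and 2-packing number ν₂ = 4. Then (r+1)·τ ≤ |P| + |ℒ| (equivalently, τ ≤ (|P| + |ℒ|)/(r+1)), where τ is the transversal number. -/
open Finset

/-- `(P, L)` is a linear system: lines are nonempty subsets of the point set `P`,
and any two distinct lines share at most one point. -/
def IsLinearSystem {α : Type*} [DecidableEq α] (P : Finset α) (L : Finset (Finset α)) : Prop :=
  (∀ l ∈ L, l.Nonempty) ∧ (∀ l ∈ L, l ⊆ P) ∧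
    ∀ l ∈ L, ∀ l' ∈ L, l ≠ l' → (l ∩ l').card ≤ 1

/-- `T` is a transversal of the linear system `(P, L)`. -/
def IsTransversal {α : Type*} [DecidableEq α] (P : Finset α) (L : Finset (Finset α))
    (T : Finset α) : Prop :=
  T ⊆ P ∧ ∀ l ∈ L, (T ∩ l).Nonempty

/-- The transversal number `τ` of `(P, L)`. -/
noncomputable def tau {α : Type*} [DecidableEq α] (P : Finset α) (L : Finset (Finset α)) : ℕ :=
  sInf {n | ∃ T : Finset α, IsTransversal P L T ∧ T.card = n}

/-- `R` is a 2-packing of `L`: no three distinct lines of `R` have a common point. -/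
def Is2Packing {α : Type*} [DecidableEq α] (L R : Finset (Finset α)) : Prop :=
  R ⊆ L ∧ ∀ l₁ ∈ R, ∀ l₂ ∈ R, ∀ l₃ ∈ R,
    l₁ ≠ l₂ → l₁ ≠ l₃ → l₂ ≠ l₃ → l₁ ∩ l₂ ∩ l₃ = ∅

/-- The 2-packing number `ν₂` of `(P, L)`. -/
noncomputable def nu2 {α : Type*} [DecidableEq α] (L : Finset (Finset α)) : ℕ :=
  sSup {n | ∃ R : Finset (Finset α), Is2Packing L R ∧ R.card = n}

/-- The degree of a point `p`: the number of lines containing `p`. -/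
def degree {α : Type*} [DecidableEq α] (L : Finset (Finset α)) (p : α) : ℕ :=
  (L.filter fun l => p ∈ l).card

/-- The maximum degree `Δ` over all points of `P`. -/
def maxDegree {α : Type*} [DecidableEq α] (P : Finset α) (L : Finset (Finset α)) : ℕ :=
  P.sup (degree L)

set_option linter.unusedSectionVars false

namespace Stmt12

variable {α : Type*} [DecidableEq α]

/-- three sets have a common point -/
def com (x y z : Finset α) : Prop := ∃ p, p ∈ x ∧ p ∈ y ∧ p ∈ z

lemma com_swap {x y z : Finset α} (h : com x y z) : com y x z :=
  ⟨h.choose, h.choose_spec.2.1, h.choose_spec.1, h.choose_spec.2.2⟩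

lemma com_rot {x y z : Finset α} (h : com x y z) : com x z y :=
  ⟨h.choose, h.choose_spec.1, h.choose_spec.2.2, h.choose_spec.2.1⟩

lemma tau_le_of_cover (P : Finset α) (L : Finset (Finset α)) (X : Finset α)
    (hXP : ∀ p ∈ X, p ∈ P) (hcov : ∀ l ∈ L, ∃ p ∈ X, p ∈ l) : tau P L ≤ X.card := by
  apply Nat.sInf_le
  refine ⟨X, ⟨fun p hp => hXP p hp, fun l hl => ?_⟩, rfl⟩
  obtain ⟨p, hpX, hpl⟩ := hcov l hl
  exact ⟨p, mem_inter.mpr ⟨hpX, hpl⟩⟩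

lemma nu2_bdd (L : Finset (Finset α)) :
    BddAbove {n | ∃ R : Finset (Finset α), Is2Packing L R ∧ R.card = n} := by
  refine ⟨L.card, fun n hn => ?_⟩
  obtain ⟨R, hR, rfl⟩ := hn
  exact card_le_card hR.1

lemma nu2_attained (L : Finset (Finset α)) :
    ∃ R : Finset (Finset α), Is2Packing L R ∧ R.card = nu2 L := by
  have hne : {n | ∃ R : Finset (Finset α), Is2Packing L R ∧ R.card = n}.Nonempty :=
    ⟨0, ∅, ⟨empty_subset _, by simp⟩, card_empty⟩
  exact Nat.sSup_mem hne (nu2_bdd L)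

lemma le_nu2 (L : Finset (Finset α)) (R : Finset (Finset α)) (h : Is2Packing L R) :
    R.card ≤ nu2 L := le_csSup (nu2_bdd L) ⟨R, h, rfl⟩

structure Cfg (P : Finset α) (L : Finset (Finset α)) (r : ℕ) (A B C D : Finset α) : Prop where
  hr : 2 ≤ r
  hm : 5 ≤ L.card
  ucard : ∀ l ∈ L, l.card = r
  subP : ∀ l ∈ L, l ⊆ P
  uniq : ∀ x ∈ L, ∀ y ∈ L, x ≠ y → ∀ p q, p ∈ x → p ∈ y → q ∈ x → q ∈ y → p = q
  hA : A ∈ L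
  hB : B ∈ L
  hC : C ∈ L
  hD : D ∈ L
  nAB : A ≠ B
  nAC : A ≠ C
  nAD : A ≠ D
  nBC : B ≠ C
  nBD : B ≠ D
  nCD : C ≠ D
  pABC : ∀ p, p ∈ A → p ∈ B → p ∈ C → False
  pABD : ∀ p, p ∈ A → p ∈ B → p ∈ D → False
  pACD : ∀ p, p ∈ A → p ∈ C → p ∈ D → False
  pBCD : ∀ p, p ∈ B → p ∈ C → p ∈ D → False
  k5 : ∀ x y z u v, x ∈ L → y ∈ L → z ∈ L → u ∈ L → v ∈ L →
    x ≠ y → x ≠ z → x ≠ u → x ≠ v → y ≠ z → y ≠ u → y ≠ v → z ≠ u → z ≠ v → u ≠ v →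
    com x y z ∨ com x y u ∨ com x y v ∨ com x z u ∨ com x z v ∨ com x u v ∨
    com y z u ∨ com y z v ∨ com y u v ∨ com z u v

variable {P : Finset α} {L : Finset (Finset α)} {r : ℕ} {A B C D : Finset α}

def Cfg.swapAB (h : Cfg P L r A B C D) : Cfg P L r B A C D where
  hr := h.hr
  hm := h.hm
  ucard := h.ucard
  subP := h.subP
  uniq := h.uniq
  hA := h.hB
  hB := h.hA
  hC := h.hC
  hD := h.hD
  nAB := h.nAB.symm
  nAC := h.nBC
  nAD := h.nBD
  nBC := h.nAC
  nBD := h.nAD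
  nCD := h.nCD
  pABC := fun p hb ha hc => h.pABC p ha hb hc
  pABD := fun p hb ha hd => h.pABD p ha hb hd
  pACD := h.pBCD
  pBCD := h.pACD
  k5 := h.k5

def Cfg.swapBC (h : Cfg P L r A B C D) : Cfg P L r A C B D where
  hr := h.hr
  hm := h.hm
  ucard := h.ucard
  subP := h.subP
  uniq := h.uniq
  hA := h.hA
  hB := h.hC
  hC := h.hB
  hD := h.hD
  nAB := h.nAC
  nAC := h.nAB
  nAD := h.nAD
  nBC := h.nBC.symm
  nBD := h.nCD
  nCD := h.nBD
  pABC := fun p ha hc hb => h.pABC p ha hb hc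
  pABD := h.pACD
  pACD := h.pABD
  pBCD := fun p hc hb hd => h.pBCD p hb hc hd
  k5 := h.k5

def Cfg.swapCD (h : Cfg P L r A B C D) : Cfg P L r A B D C where
  hr := h.hr
  hm := h.hm
  ucard := h.ucard
  subP := h.subP
  uniq := h.uniq
  hA := h.hA
  hB := h.hB
  hC := h.hD
  hD := h.hC
  nAB := h.nAB
  nAC := h.nAD
  nAD := h.nAC
  nBC := h.nBD
  nBD := h.nBC
  nCD := h.nCD.symm
  pABC := h.pABD
  pABD := h.pABC
  pACD := fun p ha hd hc => h.pACD p ha hc hd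
  pBCD := fun p hb hd hc => h.pBCD p hb hc hd
  k5 := h.k5

/-- x is a line outside the packing -/
def Outl (L : Finset (Finset α)) (A B C D x : Finset α) : Prop :=
  x ∈ L ∧ x ≠ A ∧ x ≠ B ∧ x ≠ C ∧ x ≠ D

lemma Cfg.same (h : Cfg P L r A B C D) {x y : Finset α} (hx : x ∈ L) (hy : y ∈ L)
    (hxy : x ≠ y) {p q : α} (hp1 : p ∈ x) (hp2 : p ∈ y) (hq1 : q ∈ x) (hq2 : q ∈ y) :
    p = q := h.uniq x hx y hy hxy p q hp1 hp2 hq1 hq2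

/-- two concurrencies of line x with pairs sharing line X force a packing triple -/
lemma Cfg.trik (h : Cfg P L r A B C D) {X Y Z x : Finset α} (hX : X ∈ L) (hx : x ∈ L)
    (hXx : X ≠ x) (hpack : ∀ p, p ∈ X → p ∈ Y → p ∈ Z → False)
    (h1 : com X Y x) (h2 : com X Z x) : False := by
  obtain ⟨p, pX, pY, px⟩ := h1
  obtain ⟨q, qX, qZ, qx⟩ := h2
  have hpq : p = q := h.same hX hx hXx pX px qX qx
  exact hpack p pX pY (by rw [hpq]; exact qZ)

lemma Cfg.crossk (h : Cfg P L r A B C D) {Z X x y : Finset α} (hX : X ∈ L) (hx : x ∈ L)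
    (hXx : X ≠ x) (hdbl : com Z X x) (hneg : ¬ com Z X y) (hc : com X x y) : False := by
  obtain ⟨p, pX, px, py⟩ := hc
  obtain ⟨q, qZ, qX, qx⟩ := hdbl
  have hpq : p = q := h.same hX hx hXx pX px qX qx
  exact hneg ⟨q, qZ, qX, by rw [← hpq]; exact py⟩

/-- every outside line contains a double point of the packing -/
lemma Cfg.mne (h : Cfg P L r A B C D) {x : Finset α} (hx : Outl L A B C D x) :
    com A B x ∨ com C D x ∨ com A C x ∨ com B D x ∨ com A D x ∨ com B C x := by
  obtain ⟨hxL, nxA, nxB, nxC, nxD⟩ := hx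
  have k := h.k5 A B C D x h.hA h.hB h.hC h.hD hxL h.nAB h.nAC h.nAD nxA.symm
    h.nBC h.nBD nxB.symm h.nCD nxC.symm nxD.symm
  rcases k with k|k|k|k|k|k|k|k|k|k
  · obtain ⟨p, h1, h2, h3⟩ := k; exact absurd (h.pABC p h1 h2 h3) id
  · obtain ⟨p, h1, h2, h3⟩ := k; exact absurd (h.pABD p h1 h2 h3) id
  · exact Or.inl k
  · obtain ⟨p, h1, h2, h3⟩ := k; exact absurd (h.pACD p h1 h2 h3) id
  · exact Or.inr (Or.inr (Or.inl k))
  · exact Or.inr (Or.inr (Or.inr (Or.inr (Or.inl k))))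
  · obtain ⟨p, h1, h2, h3⟩ := k; exact absurd (h.pBCD p h1 h2 h3) id
  · exact Or.inr (Or.inr (Or.inr (Or.inr (Or.inr k))))
  · exact Or.inr (Or.inr (Or.inr (Or.inl k)))
  · exact Or.inr (Or.inl k)

/-- forced meeting of an AB-single and an AC-single on line D -/
lemma Cfg.wlem (h : Cfg P L r A B C D) {x y : Finset α}
    (hx : Outl L A B C D x) (hy : Outl L A B C D y)
    (hxAB : com A B x) (hxnCD : ¬ com C D x)
    (hyAC : com A C y) (hynBD : ¬ com B D y) :
    ∃ w, w ∈ x ∧ w ∈ y ∧ w ∈ D := by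
  obtain ⟨hxL, nxA, nxB, nxC, nxD⟩ := hx
  obtain ⟨hyL, nyA, nyB, nyC, nyD⟩ := hy
  have hxy : x ≠ y := by
    rintro rfl
    exact h.trik h.hA hxL nxA.symm h.pABC hxAB hyAC
  have k := h.k5 B C D x y h.hB h.hC h.hD hxL hyL h.nBC h.nBD nxB.symm nyB.symm
    h.nCD nxC.symm nyC.symm nxD.symm nyD.symm hxy
  rcases k with k|k|k|k|k|k|k|k|k|k
  · obtain ⟨p, h1, h2, h3⟩ := k; exact absurd (h.pBCD p h1 h2 h3) id
  · exact absurd (h.trik h.hB hxL nxB.symm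
      (fun p hb ha hc => h.pABC p ha hb hc) (com_swap hxAB) k) id
  · exact absurd (h.trik h.hC hyL nyC.symm
      (fun p hc ha hb => h.pABC p ha hb hc) (com_swap hyAC) (com_swap k)) id
  · exact absurd (h.trik h.hB hxL nxB.symm
      (fun p hb ha hd => h.pABD p ha hb hd) (com_swap hxAB) k) id
  · exact absurd k hynBD
  · refine absurd (h.crossk h.hB hxL nxB.symm hxAB ?_ k) id
    intro hab
    exact h.trik h.hA hyL nyA.symm h.pABC hab hyAC
  · exact absurd k hxnCD
  · exact absurd (h.trik h.hC hyL nyC.symm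
      (fun p hc ha hd => h.pACD p ha hc hd) (com_swap hyAC) k) id
  · refine absurd (h.crossk h.hC hyL nyC.symm hyAC ?_ (com_rot k)) id
    intro hac
    exact h.trik h.hA hxL nxA.symm h.pABC hxAB hac
  · obtain ⟨w, wD, wx, wy⟩ := k
    exact ⟨w, wx, wy, wD⟩

/-- forced common point of an AB-single and fulls of the two other classes -/
lemma Cfg.qlem (h : Cfg P L r A B C D) {z x y : Finset α}
    (hz : Outl L A B C D z) (hx : Outl L A B C D x) (hy : Outl L A B C D y)
    (hzAB : com A B z) (hznCD : ¬ com C D z)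
    (hxAC : com A C x) (hxBD : com B D x)
    (hyAD : com A D y) (hyBC : com B C y) :
    ∃ q, q ∈ z ∧ q ∈ x ∧ q ∈ y := by
  obtain ⟨hzL, nzA, nzB, nzC, nzD⟩ := hz
  obtain ⟨hxL, nxA, nxB, nxC, nxD⟩ := hx
  obtain ⟨hyL, nyA, nyB, nyC, nyD⟩ := hy
  have hzx : z ≠ x := by
    rintro rfl; exact h.trik h.hA hzL nzA.symm h.pABC hzAB hxAC
  have hzy : z ≠ y := by
    rintro rfl; exact h.trik h.hA hzL nzA.symm h.pABD hzAB hyAD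
  have hxy : x ≠ y := by
    rintro rfl; exact h.trik h.hA hxL nxA.symm h.pACD hxAC hyAD
  have k := h.k5 C D z x y h.hC h.hD hzL hxL hyL h.nCD nzC.symm nxC.symm nyC.symm
    nzD.symm nxD.symm nyD.symm hzx hzy hxy
  rcases k with k|k|k|k|k|k|k|k|k|k
  · exact absurd k hznCD
  · exact absurd (h.trik h.hC hxL nxC.symm
      (fun p hc ha hd => h.pACD p ha hc hd) (com_swap hxAC) k) id
  · exact absurd (h.trik h.hD hyL nyD.symm
      (fun p hd ha hc => h.pACD p ha hc hd) (com_swap hyAD) (com_swap k)) id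
  · refine absurd (h.crossk h.hC hxL nxC.symm hxAC ?_ (com_rot k)) id
    intro hac
    exact h.trik h.hA hzL nzA.symm h.pABC hzAB hac
  · refine absurd (h.crossk h.hC hyL nyC.symm hyBC ?_ (com_rot k)) id
    intro hbc
    exact h.trik h.hB hzL nzB.symm
      (fun p hb ha hc => h.pABC p ha hb hc) (com_swap hzAB) hbc
  · refine absurd (h.crossk h.hC hxL nxC.symm hxAC ?_ k) id
    intro hac
    exact h.trik h.hA hyL nyA.symm h.pACD hac hyAD
  · refine absurd (h.crossk h.hD hxL nxD.symm hxBD ?_ (com_rot k)) id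
    intro hbd
    exact h.trik h.hB hzL nzB.symm
      (fun p hb ha hd => h.pABD p ha hb hd) (com_swap hzAB) hbd
  · refine absurd (h.crossk h.hD hyL nyD.symm hyAD ?_ (com_rot k)) id
    intro had
    exact h.trik h.hA hzL nzA.symm h.pABD hzAB had
  · refine absurd (h.crossk h.hD hxL nxD.symm hxBD ?_ k) id
    intro hbd
    exact h.trik h.hB hyL nyB.symm h.pBCD hyBC hbd
  · obtain ⟨q, qz, qx, qy⟩ := k
    exact ⟨q, qz, qx, qy⟩


/-! ### counting kit -/

lemma card_le_four (a b c d : α) : ({a,b,c,d} : Finset α).card ≤ 4 := by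
  have h1 := card_insert_le a ({b,c,d} : Finset α)
  have h2 := card_insert_le b ({c,d} : Finset α)
  have h3 := card_insert_le c ({d} : Finset α)
  simp only [card_singleton] at *
  omega

lemma card_le_three (a b c : α) : ({a,b,c} : Finset α).card ≤ 3 := by
  have h2 := card_insert_le a ({b,c} : Finset α)
  have h3 := card_insert_le b ({c} : Finset α)
  simp only [card_singleton] at *
  omega

lemma card_le_two (a b : α) : ({a,b} : Finset α).card ≤ 2 := by
  have h2 := card_insert_le a ({b} : Finset α)
  simp only [card_singleton] at *
  omega

lemma card_eq_four_of_distinct {β : Type*} [DecidableEq β] {a b c d : β}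
    (hab : a ≠ b) (hac : a ≠ c) (had : a ≠ d)
    (hbc : b ≠ c) (hbd : b ≠ d) (hcd : c ≠ d) : ({a,b,c,d} : Finset β).card = 4 := by
  rw [card_insert_of_notMem (by simp [hab, hac, had]),
      card_insert_of_notMem (by simp [hbc, hbd]),
      card_insert_of_notMem (by simp [hcd]), card_singleton]

lemma card_eq_three_of_distinct {β : Type*} [DecidableEq β] {a b c : β}
    (hab : a ≠ b) (hac : a ≠ c) (hbc : b ≠ c) : ({a,b,c} : Finset β).card = 3 := by
  rw [card_insert_of_notMem (by simp [hab, hac]),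
      card_insert_of_notMem (by simp [hbc]), card_singleton]

/-- point on two packing lines lies on any line meeting both of them in a common point -/
lemma Cfg.dblm (h : Cfg P L r A B C D) {X Y x : Finset α} (hX : X ∈ L) (hY : Y ∈ L)
    (hXY : X ≠ Y) {p : α} (hpX : p ∈ X) (hpY : p ∈ Y) (hc : com X Y x) : p ∈ x := by
  obtain ⟨q, qX, qY, qx⟩ := hc
  have hpq : p = q := h.same hX hY hXY hpX hpY qX qY
  exact hpq ▸ qx

lemma Cfg.line_inter_le (h : Cfg P L r A B C D) {x y : Finset α} (hx : x ∈ L) (hy : y ∈ L)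
    (hxy : x ≠ y) : (x ∩ y).card ≤ 1 := by
  apply card_le_one.mpr
  intro p hp q hq
  rw [mem_inter] at hp hq
  exact h.same hx hy hxy hp.1 hp.2 hq.1 hq.2

lemma Cfg.dblp (h : Cfg P L r A B C D) {X Y x : Finset α} (hX : X ∈ L) (hY : Y ∈ L)
    (hxL : x ∈ L) (hxX : x ≠ X) (hxY : x ≠ Y) (hd : com X Y x) :
    (x ∩ (X ∪ Y)).card ≤ 1 := by
  obtain ⟨p, pX, pY, px⟩ := hd
  apply card_le_one.mpr
  intro u hu v hv
  have key : ∀ w, w ∈ x ∩ (X ∪ Y) → w = p := by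
    intro w hw
    rw [mem_inter, mem_union] at hw
    rcases hw.2 with h'|h'
    · exact h.same hxL hX hxX hw.1 h' px pX
    · exact h.same hxL hY hxY hw.1 h' px pY
  rw [key u hu, key v hv]

lemma degG {X Y Z V : Finset α} (hd1 : Disjoint (X∩Y) (X∩Z))
    (hd2 : Disjoint ((X∩Y) ∪ (X∩Z)) (X∩V)) :
    (X∩Y).card + (X∩Z).card + (X∩V).card ≤ X.card := by
  have hsub : (X∩Y) ∪ (X∩Z) ∪ (X∩V) ⊆ X := by
    intro p hp
    rcases mem_union.mp hp with hp'|hp'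
    · rcases mem_union.mp hp' with hp''|hp'' <;> exact (mem_inter.mp hp'').1
    · exact (mem_inter.mp hp').1
  have := card_le_card hsub
  rwa [card_union_of_disjoint hd2, card_union_of_disjoint hd1] at this

lemma disj_of_pack {X Y Z : Finset α} (hp : ∀ p, p ∈ X → p ∈ Y → p ∈ Z → False) :
    Disjoint (X∩Y) (X∩Z) := by
  rw [disjoint_left]; intro p hp1 hp2
  exact hp p (mem_inter.mp hp1).1 (mem_inter.mp hp1).2 (mem_inter.mp hp2).2

lemma disj_of_pack2 {X Y Z V : Finset α} (hp1 : ∀ p, p ∈ X → p ∈ Y → p ∈ V → False)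
    (hp2 : ∀ p, p ∈ X → p ∈ Z → p ∈ V → False) :
    Disjoint ((X∩Y) ∪ (X∩Z)) (X∩V) := by
  rw [disjoint_left]; intro p hp hq
  rcases mem_union.mp hp with hp'|hp'
  · exact hp1 p (mem_inter.mp hp').1 (mem_inter.mp hp').2 (mem_inter.mp hq).2
  · exact hp2 p (mem_inter.mp hp').1 (mem_inter.mp hp').2 (mem_inter.mp hq).2

/-- if X consists entirely of its double points with Y, Z, V and x avoids those, x ∩ X = ∅ -/
lemma Cfg.avoidG (h : Cfg P L r A B C D) {X Y Z V x : Finset α}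
    (hd1 : Disjoint (X∩Y) (X∩Z)) (hd2 : Disjoint ((X∩Y) ∪ (X∩Z)) (X∩V))
    (hcard : X.card ≤ (X∩Y).card + (X∩Z).card + (X∩V).card)
    (h1 : ¬ com X Y x) (h2 : ¬ com X Z x) (h3 : ¬ com X V x) : x ∩ X = ∅ := by
  have hsub : (X∩Y) ∪ (X∩Z) ∪ (X∩V) ⊆ X := by
    intro p hp
    rcases mem_union.mp hp with hp'|hp'
    · rcases mem_union.mp hp' with hp''|hp'' <;> exact (mem_inter.mp hp'').1
    · exact (mem_inter.mp hp').1
  have hXeq : (X∩Y) ∪ (X∩Z) ∪ (X∩V) = X := by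
    apply eq_of_subset_of_card_le hsub
    calc X.card ≤ (X∩Y).card + (X∩Z).card + (X∩V).card := hcard
    _ = ((X∩Y) ∪ (X∩Z) ∪ (X∩V)).card := by
        rw [card_union_of_disjoint hd2, card_union_of_disjoint hd1]
  rw [eq_empty_iff_forall_notMem]
  intro p hp
  rw [mem_inter] at hp
  have hpX := hp.2
  rw [← hXeq] at hpX
  rcases mem_union.mp hpX with hp'|hp'
  · rcases mem_union.mp hp' with hp''|hp''
    · exact h1 ⟨p, (mem_inter.mp hp'').1, (mem_inter.mp hp'').2, hp.1⟩
    · exact h2 ⟨p, (mem_inter.mp hp'').1, (mem_inter.mp hp'').2, hp.1⟩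
  · exact h3 ⟨p, (mem_inter.mp hp').1, (mem_inter.mp hp').2, hp.1⟩

lemma split4 (x A B C D : Finset α) :
    (x ∩ (A ∪ B ∪ C ∪ D)).card ≤ (x ∩ (A ∪ B)).card + (x ∩ C).card + (x ∩ D).card := by
  have hsub : x ∩ (A ∪ B ∪ C ∪ D) ⊆ (x ∩ (A ∪ B)) ∪ (x ∩ C) ∪ (x ∩ D) := by
    intro p hp
    simp only [mem_inter, mem_union] at hp ⊢
    tauto
  have h1 := card_le_card hsub
  have h2 := card_union_le ((x ∩ (A ∪ B)) ∪ (x ∩ C)) (x ∩ D)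
  have h3 := card_union_le (x ∩ (A ∪ B)) (x ∩ C)
  omega

lemma split22 (x A B C D : Finset α) :
    (x ∩ (A ∪ B ∪ C ∪ D)).card ≤ (x ∩ (A ∪ B)).card + (x ∩ (C ∪ D)).card := by
  have hsub : x ∩ (A ∪ B ∪ C ∪ D) ⊆ (x ∩ (A ∪ B)) ∪ (x ∩ (C ∪ D)) := by
    intro p hp
    simp only [mem_inter, mem_union] at hp ⊢
    tauto
  have h1 := card_le_card hsub
  have h2 := card_union_le (x ∩ (A ∪ B)) (x ∩ (C ∪ D))
  omega

lemma freshc {x t : Finset α} {r : ℕ} (hx : x.card = r) :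
    (x \ t).card + (x ∩ t).card = r := by
  rw [card_sdiff_add_card_inter]; exact hx

lemma Cfg.sep (h : Cfg P L r A B C D) {x y : Finset α} {w : α} {U : Finset α}
    (hx : x ∈ L) (hy : y ∈ L) (hxy : x ≠ y)
    (hwx : w ∈ x) (hwy : w ∈ y) (hwU : w ∈ U) :
    Disjoint (x \ U) (y \ U) := by
  rw [disjoint_left]; intro p hp hq
  rw [mem_sdiff] at hp hq
  have hpw : p = w := h.same hx hy hxy hp.1 hq.1 hwx hwy
  exact hp.2 (hpw ▸ hwU)

lemma Cfg.ur_card (h : Cfg P L r A B C D) :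
    (A ∪ B ∪ C ∪ D).card + ((A∩B).card + (A∩C).card + (A∩D).card + (B∩C).card +
      (B∩D).card + (C∩D).card) = 4 * r := by
  have cA := h.ucard A h.hA
  have cB := h.ucard B h.hB
  have cC := h.ucard C h.hC
  have cD := h.ucard D h.hD
  have c1 := card_union_add_card_inter A B
  have c2 := card_union_add_card_inter (A ∪ B) C
  have c3 := card_union_add_card_inter (A ∪ B ∪ C) D
  have d2 : Disjoint (A ∩ C) (B ∩ C) := by
    rw [disjoint_left]; intro p hp hq
    exact h.pABC p (mem_inter.mp hp).1 (mem_inter.mp hq).1 (mem_inter.mp hp).2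
  have d3a : Disjoint (A ∩ D) (B ∩ D) := by
    rw [disjoint_left]; intro p hp hq
    exact h.pABD p (mem_inter.mp hp).1 (mem_inter.mp hq).1 (mem_inter.mp hp).2
  have d3b : Disjoint ((A ∩ D) ∪ (B ∩ D)) (C ∩ D) := by
    rw [disjoint_left]; intro p hp hq
    rcases mem_union.mp hp with hp'|hp'
    · exact h.pACD p (mem_inter.mp hp').1 (mem_inter.mp hq).1 (mem_inter.mp hp').2
    · exact h.pBCD p (mem_inter.mp hp').1 (mem_inter.mp hq).1 (mem_inter.mp hp').2
  have n2 : ((A ∪ B) ∩ C).card = (A∩C).card + (B∩C).card := by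
    rw [union_inter_distrib_right, card_union_of_disjoint d2]
  have n3 : ((A ∪ B ∪ C) ∩ D).card = (A∩D).card + (B∩D).card + (C∩D).card := by
    rw [union_inter_distrib_right, union_inter_distrib_right,
        card_union_of_disjoint d3b, card_union_of_disjoint d3a]
  omega

lemma Cfg.degA (h : Cfg P L r A B C D) :
    (A∩B).card + (A∩C).card + (A∩D).card ≤ r := by
  have := degG (disj_of_pack h.pABC) (disj_of_pack2 h.pABD h.pACD)
  rwa [h.ucard A h.hA] at this

lemma Cfg.s_le_2r (h : Cfg P L r A B C D) :
    (A∩B).card + (A∩C).card + (A∩D).card + (B∩C).card + (B∩D).card + (C∩D).card ≤ 2 * r := by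
  have dA := h.degA
  have dB := h.swapAB.degA
  have dC := (h.swapBC.swapAB).degA
  have dD := ((h.swapCD.swapBC).swapAB).degA
  rw [inter_comm B A] at dB
  rw [inter_comm C A, inter_comm C B] at dC
  rw [inter_comm D A, inter_comm D B, inter_comm D C] at dD
  omega

lemma Cfg.count (h : Cfg P L r A B C D) (E : Finset α) (W : Finset (Finset α))
    (hE : ∀ p ∈ E, p ∈ P) (hEU : ∀ p ∈ E, p ∉ A ∪ B ∪ C ∪ D)
    (hW : ∀ w ∈ W, w ∈ L) (hWA : A ∉ W) (hWB : B ∉ W) (hWC : C ∉ W) (hWD : D ∉ W) :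
    4 * r + E.card + 4 + W.card ≤ P.card + L.card +
      ((A∩B).card + (A∩C).card + (A∩D).card + (B∩C).card + (B∩D).card + (C∩D).card) := by
  have hP : (A ∪ B ∪ C ∪ D) ∪ E ⊆ P := by
    intro p hp
    simp only [mem_union] at hp
    rcases hp with (((hp|hp)|hp)|hp)|hp
    · exact h.subP A h.hA hp
    · exact h.subP B h.hB hp
    · exact h.subP C h.hC hp
    · exact h.subP D h.hD hp
    · exact hE p hp
  have hdisj : Disjoint (A ∪ B ∪ C ∪ D) E := by
    rw [disjoint_right]; intro p hp hq; exact hEU p hp hq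
  have hPc : (A ∪ B ∪ C ∪ D).card + E.card ≤ P.card := by
    rw [← card_union_of_disjoint hdisj]; exact card_le_card hP
  have hLs : insert A (insert B (insert C (insert D W))) ⊆ L := by
    intro l hl
    simp only [mem_insert] at hl
    rcases hl with rfl|rfl|rfl|rfl|hl
    exacts [h.hA, h.hB, h.hC, h.hD, hW l hl]
  have hc4 : (insert A (insert B (insert C (insert D W)))).card = W.card + 1 + 1 + 1 + 1 := by
    rw [card_insert_of_notMem (by simp [h.nAB, h.nAC, h.nAD, hWA]),
        card_insert_of_notMem (by simp [h.nBC, h.nBD, hWB]),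
        card_insert_of_notMem (by simp [h.nCD, hWC]),
        card_insert_of_notMem hWD]
  have hLc := card_le_card hLs
  have hur := h.ur_card
  omega

lemma Cfg.finish (h : Cfg P L r A B C D) (k : ℕ) (X E : Finset α) (W : Finset (Finset α))
    (hXP : ∀ p ∈ X, p ∈ P) (hcov : ∀ l ∈ L, ∃ p ∈ X, p ∈ l) (hXk : X.card ≤ k)
    (hE : ∀ p ∈ E, p ∈ P) (hEU : ∀ p ∈ E, p ∉ A ∪ B ∪ C ∪ D)
    (hW : ∀ w ∈ W, w ∈ L) (hWA : A ∉ W) (hWB : B ∉ W) (hWC : C ∉ W) (hWD : D ∉ W)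
    (har : (r+1) * k + ((A∩B).card + (A∩C).card + (A∩D).card + (B∩C).card +
      (B∩D).card + (C∩D).card) ≤ 4 * r + E.card + 4 + W.card) :
    (r+1) * tau P L ≤ P.card + L.card := by
  have h1 : tau P L ≤ X.card := tau_le_of_cover P L X hXP hcov
  have h2 : (r+1) * tau P L ≤ (r+1) * k :=
    Nat.mul_le_mul_left _ (le_trans h1 hXk)
  have h3 := h.count E W hE hEU hW hWA hWB hWC hWD
  omega



/-! ### outside line existence and the 3-cover counting package -/

lemma Cfg.outside_exists (h : Cfg P L r A B C D) : ∃ w, Outl L A B C D w := by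
  have hsub : ¬ (L ⊆ ({A,B,C,D} : Finset (Finset α))) := by
    intro hsub'
    have h1 := card_le_card hsub'
    have h2 := card_le_four A B C D
    have := h.hm
    omega
  obtain ⟨l, hl, hnot⟩ := not_subset.mp hsub
  simp only [mem_insert, mem_singleton, not_or] at hnot
  exact ⟨l, hl, hnot.1, hnot.2.1, hnot.2.2.1, hnot.2.2.2⟩

/-- if x has an AB-double and the other two lines are full of doubles, then x meets the
four packing lines in at most 2 points -/
lemma Cfg.inter2_of_dblAB (h : Cfg P L r A B C D) {x : Finset α}
    (hx : Outl L A B C D x) (hc : com A B x)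
    (hC3 : C.card ≤ (C∩A).card + (C∩B).card + (C∩D).card)
    (hD3 : D.card ≤ (D∩A).card + (D∩B).card + (D∩C).card) :
    (x ∩ (A ∪ B ∪ C ∪ D)).card ≤ 2 := by
  obtain ⟨hxL, nxA, nxB, nxC, nxD⟩ := hx
  have hAB2 : (x ∩ (A ∪ B)).card ≤ 1 := h.dblp h.hA h.hB hxL nxA nxB hc
  by_cases hcd : com C D x
  · have hCD2 : (x ∩ (C ∪ D)).card ≤ 1 := h.dblp h.hC h.hD hxL nxC nxD hcd
    have := split22 x A B C D
    omega
  · have hC0 : x ∩ C = ∅ := by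
      apply h.avoidG (disj_of_pack (fun p hc' ha hb => h.pABC p ha hb hc'))
        (disj_of_pack2 (fun p hc' ha hd => h.pACD p ha hc' hd)
          (fun p hc' hb hd => h.pBCD p hb hc' hd)) hC3
      · intro hca
        exact h.trik h.hA hxL nxA.symm h.pABC hc (com_swap hca)
      · intro hcb
        exact h.trik h.hB hxL nxB.symm (fun p hb ha hc' => h.pABC p ha hb hc')
          (com_swap hc) (com_swap hcb)
      · exact hcd
    have hD0 : x ∩ D = ∅ := by
      apply h.avoidG (disj_of_pack (fun p hd ha hb => h.pABD p ha hb hd))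
        (disj_of_pack2 (fun p hd ha hc' => h.pACD p ha hc' hd)
          (fun p hd hb hc' => h.pBCD p hb hc' hd)) hD3
      · intro hda
        exact h.trik h.hA hxL nxA.symm h.pABD hc (com_swap hda)
      · intro hdb
        exact h.trik h.hB hxL nxB.symm (fun p hb ha hd => h.pABD p ha hb hd)
          (com_swap hc) (com_swap hdb)
      · intro hdc
        exact hcd (com_swap hdc)
    have := split4 x A B C D
    rw [hC0, hD0] at this
    simp only [card_empty] at this
    omega

set_option maxHeartbeats 2000000 in
lemma Cfg.count3pack (h : Cfg P L r A B C D) :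
    ∃ (E : Finset α) (W : Finset (Finset α)),
      (∀ p ∈ E, p ∈ P) ∧ (∀ p ∈ E, p ∉ A ∪ B ∪ C ∪ D) ∧
      (∀ w ∈ W, w ∈ L) ∧ A ∉ W ∧ B ∉ W ∧ C ∉ W ∧ D ∉ W ∧
      (r+1) * 3 + ((A∩B).card + (A∩C).card + (A∩D).card + (B∩C).card + (B∩D).card +
        (C∩D).card) ≤ 4 * r + E.card + 4 + W.card := by
  obtain ⟨w₀, hw₀⟩ := h.outside_exists
  have hWmem : ∀ w ∈ ({w₀} : Finset (Finset α)), w ∈ L := by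
    intro w hw; rw [mem_singleton] at hw; subst hw; exact hw₀.1
  have hWA : A ∉ ({w₀} : Finset (Finset α)) := by
    simp only [mem_singleton]; exact fun h' => hw₀.2.1 h'.symm
  have hWB : B ∉ ({w₀} : Finset (Finset α)) := by
    simp only [mem_singleton]; exact fun h' => hw₀.2.2.1 h'.symm
  have hWC : C ∉ ({w₀} : Finset (Finset α)) := by
    simp only [mem_singleton]; exact fun h' => hw₀.2.2.2.1 h'.symm
  have hWD : D ∉ ({w₀} : Finset (Finset α)) := by
    simp only [mem_singleton]; exact fun h' => hw₀.2.2.2.2 h'.symm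
  have hcW : ({w₀} : Finset (Finset α)).card = 1 := card_singleton w₀
  by_cases hcase : (A∩B).card + (A∩C).card + (A∩D).card + (B∩C).card + (B∩D).card +
      (C∩D).card ≤ r + 2
  · exact ⟨∅, {w₀}, by simp, by simp, hWmem, hWA, hWB, hWC, hWD, by
      simp only [card_empty]; omega⟩
  · -- forced r = 3 and all six intersections present
    have hs2r := h.s_le_2r
    have e1 := h.line_inter_le h.hA h.hB h.nAB
    have e2 := h.line_inter_le h.hA h.hC h.nAC
    have e3 := h.line_inter_le h.hA h.hD h.nAD
    have e4 := h.line_inter_le h.hB h.hC h.nBC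
    have e5 := h.line_inter_le h.hB h.hD h.nBD
    have e6 := h.line_inter_le h.hC h.hD h.nCD
    have hr3 : r = 3 := by omega
    have eAB : (A∩B).card = 1 := by omega
    have eAC : (A∩C).card = 1 := by omega
    have eAD : (A∩D).card = 1 := by omega
    have eBC : (B∩C).card = 1 := by omega
    have eBD : (B∩D).card = 1 := by omega
    have eCD : (C∩D).card = 1 := by omega
    -- every outside line meets the packing in at most 2 points
    have hfresh : (w₀ ∩ (A ∪ B ∪ C ∪ D)).card ≤ 2 := by
      have degfact : ∀ X Y Z V : Finset α, X ∈ L → X.card = r →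
          (X∩Y).card = 1 → (X∩Z).card = 1 → (X∩V).card = 1 →
          X.card ≤ (X∩Y).card + (X∩Z).card + (X∩V).card := by
        intro X Y Z V _ hXr hY hZ hV
        rw [hY, hZ, hV, hXr]; omega
      have eBA : (B∩A).card = 1 := by rw [inter_comm]; exact eAB
      have eCA : (C∩A).card = 1 := by rw [inter_comm]; exact eAC
      have eDA : (D∩A).card = 1 := by rw [inter_comm]; exact eAD
      have eCB : (C∩B).card = 1 := by rw [inter_comm]; exact eBC
      have eDB : (D∩B).card = 1 := by rw [inter_comm]; exact eBD
      have eDC : (D∩C).card = 1 := by rw [inter_comm]; exact eCD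
      have hCfull := degfact C A B D h.hC (h.ucard C h.hC) eCA eCB eCD
      have hDfull := degfact D A B C h.hD (h.ucard D h.hD) eDA eDB eDC
      have hAfull := degfact A C D B h.hA (h.ucard A h.hA) eAC eAD eAB
      have hBfull := degfact B C D A h.hB (h.ucard B h.hB) eBC eBD eBA
      obtain ⟨hxL, nxA, nxB, nxC, nxD⟩ := hw₀
      rcases h.mne ⟨hxL, nxA, nxB, nxC, nxD⟩ with hc|hc|hc|hc|hc|hc
      · exact h.inter2_of_dblAB ⟨hxL, nxA, nxB, nxC, nxD⟩ hc hCfull hDfull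
      · have := (((h.swapBC.swapAB).swapCD).swapBC).inter2_of_dblAB
          (x := w₀) ⟨hxL, nxC, nxD, nxA, nxB⟩ hc
          (degfact A C D B h.hA (h.ucard A h.hA) eAC eAD eAB)
          (degfact B C D A h.hB (h.ucard B h.hB) eBC eBD eBA)
        have hUeq : C ∪ D ∪ A ∪ B = A ∪ B ∪ C ∪ D := by
          ext p; simp only [mem_union]; tauto
        rwa [hUeq] at this
      · have := h.swapBC.inter2_of_dblAB (x := w₀) ⟨hxL, nxA, nxC, nxB, nxD⟩ hc
          (degfact B A C D h.hB (h.ucard B h.hB) eBA eBC eBD)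
          (degfact D A C B h.hD (h.ucard D h.hD) eDA eDC eDB)
        have hUeq : A ∪ C ∪ B ∪ D = A ∪ B ∪ C ∪ D := by
          ext p; simp only [mem_union]; tauto
        rwa [hUeq] at this
      · have := ((h.swapAB.swapCD).swapBC).inter2_of_dblAB
          (x := w₀) ⟨hxL, nxB, nxD, nxA, nxC⟩ hc
          (degfact A B D C h.hA (h.ucard A h.hA) eAB eAD eAC)
          (degfact C B D A h.hC (h.ucard C h.hC) eCB eCD eCA)
        have hUeq : B ∪ D ∪ A ∪ C = A ∪ B ∪ C ∪ D := by
          ext p; simp only [mem_union]; tauto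
        rwa [hUeq] at this
      · have := ((h.swapBC.swapCD).swapBC).inter2_of_dblAB
          (x := w₀) ⟨hxL, nxA, nxD, nxC, nxB⟩ hc
          (degfact C A D B h.hC (h.ucard C h.hC) eCA eCD eCB)
          (degfact B A D C h.hB (h.ucard B h.hB) eBA eBD eBC)
        have hUeq : A ∪ D ∪ C ∪ B = A ∪ B ∪ C ∪ D := by
          ext p; simp only [mem_union]; tauto
        rwa [hUeq] at this
      · have := (h.swapAB.swapBC).inter2_of_dblAB
          (x := w₀) ⟨hxL, nxB, nxC, nxA, nxD⟩ hc
          (degfact A B C D h.hA (h.ucard A h.hA) eAB eAC eAD)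
          (degfact D B C A h.hD (h.ucard D h.hD) eDB eDC eDA)
        have hUeq : B ∪ C ∪ A ∪ D = A ∪ B ∪ C ∪ D := by
          ext p; simp only [mem_union]; tauto
        rwa [hUeq] at this
    have hfr := freshc (t := A ∪ B ∪ C ∪ D) (h.ucard w₀ hw₀.1)
    refine ⟨w₀ \ (A ∪ B ∪ C ∪ D), {w₀}, ?_, ?_, hWmem, hWA, hWB, hWC, hWD, ?_⟩
    · intro p hp
      exact h.subP w₀ hw₀.1 (mem_sdiff.mp hp).1
    · intro p hp
      exact (mem_sdiff.mp hp).2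
    · omega


/-! ### permutation abbreviations -/

def Cfg.pBADC (h : Cfg P L r A B C D) : Cfg P L r B A D C := h.swapAB.swapCD
def Cfg.pCDAB (h : Cfg P L r A B C D) : Cfg P L r C D A B :=
  (((h.swapBC).swapAB).swapCD).swapBC
def Cfg.pDCBA (h : Cfg P L r A B C D) : Cfg P L r D C B A := (h.pCDAB.swapAB).swapCD
def Cfg.pABDC (h : Cfg P L r A B C D) : Cfg P L r A B D C := h.swapCD
def Cfg.pADCB (h : Cfg P L r A B C D) : Cfg P L r A D C B := (h.swapBC.swapCD).swapBC
def Cfg.pBACD (h : Cfg P L r A B C D) : Cfg P L r B A C D := h.swapAB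
def Cfg.pBCDA (h : Cfg P L r A B C D) : Cfg P L r B C D A := (h.swapAB.swapBC).swapCD
def Cfg.pADBC (h : Cfg P L r A B C D) : Cfg P L r A D B C :=
  ((h.swapBC.swapCD).swapBC).swapCD
def Cfg.pBCAD (h : Cfg P L r A B C D) : Cfg P L r B C A D := h.swapAB.swapBC
def Cfg.pBDAC (h : Cfg P L r A B C D) : Cfg P L r B D A C := (h.swapAB.swapCD).swapBC
def Cfg.pCABD (h : Cfg P L r A B C D) : Cfg P L r C A B D := h.swapBC.swapAB
def Cfg.pDCAB (h : Cfg P L r A B C D) : Cfg P L r D C A B := h.pCDAB.swapAB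
def Cfg.pDBAC (h : Cfg P L r A B C D) : Cfg P L r D B A C := h.pBDAC.swapAB
def Cfg.pCDBA (h : Cfg P L r A B C D) : Cfg P L r C D B A := h.pCDAB.swapCD
def Cfg.pBDCA (h : Cfg P L r A B C D) : Cfg P L r B D C A := h.pBDAC.swapCD
def Cfg.pACDB (h : Cfg P L r A B C D) : Cfg P L r A C D B := h.swapBC.swapCD

/-! ### avoidance and splitting helpers -/

/-- a CD-single avoids line A provided A consists entirely of double points -/
lemma Cfg.avoid_far (h : Cfg P L r A B C D) {x : Finset α} (hx : Outl L A B C D x)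
    (hxCD : com C D x) (hxnAB : ¬ com A B x)
    (hAfull : A.card ≤ (A∩B).card + (A∩C).card + (A∩D).card) : x ∩ A = ∅ := by
  obtain ⟨hxL, nxA, nxB, nxC, nxD⟩ := hx
  apply h.avoidG (disj_of_pack h.pABC) (disj_of_pack2 h.pABD h.pACD) hAfull hxnAB
  · intro hac
    exact h.trik h.hC hxL nxC.symm (fun p hc' hd ha => h.pACD p ha hc' hd)
      hxCD (com_swap hac)
  · intro had
    exact h.trik h.hD hxL nxD.symm (fun p hd hc' ha => h.pACD p ha hc' hd)
      (com_swap hxCD) (com_swap had)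

lemma split_parts {x U S1 S2 S3 : Finset α}
    (hU : ∀ p, p ∈ U → p ∈ S1 ∨ p ∈ S2 ∨ p ∈ S3) :
    (x ∩ U).card ≤ (x∩S1).card + (x∩S2).card + (x∩S3).card := by
  have hsub : x ∩ U ⊆ (x ∩ S1) ∪ (x ∩ S2) ∪ (x ∩ S3) := by
    intro p hp
    rw [mem_inter] at hp
    rcases hU p hp.2 with h'|h'|h' <;> simp [mem_union, mem_inter, hp.1, h']
  have h1 := card_le_card hsub
  have h2 := card_union_le ((x ∩ S1) ∪ (x ∩ S2)) (x ∩ S3)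
  have h3 := card_union_le (x ∩ S1) (x ∩ S2)
  omega

/-! ### counting lemmas for 4-point covers -/

set_option maxHeartbeats 2000000 in
lemma Cfg.count22 (h : Cfg P L r A B C D) {a b c : Finset α}
    (ha : Outl L A B C D a) (haAB : com A B a) (hanCD : ¬ com C D a)
    (hb : Outl L A B C D b) (hbCD : com C D b) (hbnAB : ¬ com A B b)
    (hc : Outl L A B C D c) (hcAC : com A C c) (hcnBD : ¬ com B D c) :
    ∃ E : Finset α, (∀ p ∈ E, p ∈ P) ∧ (∀ p ∈ E, p ∉ A ∪ B ∪ C ∪ D) ∧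
      (A∩B).card + (A∩C).card + (A∩D).card + (B∩C).card + (B∩D).card + (C∩D).card
        ≤ E.card + 4 := by
  have e1 := h.line_inter_le h.hA h.hB h.nAB
  have e2 := h.line_inter_le h.hA h.hC h.nAC
  have e3 := h.line_inter_le h.hA h.hD h.nAD
  have e4 := h.line_inter_le h.hB h.hC h.nBC
  have e5 := h.line_inter_le h.hB h.hD h.nBD
  have e6 := h.line_inter_le h.hC h.hD h.nCD
  obtain ⟨pab, pabA, pabB, paba⟩ := id haAB
  obtain ⟨pcd, pcdC, pcdD, pcdb⟩ := id hbCD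
  obtain ⟨pac, pacA, pacC, pacc⟩ := id hcAC
  have cAB1 : 1 ≤ (A∩B).card := card_pos.mpr ⟨pab, mem_inter.mpr ⟨pabA, pabB⟩⟩
  have cCD1 : 1 ≤ (C∩D).card := card_pos.mpr ⟨pcd, mem_inter.mpr ⟨pcdC, pcdD⟩⟩
  have cAC1 : 1 ≤ (A∩C).card := card_pos.mpr ⟨pac, mem_inter.mpr ⟨pacA, pacC⟩⟩
  by_cases ht : (A∩D).card + (B∩C).card + (B∩D).card ≤ 1
  · exact ⟨∅, by simp, by simp, by simp; omega⟩
  · -- at least two extra intersections exist; hence r ≥ 3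
    have hs2r := h.s_le_2r
    by_cases hr4 : 4 ≤ r
    · -- use fresh points of a and c, separated by their forced meeting on D
      obtain ⟨wD, wDa, wDc, wDD⟩ := h.wlem ha hc haAB hanCD hcAC hcnBD
      have hax : a ≠ c := by
        rintro rfl
        exact h.trik h.hA ha.1 ha.2.1.symm h.pABC haAB hcAC
      have hsep := h.sep (U := A ∪ B ∪ C ∪ D) ha.1 hc.1 hax wDa wDc
        (by simp [mem_union, wDD])
      have hfa : (a ∩ (A ∪ B ∪ C ∪ D)).card ≤ 3 := by
        have hsp := split_parts (x := a) (U := A ∪ B ∪ C ∪ D) (S1 := A ∪ B)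
          (S2 := C) (S3 := D) (by intro p hp; simp only [mem_union] at hp ⊢; tauto)
        have h1 := h.dblp h.hA h.hB ha.1 ha.2.1 ha.2.2.1 haAB
        have h2 := h.line_inter_le ha.1 h.hC ha.2.2.2.1
        have h3 := h.line_inter_le ha.1 h.hD ha.2.2.2.2
        omega
      have hfc : (c ∩ (A ∪ B ∪ C ∪ D)).card ≤ 3 := by
        have hsp := split_parts (x := c) (U := A ∪ B ∪ C ∪ D) (S1 := A ∪ C)
          (S2 := B) (S3 := D) (by intro p hp; simp only [mem_union] at hp ⊢; tauto)
        have h1 := h.dblp h.hA h.hC hc.1 hc.2.1 hc.2.2.2.1 hcAC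
        have h2 := h.line_inter_le hc.1 h.hB hc.2.2.1
        have h3 := h.line_inter_le hc.1 h.hD hc.2.2.2.2
        omega
      have hfra := freshc (t := A ∪ B ∪ C ∪ D) (h.ucard a ha.1)
      have hfrc := freshc (t := A ∪ B ∪ C ∪ D) (h.ucard c hc.1)
      refine ⟨(a \ (A ∪ B ∪ C ∪ D)) ∪ (c \ (A ∪ B ∪ C ∪ D)), ?_, ?_, ?_⟩
      · intro p hp
        rcases mem_union.mp hp with hp'|hp'
        · exact h.subP a ha.1 (mem_sdiff.mp hp').1
        · exact h.subP c hc.1 (mem_sdiff.mp hp').1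
      · intro p hp
        rcases mem_union.mp hp with hp'|hp' <;> exact (mem_sdiff.mp hp').2
      · rw [card_union_of_disjoint hsep]
        omega
    · -- r = 3 : use fresh points of b
      have hr3 : r = 3 := by omega
      have hbB : (b ∩ B).card ≤ 1 := h.line_inter_le hb.1 h.hB hb.2.2.1
      have hbA : (b ∩ A).card ≤ 1 := h.line_inter_le hb.1 h.hA hb.2.1
      have hbCDp : (b ∩ (C ∪ D)).card ≤ 1 :=
        h.dblp h.hC h.hD hb.1 hb.2.2.2.1 hb.2.2.2.2 hbCD
      have hA0 : (A∩D).card = 1 → (b ∩ A).card = 0 := by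
        intro hAD
        have hz : b ∩ A = ∅ := h.avoid_far hb hbCD hbnAB
          (by rw [h.ucard A h.hA]; omega)
        rw [hz, card_empty]
      have hB0 : (B∩C).card = 1 → (B∩D).card = 1 → (b ∩ B).card = 0 := by
        intro hBC hBD
        have hz : b ∩ B = ∅ :=
          (h.swapAB).avoid_far (x := b)
            ⟨hb.1, hb.2.2.1, hb.2.1, hb.2.2.2.1, hb.2.2.2.2⟩
            hbCD (fun h' => hbnAB (com_swap h'))
            (by rw [h.ucard B h.hB, inter_comm B A]; omega)
        rw [hz, card_empty]
      have hsp := split_parts (x := b) (U := A ∪ B ∪ C ∪ D) (S1 := A)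
        (S2 := B) (S3 := C ∪ D) (by intro p hp; simp only [mem_union] at hp ⊢; tauto)
      have hfrb := freshc (t := A ∪ B ∪ C ∪ D) (h.ucard b hb.1)
      refine ⟨b \ (A ∪ B ∪ C ∪ D), ?_, ?_, ?_⟩
      · intro p hp; exact h.subP b hb.1 (mem_sdiff.mp hp).1
      · intro p hp; exact (mem_sdiff.mp hp).2
      · by_cases hAD : (A∩D).card = 1
        · by_cases hBC : (B∩C).card = 1
          · by_cases hBD : (B∩D).card = 1
            · have := hA0 hAD; have := hB0 hBC hBD; omega
            · have := hA0 hAD; omega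
          · have := hA0 hAD; omega
        · by_cases hBC : (B∩C).card = 1
          · by_cases hBD : (B∩D).card = 1
            · have := hB0 hBC hBD; omega
            · omega
          · omega

set_option maxHeartbeats 2000000 in
lemma Cfg.count22full (h : Cfg P L r A B C D) {a b c : Finset α}
    (ha : Outl L A B C D a) (haAB : com A B a) (hanCD : ¬ com C D a)
    (hb : Outl L A B C D b) (hbCD : com C D b) (hbnAB : ¬ com A B b)
    (hc : Outl L A B C D c) (hcAC : com A C c) (hcBD : com B D c) :
    ∃ E : Finset α, (∀ p ∈ E, p ∈ P) ∧ (∀ p ∈ E, p ∉ A ∪ B ∪ C ∪ D) ∧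
      (A∩B).card + (A∩C).card + (A∩D).card + (B∩C).card + (B∩D).card + (C∩D).card
        ≤ E.card + 4 := by
  have e1 := h.line_inter_le h.hA h.hB h.nAB
  have e2 := h.line_inter_le h.hA h.hC h.nAC
  have e3 := h.line_inter_le h.hA h.hD h.nAD
  have e4 := h.line_inter_le h.hB h.hC h.nBC
  have e5 := h.line_inter_le h.hB h.hD h.nBD
  have e6 := h.line_inter_le h.hC h.hD h.nCD
  obtain ⟨pab, pabA, pabB, paba⟩ := id haAB
  obtain ⟨pcd, pcdC, pcdD, pcdb⟩ := id hbCD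
  obtain ⟨pac, pacA, pacC, pacc⟩ := id hcAC
  obtain ⟨pbd, pbdB, pbdD, pbdc⟩ := id hcBD
  have cAB1 : 1 ≤ (A∩B).card := card_pos.mpr ⟨pab, mem_inter.mpr ⟨pabA, pabB⟩⟩
  have cCD1 : 1 ≤ (C∩D).card := card_pos.mpr ⟨pcd, mem_inter.mpr ⟨pcdC, pcdD⟩⟩
  have cAC1 : 1 ≤ (A∩C).card := card_pos.mpr ⟨pac, mem_inter.mpr ⟨pacA, pacC⟩⟩
  have cBD1 : 1 ≤ (B∩D).card := card_pos.mpr ⟨pbd, mem_inter.mpr ⟨pbdB, pbdD⟩⟩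
  by_cases ht : (A∩D).card + (B∩C).card ≤ 0
  · exact ⟨∅, by simp, by simp, by simp; omega⟩
  · have hs2r := h.s_le_2r
    by_cases hr4 : 4 ≤ r
    · -- use fresh points of the full line c
      have hfc : (c ∩ (A ∪ B ∪ C ∪ D)).card ≤ 2 := by
        have hsp := split22 c A C B D
        have hUeq : A ∪ C ∪ B ∪ D = A ∪ B ∪ C ∪ D := by
          ext p; simp only [mem_union]; tauto
        rw [hUeq] at hsp
        have h1 := h.dblp h.hA h.hC hc.1 hc.2.1 hc.2.2.2.1 hcAC
        have h2 := h.dblp h.hB h.hD hc.1 hc.2.2.1 hc.2.2.2.2 hcBD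
        omega
      have hfrc := freshc (t := A ∪ B ∪ C ∪ D) (h.ucard c hc.1)
      refine ⟨c \ (A ∪ B ∪ C ∪ D), ?_, ?_, ?_⟩
      · intro p hp; exact h.subP c hc.1 (mem_sdiff.mp hp).1
      · intro p hp; exact (mem_sdiff.mp hp).2
      · omega
    · -- r = 3 : use fresh points of b
      have hr3 : r = 3 := by omega
      have hbB : (b ∩ B).card ≤ 1 := h.line_inter_le hb.1 h.hB hb.2.2.1
      have hbA : (b ∩ A).card ≤ 1 := h.line_inter_le hb.1 h.hA hb.2.1
      have hbCDp : (b ∩ (C ∪ D)).card ≤ 1 :=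
        h.dblp h.hC h.hD hb.1 hb.2.2.2.1 hb.2.2.2.2 hbCD
      have hA0 : (A∩D).card = 1 → (b ∩ A).card = 0 := by
        intro hAD
        have hz : b ∩ A = ∅ := h.avoid_far hb hbCD hbnAB
          (by rw [h.ucard A h.hA]; omega)
        rw [hz, card_empty]
      have hB0 : (B∩C).card = 1 → (b ∩ B).card = 0 := by
        intro hBC
        have hz : b ∩ B = ∅ :=
          (h.swapAB).avoid_far (x := b)
            ⟨hb.1, hb.2.2.1, hb.2.1, hb.2.2.2.1, hb.2.2.2.2⟩
            hbCD (fun h' => hbnAB (com_swap h'))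
            (by rw [h.ucard B h.hB, inter_comm B A]; omega)
        rw [hz, card_empty]
      have hsp := split_parts (x := b) (U := A ∪ B ∪ C ∪ D) (S1 := A)
        (S2 := B) (S3 := C ∪ D) (by intro p hp; simp only [mem_union] at hp ⊢; tauto)
      have hfrb := freshc (t := A ∪ B ∪ C ∪ D) (h.ucard b hb.1)
      refine ⟨b \ (A ∪ B ∪ C ∪ D), ?_, ?_, ?_⟩
      · intro p hp; exact h.subP b hb.1 (mem_sdiff.mp hp).1
      · intro p hp; exact (mem_sdiff.mp hp).2
      · by_cases hAD : (A∩D).card = 1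
        · by_cases hBC : (B∩C).card = 1
          · have := hA0 hAD; have := hB0 hBC; omega
          · have := hA0 hAD; omega
        · by_cases hBC : (B∩C).card = 1
          · have := hB0 hBC; omega
          · omega

set_option maxHeartbeats 2000000 in
lemma Cfg.countTRI (h : Cfg P L r A B C D) {x1 x2 x3 : Finset α}
    (h1 : Outl L A B C D x1) (h1AB : com A B x1) (h1nCD : ¬ com C D x1)
    (h2 : Outl L A B C D x2) (h2AC : com A C x2) (h2nBD : ¬ com B D x2)
    (h3 : Outl L A B C D x3) (h3BC : com B C x3) (h3nAD : ¬ com A D x3) :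
    ∃ E : Finset α, (∀ p ∈ E, p ∈ P) ∧ (∀ p ∈ E, p ∉ A ∪ B ∪ C ∪ D) ∧
      (A∩B).card + (A∩C).card + (A∩D).card + (B∩C).card + (B∩D).card + (C∩D).card
        ≤ E.card + 3 := by
  have e1 := h.line_inter_le h.hA h.hB h.nAB
  have e2 := h.line_inter_le h.hA h.hC h.nAC
  have e3 := h.line_inter_le h.hA h.hD h.nAD
  have e4 := h.line_inter_le h.hB h.hC h.nBC
  have e5 := h.line_inter_le h.hB h.hD h.nBD
  have e6 := h.line_inter_le h.hC h.hD h.nCD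
  obtain ⟨pab, pabA, pabB, pab1⟩ := id h1AB
  obtain ⟨pac, pacA, pacC, pac2⟩ := id h2AC
  obtain ⟨pbc, pbcB, pbcC, pbc3⟩ := id h3BC
  have cAB1 : 1 ≤ (A∩B).card := card_pos.mpr ⟨pab, mem_inter.mpr ⟨pabA, pabB⟩⟩
  have cAC1 : 1 ≤ (A∩C).card := card_pos.mpr ⟨pac, mem_inter.mpr ⟨pacA, pacC⟩⟩
  have cBC1 : 1 ≤ (B∩C).card := card_pos.mpr ⟨pbc, mem_inter.mpr ⟨pbcB, pbcC⟩⟩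
  -- the three forced meetings on D
  obtain ⟨w12, w12a, w12b, w12D⟩ := h.wlem h1 h2 h1AB h1nCD h2AC h2nBD
  obtain ⟨w13, w13a, w13b, w13D⟩ := (h.pBACD).wlem (x := x1) (y := x3)
    ⟨h1.1, h1.2.2.1, h1.2.1, h1.2.2.2.1, h1.2.2.2.2⟩
    ⟨h3.1, h3.2.2.1, h3.2.1, h3.2.2.2.1, h3.2.2.2.2⟩
    (com_swap h1AB) h1nCD h3BC h3nAD
  obtain ⟨w23, w23a, w23b, w23D⟩ := (h.pCABD).wlem (x := x2) (y := x3)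
    ⟨h2.1, h2.2.2.2.1, h2.2.1, h2.2.2.1, h2.2.2.2.2⟩
    ⟨h3.1, h3.2.2.2.1, h3.2.1, h3.2.2.1, h3.2.2.2.2⟩
    (com_swap h2AC) h2nBD (com_swap h3BC) h3nAD
  have n12 : x1 ≠ x2 := by
    rintro rfl; exact h.trik h.hA h1.1 h1.2.1.symm h.pABC h1AB h2AC
  have n13 : x1 ≠ x3 := by
    rintro rfl
    exact h.trik h.hB h1.1 h1.2.2.1.symm (fun p hb' ha' hc' => h.pABC p ha' hb' hc')
      (com_swap h1AB) h3BC
  have n23 : x2 ≠ x3 := by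
    rintro rfl
    exact h.trik h.hC h2.1 h2.2.2.2.1.symm (fun p hc' ha' hb' => h.pABC p ha' hb' hc')
      (com_swap h2AC) (com_swap h3BC)
  have hwU12 : w12 ∈ A ∪ B ∪ C ∪ D := by simp [mem_union, w12D]
  have hwU13 : w13 ∈ A ∪ B ∪ C ∪ D := by simp [mem_union, w13D]
  have hwU23 : w23 ∈ A ∪ B ∪ C ∪ D := by simp [mem_union, w23D]
  have sep12 := h.sep (U := A ∪ B ∪ C ∪ D) h1.1 h2.1 n12 w12a w12b hwU12
  have sep13 := h.sep (U := A ∪ B ∪ C ∪ D) h1.1 h3.1 n13 w13a w13b hwU13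
  have sep23 := h.sep (U := A ∪ B ∪ C ∪ D) h2.1 h3.1 n23 w23a w23b hwU23
  have hfr1 := freshc (t := A ∪ B ∪ C ∪ D) (h.ucard x1 h1.1)
  have hfr2 := freshc (t := A ∪ B ∪ C ∪ D) (h.ucard x2 h2.1)
  have hfr3 := freshc (t := A ∪ B ∪ C ∪ D) (h.ucard x3 h3.1)
  have bnd1 : (x1 ∩ (A ∪ B ∪ C ∪ D)).card ≤
      1 + (x1 ∩ C).card + (x1 ∩ D).card := by
    have hsp := split_parts (x := x1) (U := A ∪ B ∪ C ∪ D) (S1 := A ∪ B)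
      (S2 := C) (S3 := D) (by intro p hp; simp only [mem_union] at hp ⊢; tauto)
    have hd := h.dblp h.hA h.hB h1.1 h1.2.1 h1.2.2.1 h1AB
    omega
  have bnd2 : (x2 ∩ (A ∪ B ∪ C ∪ D)).card ≤
      1 + (x2 ∩ B).card + (x2 ∩ D).card := by
    have hsp := split_parts (x := x2) (U := A ∪ B ∪ C ∪ D) (S1 := A ∪ C)
      (S2 := B) (S3 := D) (by intro p hp; simp only [mem_union] at hp ⊢; tauto)
    have hd := h.dblp h.hA h.hC h2.1 h2.2.1 h2.2.2.2.1 h2AC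
    omega
  have bnd3 : (x3 ∩ (A ∪ B ∪ C ∪ D)).card ≤
      1 + (x3 ∩ A).card + (x3 ∩ D).card := by
    have hsp := split_parts (x := x3) (U := A ∪ B ∪ C ∪ D) (S1 := B ∪ C)
      (S2 := A) (S3 := D) (by intro p hp; simp only [mem_union] at hp ⊢; tauto)
    have hd := h.dblp h.hB h.hC h3.1 h3.2.2.1 h3.2.2.2.1 h3BC
    omega
  have i1C := h.line_inter_le h1.1 h.hC h1.2.2.2.1
  have i1D := h.line_inter_le h1.1 h.hD h1.2.2.2.2
  have i2B := h.line_inter_le h2.1 h.hB h2.2.2.1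
  have i2D := h.line_inter_le h2.1 h.hD h2.2.2.2.2
  have i3A := h.line_inter_le h3.1 h.hA h3.2.1
  have i3D := h.line_inter_le h3.1 h.hD h3.2.2.2.2
  by_cases ht : (A∩D).card + (B∩D).card + (C∩D).card ≤ 0
  · exact ⟨∅, by simp, by simp, by simp; omega⟩
  have hs2r := h.s_le_2r
  have dA := h.degA
  have dB := h.swapAB.degA
  have dC := (h.swapBC.swapAB).degA
  have dD := ((h.swapCD.swapBC).swapAB).degA
  rw [inter_comm B A] at dB
  rw [inter_comm C A, inter_comm C B] at dC
  rw [inter_comm D A, inter_comm D B, inter_comm D C] at dD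
  by_cases hr4 : 4 ≤ r
  · -- three separated fresh sets
    refine ⟨(x1 \ (A ∪ B ∪ C ∪ D)) ∪ (x2 \ (A ∪ B ∪ C ∪ D)) ∪ (x3 \ (A ∪ B ∪ C ∪ D)),
      ?_, ?_, ?_⟩
    · intro p hp
      rcases mem_union.mp hp with hp'|hp'
      · rcases mem_union.mp hp' with hp''|hp''
        · exact h.subP x1 h1.1 (mem_sdiff.mp hp'').1
        · exact h.subP x2 h2.1 (mem_sdiff.mp hp'').1
      · exact h.subP x3 h3.1 (mem_sdiff.mp hp').1
    · intro p hp
      rcases mem_union.mp hp with hp'|hp'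
      · rcases mem_union.mp hp' with hp''|hp'' <;> exact (mem_sdiff.mp hp'').2
      · exact (mem_sdiff.mp hp').2
    · rw [card_union_of_disjoint (disjoint_union_left.mpr ⟨sep13, sep23⟩),
          card_union_of_disjoint sep12]
      omega
  -- r = 3
  have hr3 : r = 3 := by omega
  have av1C : (C∩D).card = 1 → (x1 ∩ C).card = 0 := by
    intro hCD
    have hz : x1 ∩ C = ∅ :=
      (h.pCDAB).avoid_far (x := x1)
        ⟨h1.1, h1.2.2.2.1, h1.2.2.2.2, h1.2.1, h1.2.2.1⟩
        h1AB h1nCD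
        (by rw [h.ucard C h.hC, inter_comm C A, inter_comm C B]; omega)
    rw [hz, card_empty]
  have av1D : (A∩D).card = 1 → (B∩D).card = 1 → (C∩D).card = 1 →
      (x1 ∩ D).card = 0 := by
    intro hAD hBD hCD
    have hz : x1 ∩ D = ∅ :=
      (h.pDCAB).avoid_far (x := x1)
        ⟨h1.1, h1.2.2.2.2, h1.2.2.2.1, h1.2.1, h1.2.2.1⟩
        h1AB (fun h' => h1nCD (com_swap h'))
        (by rw [h.ucard D h.hD, inter_comm D C, inter_comm D A, inter_comm D B]; omega)
    rw [hz, card_empty]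
  have av2B : (B∩D).card = 1 → (x2 ∩ B).card = 0 := by
    intro hBD
    have hz : x2 ∩ B = ∅ :=
      (h.pBDAC).avoid_far (x := x2)
        ⟨h2.1, h2.2.2.1, h2.2.2.2.2, h2.2.1, h2.2.2.2.1⟩
        h2AC h2nBD
        (by rw [h.ucard B h.hB, inter_comm B A]; omega)
    rw [hz, card_empty]
  have av3A : (A∩D).card = 1 → (x3 ∩ A).card = 0 := by
    intro hAD
    have hz : x3 ∩ A = ∅ :=
      (h.pADBC).avoid_far (x := x3)
        ⟨h3.1, h3.2.1, h3.2.2.2.2, h3.2.2.1, h3.2.2.2.1⟩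
        h3BC h3nAD
        (by rw [h.ucard A h.hA]; omega)
    rw [hz, card_empty]
  by_cases hAD : (A∩D).card = 1
  · by_cases hBD : (B∩D).card = 1
    · by_cases hCD : (C∩D).card = 1
      · -- all three : contradiction via w12 ∈ x1 ∩ D
        exfalso
        have h10 := av1D hAD hBD hCD
        have : w12 ∈ x1 ∩ D := mem_inter.mpr ⟨w12a, w12D⟩
        have := card_pos.mpr ⟨w12, this⟩
        omega
      · -- AD and BD : avoiders x3 and x2
        refine ⟨(x2 \ (A ∪ B ∪ C ∪ D)) ∪ (x3 \ (A ∪ B ∪ C ∪ D)), ?_, ?_, ?_⟩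
        · intro p hp
          rcases mem_union.mp hp with hp'|hp'
          · exact h.subP x2 h2.1 (mem_sdiff.mp hp').1
          · exact h.subP x3 h3.1 (mem_sdiff.mp hp').1
        · intro p hp
          rcases mem_union.mp hp with hp'|hp' <;> exact (mem_sdiff.mp hp').2
        · rw [card_union_of_disjoint sep23]
          have := av2B hBD; have := av3A hAD
          omega
    · by_cases hCD : (C∩D).card = 1
      · -- AD and CD : avoiders x1 and x3
        refine ⟨(x1 \ (A ∪ B ∪ C ∪ D)) ∪ (x3 \ (A ∪ B ∪ C ∪ D)), ?_, ?_, ?_⟩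
        · intro p hp
          rcases mem_union.mp hp with hp'|hp'
          · exact h.subP x1 h1.1 (mem_sdiff.mp hp').1
          · exact h.subP x3 h3.1 (mem_sdiff.mp hp').1
        · intro p hp
          rcases mem_union.mp hp with hp'|hp' <;> exact (mem_sdiff.mp hp').2
        · rw [card_union_of_disjoint sep13]
          have := av1C hCD; have := av3A hAD
          omega
      · -- only AD : avoider x3
        refine ⟨x3 \ (A ∪ B ∪ C ∪ D), ?_, ?_, ?_⟩
        · intro p hp; exact h.subP x3 h3.1 (mem_sdiff.mp hp).1
        · intro p hp; exact (mem_sdiff.mp hp).2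
        · have := av3A hAD; omega
  · by_cases hBD : (B∩D).card = 1
    · by_cases hCD : (C∩D).card = 1
      · -- BD and CD : avoiders x1 and x2
        refine ⟨(x1 \ (A ∪ B ∪ C ∪ D)) ∪ (x2 \ (A ∪ B ∪ C ∪ D)), ?_, ?_, ?_⟩
        · intro p hp
          rcases mem_union.mp hp with hp'|hp'
          · exact h.subP x1 h1.1 (mem_sdiff.mp hp').1
          · exact h.subP x2 h2.1 (mem_sdiff.mp hp').1
        · intro p hp
          rcases mem_union.mp hp with hp'|hp' <;> exact (mem_sdiff.mp hp').2
        · rw [card_union_of_disjoint sep12]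
          have := av1C hCD; have := av2B hBD
          omega
      · -- only BD : avoider x2
        refine ⟨x2 \ (A ∪ B ∪ C ∪ D), ?_, ?_, ?_⟩
        · intro p hp; exact h.subP x2 h2.1 (mem_sdiff.mp hp).1
        · intro p hp; exact (mem_sdiff.mp hp).2
        · have := av2B hBD; omega
    · by_cases hCD : (C∩D).card = 1
      · -- only CD : avoider x1
        refine ⟨x1 \ (A ∪ B ∪ C ∪ D), ?_, ?_, ?_⟩
        · intro p hp; exact h.subP x1 h1.1 (mem_sdiff.mp hp).1
        · intro p hp; exact (mem_sdiff.mp hp).2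
        · have := av1C hCD; omega
      · exact ⟨∅, by simp, by simp, by simp; omega⟩

/-! ### Outl permutation helpers -/

lemma Outl.swap12 {L : Finset (Finset α)} {A B C D x : Finset α}
    (h : Outl L A B C D x) : Outl L B A C D x := ⟨h.1, h.2.2.1, h.2.1, h.2.2.2.1, h.2.2.2.2⟩
lemma Outl.swap23 {L : Finset (Finset α)} {A B C D x : Finset α}
    (h : Outl L A B C D x) : Outl L A C B D x := ⟨h.1, h.2.1, h.2.2.2.1, h.2.2.1, h.2.2.2.2⟩
lemma Outl.swap34 {L : Finset (Finset α)} {A B C D x : Finset α}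
    (h : Outl L A B C D x) : Outl L A B D C x := ⟨h.1, h.2.1, h.2.2.1, h.2.2.2.2, h.2.2.2.1⟩

lemma Cfg.leaf211 (h : Cfg P L r A B C D) {a b z2 z3 : Finset α}
    (ha : Outl L A B C D a) (haAB : com A B a) (hanCD : ¬ com C D a)
    (hb : Outl L A B C D b) (hbCD : com C D b) (hbnAB : ¬ com A B b)
    (hz2 : Outl L A B C D z2) (hz2AC : com A C z2)
    (hz3 : Outl L A B C D z3) (hz3AD : com A D z3)
    (hcov2 : ∀ x, Outl L A B C D x → com B D x → com A C x)
    (hcov3 : ∀ x, Outl L A B C D x → com B C x → com A D x) :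
    (r+1) * tau P L ≤ P.card + L.card := by
  obtain ⟨pab, pabA, pabB, -⟩ := id haAB
  obtain ⟨pcd, pcdC, pcdD, -⟩ := id hbCD
  obtain ⟨pac, pacA, pacC, -⟩ := id hz2AC
  obtain ⟨pad, padA, padD, -⟩ := id hz3AD
  have hE : ∃ E : Finset α, (∀ p ∈ E, p ∈ P) ∧ (∀ p ∈ E, p ∉ A ∪ B ∪ C ∪ D) ∧
      (A∩B).card + (A∩C).card + (A∩D).card + (B∩C).card + (B∩D).card + (C∩D).card
        ≤ E.card + 4 := by
    by_cases hfull : com B D z2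
    · exact h.count22full ha haAB hanCD hb hbCD hbnAB hz2 hz2AC hfull
    · exact h.count22 ha haAB hanCD hb hbCD hbnAB hz2 hz2AC hfull
  obtain ⟨E, hE1, hE2, hEs⟩ := hE
  have nab : a ≠ b := by rintro rfl; exact hbnAB haAB
  have naz2 : a ≠ z2 := by
    rintro rfl; exact h.trik h.hA ha.1 ha.2.1.symm h.pABC haAB hz2AC
  have naz3 : a ≠ z3 := by
    rintro rfl; exact h.trik h.hA ha.1 ha.2.1.symm h.pABD haAB hz3AD
  have nbz2 : b ≠ z2 := by
    rintro rfl
    exact h.trik h.hC hb.1 hb.2.2.2.1.symm (fun p hc' ha' hd' => h.pACD p ha' hc' hd')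
      (com_swap hz2AC) hbCD
  have nbz3 : b ≠ z3 := by
    rintro rfl
    exact h.trik h.hD hb.1 hb.2.2.2.2.symm (fun p hd' hc' ha' => h.pACD p ha' hc' hd')
      (com_swap hbCD) (com_swap hz3AD)
  have nz23 : z2 ≠ z3 := by
    rintro rfl; exact h.trik h.hA hz2.1 hz2.2.1.symm h.pACD hz2AC hz3AD
  have hW4 : ({a,b,z2,z3} : Finset (Finset α)).card = 4 :=
    card_eq_four_of_distinct nab naz2 naz3 nbz2 nbz3 nz23
  apply h.finish 4 {pab, pcd, pac, pad} E ({a, b, z2, z3})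
  · intro p hp
    simp only [mem_insert, mem_singleton] at hp
    rcases hp with rfl|rfl|rfl|rfl
    · exact h.subP A h.hA pabA
    · exact h.subP C h.hC pcdC
    · exact h.subP A h.hA pacA
    · exact h.subP A h.hA padA
  · intro l hl
    by_cases eA : l = A
    · exact ⟨pab, by simp, eA ▸ pabA⟩
    by_cases eB : l = B
    · exact ⟨pab, by simp, eB ▸ pabB⟩
    by_cases eC : l = C
    · exact ⟨pcd, by simp, eC ▸ pcdC⟩
    by_cases eD : l = D
    · exact ⟨pcd, by simp, eD ▸ pcdD⟩
    have hout : Outl L A B C D l := ⟨hl, eA, eB, eC, eD⟩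
    rcases h.mne hout with hc|hc|hc|hc|hc|hc
    · exact ⟨pab, by simp, h.dblm h.hA h.hB h.nAB pabA pabB hc⟩
    · exact ⟨pcd, by simp, h.dblm h.hC h.hD h.nCD pcdC pcdD hc⟩
    · exact ⟨pac, by simp, h.dblm h.hA h.hC h.nAC pacA pacC hc⟩
    · exact ⟨pac, by simp, h.dblm h.hA h.hC h.nAC pacA pacC (hcov2 l hout hc)⟩
    · exact ⟨pad, by simp, h.dblm h.hA h.hD h.nAD padA padD hc⟩
    · exact ⟨pad, by simp, h.dblm h.hA h.hD h.nAD padA padD (hcov3 l hout hc)⟩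
  · exact card_le_four pab pcd pac pad
  · exact hE1
  · exact hE2
  · intro w hw
    simp only [mem_insert, mem_singleton] at hw
    rcases hw with rfl|rfl|rfl|rfl
    exacts [ha.1, hb.1, hz2.1, hz3.1]
  · simp only [mem_insert, mem_singleton, not_or]
    exact ⟨fun h' => ha.2.1 h'.symm, fun h' => hb.2.1 h'.symm,
      fun h' => hz2.2.1 h'.symm, fun h' => hz3.2.1 h'.symm⟩
  · simp only [mem_insert, mem_singleton, not_or]
    exact ⟨fun h' => ha.2.2.1 h'.symm, fun h' => hb.2.2.1 h'.symm,
      fun h' => hz2.2.2.1 h'.symm, fun h' => hz3.2.2.1 h'.symm⟩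
  · simp only [mem_insert, mem_singleton, not_or]
    exact ⟨fun h' => ha.2.2.2.1 h'.symm, fun h' => hb.2.2.2.1 h'.symm,
      fun h' => hz2.2.2.2.1 h'.symm, fun h' => hz3.2.2.2.1 h'.symm⟩
  · simp only [mem_insert, mem_singleton, not_or]
    exact ⟨fun h' => ha.2.2.2.2 h'.symm, fun h' => hb.2.2.2.2 h'.symm,
      fun h' => hz2.2.2.2.2 h'.symm, fun h' => hz3.2.2.2.2 h'.symm⟩
  · rw [hW4]
    omega

lemma Cfg.leafTRI (h : Cfg P L r A B C D) {x1 x2 x3 : Finset α}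
    (h1 : Outl L A B C D x1) (h1AB : com A B x1) (h1nCD : ¬ com C D x1)
    (h2 : Outl L A B C D x2) (h2AC : com A C x2) (h2nBD : ¬ com B D x2)
    (h3 : Outl L A B C D x3) (h3BC : com B C x3) (h3nAD : ¬ com A D x3)
    (hcov1 : ∀ x, Outl L A B C D x → com C D x → com A B x)
    (hcov2 : ∀ x, Outl L A B C D x → com B D x → com A C x)
    (hcov3 : ∀ x, Outl L A B C D x → com A D x → com B C x) :
    (r+1) * tau P L ≤ P.card + L.card := by
  obtain ⟨pab, pabA, pabB, -⟩ := id h1AB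
  obtain ⟨pac, pacA, pacC, -⟩ := id h2AC
  obtain ⟨pbc, pbcB, pbcC, -⟩ := id h3BC
  have hDne : D.Nonempty := by
    rw [← card_pos, h.ucard D h.hD]; have := h.hr; omega
  obtain ⟨d0, hd0⟩ := hDne
  obtain ⟨E, hE1, hE2, hEs⟩ := h.countTRI h1 h1AB h1nCD h2 h2AC h2nBD h3 h3BC h3nAD
  have n12 : x1 ≠ x2 := by
    rintro rfl; exact h.trik h.hA h1.1 h1.2.1.symm h.pABC h1AB h2AC
  have n13 : x1 ≠ x3 := by
    rintro rfl
    exact h.trik h.hB h1.1 h1.2.2.1.symm (fun p hb' ha' hc' => h.pABC p ha' hb' hc')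
      (com_swap h1AB) h3BC
  have n23 : x2 ≠ x3 := by
    rintro rfl
    exact h.trik h.hC h2.1 h2.2.2.2.1.symm (fun p hc' ha' hb' => h.pABC p ha' hb' hc')
      (com_swap h2AC) (com_swap h3BC)
  have hW3 : ({x1,x2,x3} : Finset (Finset α)).card = 3 :=
    card_eq_three_of_distinct n12 n13 n23
  apply h.finish 4 {pab, pac, pbc, d0} E ({x1, x2, x3})
  · intro p hp
    simp only [mem_insert, mem_singleton] at hp
    rcases hp with rfl|rfl|rfl|rfl
    · exact h.subP A h.hA pabA
    · exact h.subP A h.hA pacA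
    · exact h.subP B h.hB pbcB
    · exact h.subP D h.hD hd0
  · intro l hl
    by_cases eA : l = A
    · exact ⟨pab, by simp, eA ▸ pabA⟩
    by_cases eB : l = B
    · exact ⟨pab, by simp, eB ▸ pabB⟩
    by_cases eC : l = C
    · exact ⟨pac, by simp, eC ▸ pacC⟩
    by_cases eD : l = D
    · exact ⟨d0, by simp, eD ▸ hd0⟩
    have hout : Outl L A B C D l := ⟨hl, eA, eB, eC, eD⟩
    rcases h.mne hout with hc|hc|hc|hc|hc|hc
    · exact ⟨pab, by simp, h.dblm h.hA h.hB h.nAB pabA pabB hc⟩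
    · exact ⟨pab, by simp, h.dblm h.hA h.hB h.nAB pabA pabB (hcov1 l hout hc)⟩
    · exact ⟨pac, by simp, h.dblm h.hA h.hC h.nAC pacA pacC hc⟩
    · exact ⟨pac, by simp, h.dblm h.hA h.hC h.nAC pacA pacC (hcov2 l hout hc)⟩
    · exact ⟨pbc, by simp, h.dblm h.hB h.hC h.nBC pbcB pbcC (hcov3 l hout hc)⟩
    · exact ⟨pbc, by simp, h.dblm h.hB h.hC h.nBC pbcB pbcC hc⟩
  · exact card_le_four pab pac pbc d0
  · exact hE1
  · exact hE2
  · intro w hw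
    simp only [mem_insert, mem_singleton] at hw
    rcases hw with rfl|rfl|rfl
    exacts [h1.1, h2.1, h3.1]
  · simp only [mem_insert, mem_singleton, not_or]
    exact ⟨fun h' => h1.2.1 h'.symm, fun h' => h2.2.1 h'.symm, fun h' => h3.2.1 h'.symm⟩
  · simp only [mem_insert, mem_singleton, not_or]
    exact ⟨fun h' => h1.2.2.1 h'.symm, fun h' => h2.2.2.1 h'.symm, fun h' => h3.2.2.1 h'.symm⟩
  · simp only [mem_insert, mem_singleton, not_or]
    exact ⟨fun h' => h1.2.2.2.1 h'.symm, fun h' => h2.2.2.2.1 h'.symm,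
      fun h' => h3.2.2.2.1 h'.symm⟩
  · simp only [mem_insert, mem_singleton, not_or]
    exact ⟨fun h' => h1.2.2.2.2 h'.symm, fun h' => h2.2.2.2.2 h'.symm,
      fun h' => h3.2.2.2.2 h'.symm⟩
  · rw [hW3]
    omega

set_option maxHeartbeats 4000000 in
lemma Cfg.leaf22 (h : Cfg P L r A B C D) {a b c d : Finset α}
    (ha : Outl L A B C D a) (haAB : com A B a) (hanCD : ¬ com C D a)
    (hb : Outl L A B C D b) (hbCD : com C D b) (hbnAB : ¬ com A B b)
    (hc : Outl L A B C D c) (hcAC : com A C c) (hcnBD : ¬ com B D c)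
    (hd : Outl L A B C D d) (hdBD : com B D d) (hdnAC : ¬ com A C d) :
    (r+1) * tau P L ≤ P.card + L.card := by
  obtain ⟨pab, pabA, pabB, -⟩ := id haAB
  obtain ⟨pcd, pcdC, pcdD, -⟩ := id hbCD
  obtain ⟨pac, pacA, pacC, -⟩ := id hcAC
  obtain ⟨pbd, pbdB, pbdD, -⟩ := id hdBD
  -- the four forced w-points
  obtain ⟨wD, wDa, wDc, wDD⟩ := h.wlem ha hc haAB hanCD hcAC hcnBD
  obtain ⟨wC, wCa, wCd, wCC⟩ := (h.pBADC).wlem (ha.swap12.swap34) (hd.swap12.swap34)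
    (com_swap haAB) (fun h' => hanCD (com_swap h')) hdBD hdnAC
  obtain ⟨wB, wBb, wBc, wBB⟩ := (h.pCDAB).wlem
    ⟨hb.1, hb.2.2.2.1, hb.2.2.2.2, hb.2.1, hb.2.2.1⟩
    ⟨hc.1, hc.2.2.2.1, hc.2.2.2.2, hc.2.1, hc.2.2.1⟩
    hbCD hbnAB (com_swap hcAC) (fun h' => hcnBD (com_swap h'))
  obtain ⟨wA, wAb, wAd, wAA⟩ := (h.pDCBA).wlem
    ⟨hb.1, hb.2.2.2.2, hb.2.2.2.1, hb.2.2.1, hb.2.1⟩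
    ⟨hd.1, hd.2.2.2.2, hd.2.2.2.1, hd.2.2.1, hd.2.1⟩
    (com_swap hbCD) (fun h' => hbnAB (com_swap h'))
    (com_swap hdBD) (fun h' => hdnAC (com_swap h'))
  -- universality of the w-points
  have uABC : ∀ x, Outl L A B C D x → com A B x → ¬ com C D x → wC ∈ x := by
    intro x hx h1 h2
    obtain ⟨w', e1, e2, e3⟩ := (h.pBADC).wlem (hx.swap12.swap34) (hd.swap12.swap34)
      (com_swap h1) (fun h' => h2 (com_swap h')) hdBD hdnAC
    have : w' = wC := h.same hd.1 h.hC hd.2.2.2.1 e2 e3 wCd wCC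
    exact this ▸ e1
  have uABD : ∀ x, Outl L A B C D x → com A B x → ¬ com C D x → wD ∈ x := by
    intro x hx h1 h2
    obtain ⟨w', e1, e2, e3⟩ := h.wlem hx hc h1 h2 hcAC hcnBD
    have : w' = wD := h.same hc.1 h.hD hc.2.2.2.2 e2 e3 wDc wDD
    exact this ▸ e1
  have uCDA : ∀ x, Outl L A B C D x → com C D x → ¬ com A B x → wA ∈ x := by
    intro x hx h1 h2
    obtain ⟨w', e1, e2, e3⟩ := (h.pDCBA).wlem
      ⟨hx.1, hx.2.2.2.2, hx.2.2.2.1, hx.2.2.1, hx.2.1⟩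
      ⟨hd.1, hd.2.2.2.2, hd.2.2.2.1, hd.2.2.1, hd.2.1⟩
      (com_swap h1) (fun h' => h2 (com_swap h'))
      (com_swap hdBD) (fun h' => hdnAC (com_swap h'))
    have : w' = wA := h.same hd.1 h.hA hd.2.1 e2 e3 wAd wAA
    exact this ▸ e1
  have uCDB : ∀ x, Outl L A B C D x → com C D x → ¬ com A B x → wB ∈ x := by
    intro x hx h1 h2
    obtain ⟨w', e1, e2, e3⟩ := (h.pCDAB).wlem
      ⟨hx.1, hx.2.2.2.1, hx.2.2.2.2, hx.2.1, hx.2.2.1⟩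
      ⟨hc.1, hc.2.2.2.1, hc.2.2.2.2, hc.2.1, hc.2.2.1⟩
      h1 h2 (com_swap hcAC) (fun h' => hcnBD (com_swap h'))
    have : w' = wB := h.same hc.1 h.hB hc.2.2.1 e2 e3 wBc wBB
    exact this ▸ e1
  have uACD : ∀ x, Outl L A B C D x → com A C x → ¬ com B D x → wD ∈ x := by
    intro x hx h1 h2
    obtain ⟨w', e1, e2, e3⟩ := h.wlem ha hx haAB hanCD h1 h2
    have : w' = wD := h.same ha.1 h.hD ha.2.2.2.2 e1 e3 wDa wDD
    exact this ▸ e2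
  have uACB : ∀ x, Outl L A B C D x → com A C x → ¬ com B D x → wB ∈ x := by
    intro x hx h1 h2
    obtain ⟨w', e1, e2, e3⟩ := (h.pCDAB).wlem
      ⟨hb.1, hb.2.2.2.1, hb.2.2.2.2, hb.2.1, hb.2.2.1⟩
      ⟨hx.1, hx.2.2.2.1, hx.2.2.2.2, hx.2.1, hx.2.2.1⟩
      hbCD hbnAB (com_swap h1) (fun h' => h2 (com_swap h'))
    have : w' = wB := h.same hb.1 h.hB hb.2.2.1 e1 e3 wBb wBB
    exact this ▸ e2
  have uBDA : ∀ x, Outl L A B C D x → com B D x → ¬ com A C x → wA ∈ x := by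
    intro x hx h1 h2
    obtain ⟨w', e1, e2, e3⟩ := (h.pDCBA).wlem
      ⟨hb.1, hb.2.2.2.2, hb.2.2.2.1, hb.2.2.1, hb.2.1⟩
      ⟨hx.1, hx.2.2.2.2, hx.2.2.2.1, hx.2.2.1, hx.2.1⟩
      (com_swap hbCD) (fun h' => hbnAB (com_swap h'))
      (com_swap h1) (fun h' => h2 (com_swap h'))
    have : w' = wA := h.same hb.1 h.hA hb.2.1 e1 e3 wAb wAA
    exact this ▸ e2
  have uBDC : ∀ x, Outl L A B C D x → com B D x → ¬ com A C x → wC ∈ x := by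
    intro x hx h1 h2
    obtain ⟨w', e1, e2, e3⟩ := (h.pBADC).wlem (ha.swap12.swap34) (hx.swap12.swap34)
      (com_swap haAB) (fun h' => hanCD (com_swap h')) h1 h2
    have : w' = wC := h.same ha.1 h.hC ha.2.2.2.1 e1 e3 wCa wCC
    exact this ▸ e2
  have uADB : ∀ x, Outl L A B C D x → com A D x → ¬ com B C x → wB ∈ x := by
    intro x hx h1 h2
    obtain ⟨w', e1, e2, e3⟩ := (h.pADCB).wlem
      ⟨hx.1, hx.2.1, hx.2.2.2.2, hx.2.2.2.1, hx.2.2.1⟩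
      ⟨hc.1, hc.2.1, hc.2.2.2.2, hc.2.2.2.1, hc.2.2.1⟩
      h1 (fun h' => h2 (com_swap h')) hcAC (fun h' => hcnBD (com_swap h'))
    have : w' = wB := h.same hc.1 h.hB hc.2.2.1 e2 e3 wBc wBB
    exact this ▸ e1
  have uADC : ∀ x, Outl L A B C D x → com A D x → ¬ com B C x → wC ∈ x := by
    intro x hx h1 h2
    obtain ⟨w', e1, e2, e3⟩ := (h.pABDC).wlem (ha.swap34) (hx.swap34)
      haAB (fun h' => hanCD (com_swap h')) h1 h2
    have : w' = wC := h.same ha.1 h.hC ha.2.2.2.1 e1 e3 wCa wCC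
    exact this ▸ e2
  have uBCA : ∀ x, Outl L A B C D x → com B C x → ¬ com A D x → wA ∈ x := by
    intro x hx h1 h2
    obtain ⟨w', e1, e2, e3⟩ := (h.pBCDA).wlem
      ⟨hx.1, hx.2.2.1, hx.2.2.2.1, hx.2.2.2.2, hx.2.1⟩
      ⟨hd.1, hd.2.2.1, hd.2.2.2.1, hd.2.2.2.2, hd.2.1⟩
      h1 (fun h' => h2 (com_swap h')) hdBD (fun h' => hdnAC (com_swap h'))
    have : w' = wA := h.same hd.1 h.hA hd.2.1 e2 e3 wAd wAA
    exact this ▸ e1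
  have uBCD : ∀ x, Outl L A B C D x → com B C x → ¬ com A D x → wD ∈ x := by
    intro x hx h1 h2
    obtain ⟨w', e1, e2, e3⟩ := (h.pBACD).wlem (ha.swap12) (hx.swap12)
      (com_swap haAB) hanCD h1 h2
    have : w' = wD := h.same ha.1 h.hD ha.2.2.2.2 e1 e3 wDa wDD
    exact this ▸ e2
  -- shared counting data
  obtain ⟨E, hE1, hE2, hEs⟩ := h.count22 ha haAB hanCD hb hbCD hbnAB hc hcAC hcnBD
  have nab : a ≠ b := by rintro rfl; exact hbnAB haAB
  have nac : a ≠ c := by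
    rintro rfl; exact h.trik h.hA ha.1 ha.2.1.symm h.pABC haAB hcAC
  have nad : a ≠ d := by
    rintro rfl
    exact h.trik h.hB ha.1 ha.2.2.1.symm (fun p hb' ha' hd' => h.pABD p ha' hb' hd')
      (com_swap haAB) hdBD
  have nbc : b ≠ c := by
    rintro rfl
    exact h.trik h.hC hb.1 hb.2.2.2.1.symm (fun p hc' ha' hd' => h.pACD p ha' hc' hd')
      (com_swap hcAC) hbCD
  have nbd : b ≠ d := by
    rintro rfl
    exact h.trik h.hD hb.1 hb.2.2.2.2.symm (fun p hd' hc' hb' => h.pBCD p hb' hc' hd')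
      (com_swap hbCD) (com_swap hdBD)
  have ncd : c ≠ d := by rintro rfl; exact hcnBD hdBD
  have hW4 : ({a,b,c,d} : Finset (Finset α)).card = 4 :=
    card_eq_four_of_distinct nab nac nad nbc nbd ncd
  have FIN : ∀ X : Finset α, (∀ p ∈ X, p ∈ P) → (∀ l ∈ L, ∃ p ∈ X, p ∈ l) →
      X.card ≤ 4 → (r+1) * tau P L ≤ P.card + L.card := by
    intro X hX1 hX2 hX3
    apply h.finish 4 X E ({a,b,c,d}) hX1 hX2 hX3 hE1 hE2
    · intro w hw
      simp only [mem_insert, mem_singleton] at hw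
      rcases hw with rfl|rfl|rfl|rfl
      exacts [ha.1, hb.1, hc.1, hd.1]
    · simp only [mem_insert, mem_singleton, not_or]
      exact ⟨fun h' => ha.2.1 h'.symm, fun h' => hb.2.1 h'.symm,
        fun h' => hc.2.1 h'.symm, fun h' => hd.2.1 h'.symm⟩
    · simp only [mem_insert, mem_singleton, not_or]
      exact ⟨fun h' => ha.2.2.1 h'.symm, fun h' => hb.2.2.1 h'.symm,
        fun h' => hc.2.2.1 h'.symm, fun h' => hd.2.2.1 h'.symm⟩
    · simp only [mem_insert, mem_singleton, not_or]
      exact ⟨fun h' => ha.2.2.2.1 h'.symm, fun h' => hb.2.2.2.1 h'.symm,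
        fun h' => hc.2.2.2.1 h'.symm, fun h' => hd.2.2.2.1 h'.symm⟩
    · simp only [mem_insert, mem_singleton, not_or]
      exact ⟨fun h' => ha.2.2.2.2 h'.symm, fun h' => hb.2.2.2.2 h'.symm,
        fun h' => hc.2.2.2.2 h'.symm, fun h' => hd.2.2.2.2 h'.symm⟩
    · rw [hW4]
      omega
  by_cases hF2 : ∃ f, Outl L A B C D f ∧ com A C f ∧ com B D f
  · by_cases hF3 : ∃ f, Outl L A B C D f ∧ com A D f ∧ com B C f
    · -- fulls in classes 2 and 3
      obtain ⟨f2, hf2o, hf2AC, hf2BD⟩ := hF2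
      obtain ⟨f3, hf3o, hf3AD, hf3BC⟩ := hF3
      obtain ⟨q, qa, qf2, qf3⟩ := h.qlem ha hf2o hf3o haAB hanCD hf2AC hf2BD hf3AD hf3BC
      have nf23 : f2 ≠ f3 := by
        rintro rfl; exact h.trik h.hA hf2o.1 hf2o.2.1.symm h.pACD hf2AC hf3AD
      have naf2 : a ≠ f2 := by
        rintro rfl; exact h.trik h.hA ha.1 ha.2.1.symm h.pABC haAB hf2AC
      have naf3 : a ≠ f3 := by
        rintro rfl; exact h.trik h.hA ha.1 ha.2.1.symm h.pABD haAB hf3AD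
      have uABq : ∀ l, Outl L A B C D l → com A B l → ¬ com C D l → q ∈ l := by
        intro l hlo h1 h2
        obtain ⟨q', e1, e2, e3⟩ := h.qlem hlo hf2o hf3o h1 h2 hf2AC hf2BD hf3AD hf3BC
        have : q' = q := h.same hf2o.1 hf3o.1 nf23 e2 e3 qf2 qf3
        exact this ▸ e1
      have uf2q : ∀ l, Outl L A B C D l → com A C l → com B D l → q ∈ l := by
        intro l hlo h1 h2
        obtain ⟨q', e1, e2, e3⟩ := h.qlem ha hlo hf3o haAB hanCD h1 h2 hf3AD hf3BC
        have : q' = q := h.same ha.1 hf3o.1 naf3 e1 e3 qa qf3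
        exact this ▸ e2
      have uf3q : ∀ l, Outl L A B C D l → com A D l → com B C l → q ∈ l := by
        intro l hlo h1 h2
        obtain ⟨q', e1, e2, e3⟩ := h.qlem ha hf2o hlo haAB hanCD hf2AC hf2BD h1 h2
        have : q' = q := h.same ha.1 hf2o.1 naf2 e1 e2 qa qf2
        exact this ▸ e3
      apply FIN {q, wA, wB, pcd}
      · intro p hp
        simp only [mem_insert, mem_singleton] at hp
        rcases hp with rfl|rfl|rfl|rfl
        · exact h.subP a ha.1 qa
        · exact h.subP A h.hA wAA
        · exact h.subP B h.hB wBB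
        · exact h.subP C h.hC pcdC
      · intro l hl
        by_cases eA : l = A
        · exact ⟨wA, by simp, eA ▸ wAA⟩
        by_cases eB : l = B
        · exact ⟨wB, by simp, eB ▸ wBB⟩
        by_cases eC : l = C
        · exact ⟨pcd, by simp, eC ▸ pcdC⟩
        by_cases eD : l = D
        · exact ⟨pcd, by simp, eD ▸ pcdD⟩
        have hout : Outl L A B C D l := ⟨hl, eA, eB, eC, eD⟩
        rcases h.mne hout with hcm|hcm|hcm|hcm|hcm|hcm
        · by_cases hp : com C D l
          · exact ⟨pcd, by simp, h.dblm h.hC h.hD h.nCD pcdC pcdD hp⟩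
          · exact ⟨q, by simp, uABq l hout hcm hp⟩
        · exact ⟨pcd, by simp, h.dblm h.hC h.hD h.nCD pcdC pcdD hcm⟩
        · by_cases hp : com B D l
          · exact ⟨q, by simp, uf2q l hout hcm hp⟩
          · exact ⟨wB, by simp, uACB l hout hcm hp⟩
        · by_cases hp : com A C l
          · exact ⟨q, by simp, uf2q l hout hp hcm⟩
          · exact ⟨wA, by simp, uBDA l hout hcm hp⟩
        · by_cases hp : com B C l
          · exact ⟨q, by simp, uf3q l hout hcm hp⟩
          · exact ⟨wB, by simp, uADB l hout hcm hp⟩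
        · by_cases hp : com A D l
          · exact ⟨q, by simp, uf3q l hout hp hcm⟩
          · exact ⟨wA, by simp, uBCA l hout hcm hp⟩
      · exact card_le_four q wA wB pcd
    · -- class 2 has a full, class 3 has no full
      obtain ⟨f2, hf2o, hf2AC, hf2BD⟩ := hF2
      by_cases hF1 : ∃ f, Outl L A B C D f ∧ com A B f ∧ com C D f
      · obtain ⟨f1, hf1o, hf1AB, hf1CD⟩ := hF1
        by_cases hz : ∃ z, Outl L A B C D z ∧ (com A D z ∨ com B C z)
        · obtain ⟨z, hzo, hztype⟩ := hz
          have nf12 : f1 ≠ f2 := by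
            rintro rfl; exact h.trik h.hA hf1o.1 hf1o.2.1.symm h.pABC hf1AB hf2AC
          rcases hztype with hzAD|hzBC
          · -- z is an AD-single
            have hznBC : ¬ com B C z := fun h' => hF3 ⟨z, hzo, hzAD, h'⟩
            obtain ⟨pad, padA, padD, -⟩ := id hzAD
            obtain ⟨q, qz, qf1, qf2⟩ := (h.pADBC).qlem
              ⟨hzo.1, hzo.2.1, hzo.2.2.2.2, hzo.2.2.1, hzo.2.2.2.1⟩
              ⟨hf1o.1, hf1o.2.1, hf1o.2.2.2.2, hf1o.2.2.1, hf1o.2.2.2.1⟩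
              ⟨hf2o.1, hf2o.2.1, hf2o.2.2.2.2, hf2o.2.2.1, hf2o.2.2.2.1⟩
              hzAD hznBC hf1AB (com_swap hf1CD) hf2AC (com_swap hf2BD)
            have nzf1 : z ≠ f1 := by
              rintro rfl; exact h.trik h.hA hzo.1 hzo.2.1.symm h.pABD hf1AB hzAD
            have nzf2 : z ≠ f2 := by
              rintro rfl; exact h.trik h.hA hzo.1 hzo.2.1.symm h.pACD hf2AC hzAD
            have uf1q : ∀ l, Outl L A B C D l → com A B l → com C D l → q ∈ l := by
              intro l hlo h1 h2
              obtain ⟨q', e1, e2, e3⟩ := (h.pADBC).qlem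
                ⟨hzo.1, hzo.2.1, hzo.2.2.2.2, hzo.2.2.1, hzo.2.2.2.1⟩
                ⟨hlo.1, hlo.2.1, hlo.2.2.2.2, hlo.2.2.1, hlo.2.2.2.1⟩
                ⟨hf2o.1, hf2o.2.1, hf2o.2.2.2.2, hf2o.2.2.1, hf2o.2.2.2.1⟩
                hzAD hznBC h1 (com_swap h2) hf2AC (com_swap hf2BD)
              have : q' = q := h.same hzo.1 hf2o.1 nzf2 e1 e3 qz qf2
              exact this ▸ e2
            have uf2q : ∀ l, Outl L A B C D l → com A C l → com B D l → q ∈ l := by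
              intro l hlo h1 h2
              obtain ⟨q', e1, e2, e3⟩ := (h.pADBC).qlem
                ⟨hzo.1, hzo.2.1, hzo.2.2.2.2, hzo.2.2.1, hzo.2.2.2.1⟩
                ⟨hf1o.1, hf1o.2.1, hf1o.2.2.2.2, hf1o.2.2.1, hf1o.2.2.2.1⟩
                ⟨hlo.1, hlo.2.1, hlo.2.2.2.2, hlo.2.2.1, hlo.2.2.2.1⟩
                hzAD hznBC hf1AB (com_swap hf1CD) h1 (com_swap h2)
              have : q' = q := h.same hzo.1 hf1o.1 nzf1 e1 e2 qz qf1
              exact this ▸ e3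
            have uBCq : ∀ l, Outl L A B C D l → com B C l → ¬ com A D l → q ∈ l := by
              intro l hlo h1 h2
              obtain ⟨q', e1, e2, e3⟩ := (h.pBCAD).qlem
                ⟨hlo.1, hlo.2.2.1, hlo.2.2.2.1, hlo.2.1, hlo.2.2.2.2⟩
                ⟨hf1o.1, hf1o.2.2.1, hf1o.2.2.2.1, hf1o.2.1, hf1o.2.2.2.2⟩
                ⟨hf2o.1, hf2o.2.2.1, hf2o.2.2.2.1, hf2o.2.1, hf2o.2.2.2.2⟩
                h1 h2 (com_swap hf1AB) hf1CD hf2BD (com_swap hf2AC)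
              have : q' = q := h.same hf1o.1 hf2o.1 nf12 e2 e3 qf1 qf2
              exact this ▸ e1
            apply FIN {q, wB, wC, pad}
            · intro p hp
              simp only [mem_insert, mem_singleton] at hp
              rcases hp with rfl|rfl|rfl|rfl
              · exact h.subP z hzo.1 qz
              · exact h.subP B h.hB wBB
              · exact h.subP C h.hC wCC
              · exact h.subP A h.hA padA
            · intro l hl
              by_cases eA : l = A
              · exact ⟨pad, by simp, eA ▸ padA⟩
              by_cases eB : l = B
              · exact ⟨wB, by simp, eB ▸ wBB⟩
              by_cases eC : l = C
              · exact ⟨wC, by simp, eC ▸ wCC⟩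
              by_cases eD : l = D
              · exact ⟨pad, by simp, eD ▸ padD⟩
              have hout : Outl L A B C D l := ⟨hl, eA, eB, eC, eD⟩
              rcases h.mne hout with hcm|hcm|hcm|hcm|hcm|hcm
              · by_cases hp : com C D l
                · exact ⟨q, by simp, uf1q l hout hcm hp⟩
                · exact ⟨wC, by simp, uABC l hout hcm hp⟩
              · by_cases hp : com A B l
                · exact ⟨q, by simp, uf1q l hout hp hcm⟩
                · exact ⟨wB, by simp, uCDB l hout hcm hp⟩
              · by_cases hp : com B D l
                · exact ⟨q, by simp, uf2q l hout hcm hp⟩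
                · exact ⟨wB, by simp, uACB l hout hcm hp⟩
              · by_cases hp : com A C l
                · exact ⟨q, by simp, uf2q l hout hp hcm⟩
                · exact ⟨wC, by simp, uBDC l hout hcm hp⟩
              · exact ⟨pad, by simp, h.dblm h.hA h.hD h.nAD padA padD hcm⟩
              · by_cases hp : com A D l
                · exact absurd ⟨l, hout, hp, hcm⟩ hF3
                · exact ⟨q, by simp, uBCq l hout hcm hp⟩
            · exact card_le_four q wB wC pad
          · -- z is a BC-single
            have hznAD : ¬ com A D z := fun h' => hF3 ⟨z, hzo, h', hzBC⟩
            obtain ⟨pbc, pbcB, pbcC, -⟩ := id hzBC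
            obtain ⟨q, qz, qf1, qf2⟩ := (h.pBCAD).qlem
              ⟨hzo.1, hzo.2.2.1, hzo.2.2.2.1, hzo.2.1, hzo.2.2.2.2⟩
              ⟨hf1o.1, hf1o.2.2.1, hf1o.2.2.2.1, hf1o.2.1, hf1o.2.2.2.2⟩
              ⟨hf2o.1, hf2o.2.2.1, hf2o.2.2.2.1, hf2o.2.1, hf2o.2.2.2.2⟩
              hzBC hznAD (com_swap hf1AB) hf1CD hf2BD (com_swap hf2AC)
            have nzf1 : z ≠ f1 := by
              rintro rfl
              exact h.trik h.hB hzo.1 hzo.2.2.1.symm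
                (fun p hb' hc' ha' => h.pABC p ha' hb' hc') hzBC (com_swap hf1AB)
            have nzf2 : z ≠ f2 := by
              rintro rfl
              exact h.trik h.hB hzo.1 hzo.2.2.1.symm h.pBCD hzBC hf2BD
            have uf1q : ∀ l, Outl L A B C D l → com A B l → com C D l → q ∈ l := by
              intro l hlo h1 h2
              obtain ⟨q', e1, e2, e3⟩ := (h.pBCAD).qlem
                ⟨hzo.1, hzo.2.2.1, hzo.2.2.2.1, hzo.2.1, hzo.2.2.2.2⟩
                ⟨hlo.1, hlo.2.2.1, hlo.2.2.2.1, hlo.2.1, hlo.2.2.2.2⟩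
                ⟨hf2o.1, hf2o.2.2.1, hf2o.2.2.2.1, hf2o.2.1, hf2o.2.2.2.2⟩
                hzBC hznAD (com_swap h1) h2 hf2BD (com_swap hf2AC)
              have : q' = q := h.same hzo.1 hf2o.1 nzf2 e1 e3 qz qf2
              exact this ▸ e2
            have uf2q : ∀ l, Outl L A B C D l → com A C l → com B D l → q ∈ l := by
              intro l hlo h1 h2
              obtain ⟨q', e1, e2, e3⟩ := (h.pBCAD).qlem
                ⟨hzo.1, hzo.2.2.1, hzo.2.2.2.1, hzo.2.1, hzo.2.2.2.2⟩
                ⟨hf1o.1, hf1o.2.2.1, hf1o.2.2.2.1, hf1o.2.1, hf1o.2.2.2.2⟩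
                ⟨hlo.1, hlo.2.2.1, hlo.2.2.2.1, hlo.2.1, hlo.2.2.2.2⟩
                hzBC hznAD (com_swap hf1AB) hf1CD h2 (com_swap h1)
              have : q' = q := h.same hzo.1 hf1o.1 nzf1 e1 e2 qz qf1
              exact this ▸ e3
            have uADq : ∀ l, Outl L A B C D l → com A D l → ¬ com B C l → q ∈ l := by
              intro l hlo h1 h2
              obtain ⟨q', e1, e2, e3⟩ := (h.pADBC).qlem
                ⟨hlo.1, hlo.2.1, hlo.2.2.2.2, hlo.2.2.1, hlo.2.2.2.1⟩
                ⟨hf1o.1, hf1o.2.1, hf1o.2.2.2.2, hf1o.2.2.1, hf1o.2.2.2.1⟩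
                ⟨hf2o.1, hf2o.2.1, hf2o.2.2.2.2, hf2o.2.2.1, hf2o.2.2.2.1⟩
                h1 h2 hf1AB (com_swap hf1CD) hf2AC (com_swap hf2BD)
              have : q' = q := h.same hf1o.1 hf2o.1 nf12 e2 e3 qf1 qf2
              exact this ▸ e1
            apply FIN {q, wA, wD, pbc}
            · intro p hp
              simp only [mem_insert, mem_singleton] at hp
              rcases hp with rfl|rfl|rfl|rfl
              · exact h.subP z hzo.1 qz
              · exact h.subP A h.hA wAA
              · exact h.subP D h.hD wDD
              · exact h.subP B h.hB pbcB
            · intro l hl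
              by_cases eA : l = A
              · exact ⟨wA, by simp, eA ▸ wAA⟩
              by_cases eB : l = B
              · exact ⟨pbc, by simp, eB ▸ pbcB⟩
              by_cases eC : l = C
              · exact ⟨pbc, by simp, eC ▸ pbcC⟩
              by_cases eD : l = D
              · exact ⟨wD, by simp, eD ▸ wDD⟩
              have hout : Outl L A B C D l := ⟨hl, eA, eB, eC, eD⟩
              rcases h.mne hout with hcm|hcm|hcm|hcm|hcm|hcm
              · by_cases hp : com C D l
                · exact ⟨q, by simp, uf1q l hout hcm hp⟩
                · exact ⟨wD, by simp, uABD l hout hcm hp⟩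
              · by_cases hp : com A B l
                · exact ⟨q, by simp, uf1q l hout hp hcm⟩
                · exact ⟨wA, by simp, uCDA l hout hcm hp⟩
              · by_cases hp : com B D l
                · exact ⟨q, by simp, uf2q l hout hcm hp⟩
                · exact ⟨wD, by simp, uACD l hout hcm hp⟩
              · by_cases hp : com A C l
                · exact ⟨q, by simp, uf2q l hout hp hcm⟩
                · exact ⟨wA, by simp, uBDA l hout hcm hp⟩
              · by_cases hp : com B C l
                · exact absurd ⟨l, hout, hcm, hp⟩ hF3
                · exact ⟨q, by simp, uADq l hout hcm hp⟩
              · exact ⟨pbc, by simp, h.dblm h.hB h.hC h.nBC pbcB pbcC hcm⟩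
            · exact card_le_four q wA wD pbc
        · -- no class-3 line at all
          apply FIN {pab, pcd, pac, pbd}
          · intro p hp
            simp only [mem_insert, mem_singleton] at hp
            rcases hp with rfl|rfl|rfl|rfl
            · exact h.subP A h.hA pabA
            · exact h.subP C h.hC pcdC
            · exact h.subP A h.hA pacA
            · exact h.subP B h.hB pbdB
          · intro l hl
            by_cases eA : l = A
            · exact ⟨pab, by simp, eA ▸ pabA⟩
            by_cases eB : l = B
            · exact ⟨pab, by simp, eB ▸ pabB⟩
            by_cases eC : l = C
            · exact ⟨pcd, by simp, eC ▸ pcdC⟩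
            by_cases eD : l = D
            · exact ⟨pcd, by simp, eD ▸ pcdD⟩
            have hout : Outl L A B C D l := ⟨hl, eA, eB, eC, eD⟩
            rcases h.mne hout with hcm|hcm|hcm|hcm|hcm|hcm
            · exact ⟨pab, by simp, h.dblm h.hA h.hB h.nAB pabA pabB hcm⟩
            · exact ⟨pcd, by simp, h.dblm h.hC h.hD h.nCD pcdC pcdD hcm⟩
            · exact ⟨pac, by simp, h.dblm h.hA h.hC h.nAC pacA pacC hcm⟩
            · exact ⟨pbd, by simp, h.dblm h.hB h.hD h.nBD pbdB pbdD hcm⟩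
            · exact absurd ⟨l, hout, Or.inl hcm⟩ hz
            · exact absurd ⟨l, hout, Or.inr hcm⟩ hz
          · exact card_le_four pab pcd pac pbd
      · -- class 2 full, no class-1 full, no class-3 full
        apply FIN {pac, pbd, wB, wD}
        · intro p hp
          simp only [mem_insert, mem_singleton] at hp
          rcases hp with rfl|rfl|rfl|rfl
          · exact h.subP A h.hA pacA
          · exact h.subP B h.hB pbdB
          · exact h.subP B h.hB wBB
          · exact h.subP D h.hD wDD
        · intro l hl
          by_cases eA : l = A
          · exact ⟨pac, by simp, eA ▸ pacA⟩
          by_cases eB : l = B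
          · exact ⟨pbd, by simp, eB ▸ pbdB⟩
          by_cases eC : l = C
          · exact ⟨pac, by simp, eC ▸ pacC⟩
          by_cases eD : l = D
          · exact ⟨pbd, by simp, eD ▸ pbdD⟩
          have hout : Outl L A B C D l := ⟨hl, eA, eB, eC, eD⟩
          rcases h.mne hout with hcm|hcm|hcm|hcm|hcm|hcm
          · by_cases hp : com C D l
            · exact absurd ⟨l, hout, hcm, hp⟩ hF1
            · exact ⟨wD, by simp, uABD l hout hcm hp⟩
          · by_cases hp : com A B l
            · exact absurd ⟨l, hout, hp, hcm⟩ hF1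
            · exact ⟨wB, by simp, uCDB l hout hcm hp⟩
          · exact ⟨pac, by simp, h.dblm h.hA h.hC h.nAC pacA pacC hcm⟩
          · exact ⟨pbd, by simp, h.dblm h.hB h.hD h.nBD pbdB pbdD hcm⟩
          · by_cases hp : com B C l
            · exact absurd ⟨l, hout, hcm, hp⟩ hF3
            · exact ⟨wB, by simp, uADB l hout hcm hp⟩
          · by_cases hp : com A D l
            · exact absurd ⟨l, hout, hp, hcm⟩ hF3
            · exact ⟨wD, by simp, uBCD l hout hcm hp⟩
        · exact card_le_four pac pbd wB wD
  · by_cases hF3 : ∃ f, Outl L A B C D f ∧ com A D f ∧ com B C f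
    · -- class 3 has a full, class 2 has no full
      obtain ⟨f3, hf3o, hf3AD, hf3BC⟩ := hF3
      by_cases hF1 : ∃ f, Outl L A B C D f ∧ com A B f ∧ com C D f
      · obtain ⟨f1, hf1o, hf1AB, hf1CD⟩ := hF1
        obtain ⟨q, qc, qf1, qf3⟩ := (h.swapBC).qlem
          (hc.swap23) (hf1o.swap23) (hf3o.swap23)
          hcAC hcnBD hf1AB hf1CD hf3AD (com_swap hf3BC)
        have ncf1 : c ≠ f1 := by
          rintro rfl; exact h.trik h.hA hc.1 hc.2.1.symm h.pABC hf1AB hcAC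
        have ncf3 : c ≠ f3 := by
          rintro rfl; exact h.trik h.hA hc.1 hc.2.1.symm h.pACD hcAC hf3AD
        have nf13 : f1 ≠ f3 := by
          rintro rfl; exact h.trik h.hA hf1o.1 hf1o.2.1.symm h.pABD hf1AB hf3AD
        have uf1q : ∀ l, Outl L A B C D l → com A B l → com C D l → q ∈ l := by
          intro l hlo h1 h2
          obtain ⟨q', e1, e2, e3⟩ := (h.swapBC).qlem
            (hc.swap23) (hlo.swap23) (hf3o.swap23)
            hcAC hcnBD h1 h2 hf3AD (com_swap hf3BC)
          have : q' = q := h.same hc.1 hf3o.1 ncf3 e1 e3 qc qf3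
          exact this ▸ e2
        have uf3q : ∀ l, Outl L A B C D l → com A D l → com B C l → q ∈ l := by
          intro l hlo h1 h2
          obtain ⟨q', e1, e2, e3⟩ := (h.swapBC).qlem
            (hc.swap23) (hf1o.swap23) (hlo.swap23)
            hcAC hcnBD hf1AB hf1CD h1 (com_swap h2)
          have : q' = q := h.same hc.1 hf1o.1 ncf1 e1 e2 qc qf1
          exact this ▸ e3
        have uACq : ∀ l, Outl L A B C D l → com A C l → ¬ com B D l → q ∈ l := by
          intro l hlo h1 h2
          obtain ⟨q', e1, e2, e3⟩ := (h.swapBC).qlem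
            (hlo.swap23) (hf1o.swap23) (hf3o.swap23)
            h1 h2 hf1AB hf1CD hf3AD (com_swap hf3BC)
          have : q' = q := h.same hf1o.1 hf3o.1 nf13 e2 e3 qf1 qf3
          exact this ▸ e1
        apply FIN {q, wA, wC, pbd}
        · intro p hp
          simp only [mem_insert, mem_singleton] at hp
          rcases hp with rfl|rfl|rfl|rfl
          · exact h.subP c hc.1 qc
          · exact h.subP A h.hA wAA
          · exact h.subP C h.hC wCC
          · exact h.subP B h.hB pbdB
        · intro l hl
          by_cases eA : l = A
          · exact ⟨wA, by simp, eA ▸ wAA⟩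
          by_cases eB : l = B
          · exact ⟨pbd, by simp, eB ▸ pbdB⟩
          by_cases eC : l = C
          · exact ⟨wC, by simp, eC ▸ wCC⟩
          by_cases eD : l = D
          · exact ⟨pbd, by simp, eD ▸ pbdD⟩
          have hout : Outl L A B C D l := ⟨hl, eA, eB, eC, eD⟩
          rcases h.mne hout with hcm|hcm|hcm|hcm|hcm|hcm
          · by_cases hp : com C D l
            · exact ⟨q, by simp, uf1q l hout hcm hp⟩
            · exact ⟨wC, by simp, uABC l hout hcm hp⟩
          · by_cases hp : com A B l
            · exact ⟨q, by simp, uf1q l hout hp hcm⟩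
            · exact ⟨wA, by simp, uCDA l hout hcm hp⟩
          · by_cases hp : com B D l
            · exact absurd ⟨l, hout, hcm, hp⟩ hF2
            · exact ⟨q, by simp, uACq l hout hcm hp⟩
          · exact ⟨pbd, by simp, h.dblm h.hB h.hD h.nBD pbdB pbdD hcm⟩
          · by_cases hp : com B C l
            · exact ⟨q, by simp, uf3q l hout hcm hp⟩
            · exact ⟨wC, by simp, uADC l hout hcm hp⟩
          · by_cases hp : com A D l
            · exact ⟨q, by simp, uf3q l hout hp hcm⟩
            · exact ⟨wA, by simp, uBCA l hout hcm hp⟩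
        · exact card_le_four q wA wC pbd
      · -- only class 3 has a full
        obtain ⟨pad, padA, padD, -⟩ := id hf3AD
        obtain ⟨pbc, pbcB, pbcC, -⟩ := id hf3BC
        apply FIN {pad, pbc, wA, wD}
        · intro p hp
          simp only [mem_insert, mem_singleton] at hp
          rcases hp with rfl|rfl|rfl|rfl
          · exact h.subP A h.hA padA
          · exact h.subP B h.hB pbcB
          · exact h.subP A h.hA wAA
          · exact h.subP D h.hD wDD
        · intro l hl
          by_cases eA : l = A
          · exact ⟨pad, by simp, eA ▸ padA⟩
          by_cases eB : l = B
          · exact ⟨pbc, by simp, eB ▸ pbcB⟩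
          by_cases eC : l = C
          · exact ⟨pbc, by simp, eC ▸ pbcC⟩
          by_cases eD : l = D
          · exact ⟨pad, by simp, eD ▸ padD⟩
          have hout : Outl L A B C D l := ⟨hl, eA, eB, eC, eD⟩
          rcases h.mne hout with hcm|hcm|hcm|hcm|hcm|hcm
          · by_cases hp : com C D l
            · exact absurd ⟨l, hout, hcm, hp⟩ hF1
            · exact ⟨wD, by simp, uABD l hout hcm hp⟩
          · by_cases hp : com A B l
            · exact absurd ⟨l, hout, hp, hcm⟩ hF1
            · exact ⟨wA, by simp, uCDA l hout hcm hp⟩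
          · by_cases hp : com B D l
            · exact absurd ⟨l, hout, hcm, hp⟩ hF2
            · exact ⟨wD, by simp, uACD l hout hcm hp⟩
          · by_cases hp : com A C l
            · exact absurd ⟨l, hout, hp, hcm⟩ hF2
            · exact ⟨wA, by simp, uBDA l hout hcm hp⟩
          · exact ⟨pad, by simp, h.dblm h.hA h.hD h.nAD padA padD hcm⟩
          · exact ⟨pbc, by simp, h.dblm h.hB h.hC h.nBC pbcB pbcC hcm⟩
        · exact card_le_four pad pbc wA wD
    · -- no fulls in classes 2 and 3
      apply FIN {pab, pcd, wA, wB}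
      · intro p hp
        simp only [mem_insert, mem_singleton] at hp
        rcases hp with rfl|rfl|rfl|rfl
        · exact h.subP A h.hA pabA
        · exact h.subP C h.hC pcdC
        · exact h.subP A h.hA wAA
        · exact h.subP B h.hB wBB
      · intro l hl
        by_cases eA : l = A
        · exact ⟨pab, by simp, eA ▸ pabA⟩
        by_cases eB : l = B
        · exact ⟨pab, by simp, eB ▸ pabB⟩
        by_cases eC : l = C
        · exact ⟨pcd, by simp, eC ▸ pcdC⟩
        by_cases eD : l = D
        · exact ⟨pcd, by simp, eD ▸ pcdD⟩
        have hout : Outl L A B C D l := ⟨hl, eA, eB, eC, eD⟩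
        rcases h.mne hout with hcm|hcm|hcm|hcm|hcm|hcm
        · exact ⟨pab, by simp, h.dblm h.hA h.hB h.nAB pabA pabB hcm⟩
        · exact ⟨pcd, by simp, h.dblm h.hC h.hD h.nCD pcdC pcdD hcm⟩
        · by_cases hp : com B D l
          · exact absurd ⟨l, hout, hcm, hp⟩ hF2
          · exact ⟨wB, by simp, uACB l hout hcm hp⟩
        · by_cases hp : com A C l
          · exact absurd ⟨l, hout, hp, hcm⟩ hF2
          · exact ⟨wA, by simp, uBDA l hout hcm hp⟩
        · by_cases hp : com B C l
          · exact absurd ⟨l, hout, hcm, hp⟩ hF3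
          · exact ⟨wB, by simp, uADB l hout hcm hp⟩
        · by_cases hp : com A D l
          · exact absurd ⟨l, hout, hp, hcm⟩ hF3
          · exact ⟨wA, by simp, uBCA l hout hcm hp⟩
      · exact card_le_four pab pcd wA wB

/-! ### leaves with covers of size at most 3 -/

lemma Cfg.leaf200 (h : Cfg P L r A B C D)
    (hAB : (A ∩ B).Nonempty) (hCD : (C ∩ D).Nonempty)
    (he2 : ∀ x, Outl L A B C D x → ¬ com A C x ∧ ¬ com B D x)
    (he3 : ∀ x, Outl L A B C D x → ¬ com A D x ∧ ¬ com B C x) :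
    (r+1) * tau P L ≤ P.card + L.card := by
  obtain ⟨p1, hp1⟩ := hAB
  obtain ⟨p2, hp2⟩ := hCD
  rw [mem_inter] at hp1 hp2
  apply h.finish 2 {p1, p2} ∅ ∅
  · intro p hp
    rcases mem_insert.mp hp with rfl|hp
    · exact h.subP A h.hA hp1.1
    · rw [mem_singleton] at hp; subst hp; exact h.subP C h.hC hp2.1
  · intro l hl
    by_cases eA : l = A
    · exact ⟨p1, by simp, eA ▸ hp1.1⟩
    by_cases eB : l = B
    · exact ⟨p1, by simp, eB ▸ hp1.2⟩
    by_cases eC : l = C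
    · exact ⟨p2, by simp, eC ▸ hp2.1⟩
    by_cases eD : l = D
    · exact ⟨p2, by simp, eD ▸ hp2.2⟩
    have hout : Outl L A B C D l := ⟨hl, eA, eB, eC, eD⟩
    rcases h.mne hout with hc|hc|hc|hc|hc|hc
    · exact ⟨p1, by simp, h.dblm h.hA h.hB h.nAB hp1.1 hp1.2 hc⟩
    · exact ⟨p2, by simp, h.dblm h.hC h.hD h.nCD hp2.1 hp2.2 hc⟩
    · exact absurd hc (he2 l hout).1
    · exact absurd hc (he2 l hout).2
    · exact absurd hc (he3 l hout).1
    · exact absurd hc (he3 l hout).2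
  · exact card_le_two p1 p2
  · simp
  · simp
  · simp
  · simp
  · simp
  · simp
  · simp
  · have hs := h.s_le_2r
    have hhr := h.hr
    simp only [card_empty]
    omega

lemma Cfg.leaf100 (h : Cfg P L r A B C D)
    (hAB : (A ∩ B).Nonempty)
    (hcov1 : ∀ x, Outl L A B C D x → com C D x → com A B x)
    (he2 : ∀ x, Outl L A B C D x → ¬ com A C x ∧ ¬ com B D x)
    (he3 : ∀ x, Outl L A B C D x → ¬ com A D x ∧ ¬ com B C x) :
    (r+1) * tau P L ≤ P.card + L.card := by
  obtain ⟨p1, hp1⟩ := hAB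
  rw [mem_inter] at hp1
  have hCne : C.Nonempty := by
    rw [← card_pos, h.ucard C h.hC]; have := h.hr; omega
  have hDne : D.Nonempty := by
    rw [← card_pos, h.ucard D h.hD]; have := h.hr; omega
  obtain ⟨c0, hc0⟩ := hCne
  obtain ⟨d0, hd0⟩ := hDne
  obtain ⟨E, W, hE1, hE2, hW1, hW2, hW3, hW4, hW5, har⟩ := h.count3pack
  apply h.finish 3 {p1, c0, d0} E W
  · intro p hp
    rcases mem_insert.mp hp with rfl|hp
    · exact h.subP A h.hA hp1.1
    rcases mem_insert.mp hp with rfl|hp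
    · exact h.subP C h.hC hc0
    · rw [mem_singleton] at hp; subst hp; exact h.subP D h.hD hd0
  · intro l hl
    by_cases eA : l = A
    · exact ⟨p1, by simp, eA ▸ hp1.1⟩
    by_cases eB : l = B
    · exact ⟨p1, by simp, eB ▸ hp1.2⟩
    by_cases eC : l = C
    · exact ⟨c0, by simp, eC ▸ hc0⟩
    by_cases eD : l = D
    · exact ⟨d0, by simp, eD ▸ hd0⟩
    have hout : Outl L A B C D l := ⟨hl, eA, eB, eC, eD⟩
    rcases h.mne hout with hc|hc|hc|hc|hc|hc
    · exact ⟨p1, by simp, h.dblm h.hA h.hB h.nAB hp1.1 hp1.2 hc⟩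
    · exact ⟨p1, by simp, h.dblm h.hA h.hB h.nAB hp1.1 hp1.2 (hcov1 l hout hc)⟩
    · exact absurd hc (he2 l hout).1
    · exact absurd hc (he2 l hout).2
    · exact absurd hc (he3 l hout).1
    · exact absurd hc (he3 l hout).2
  · exact card_le_three p1 c0 d0
  · exact hE1
  · exact hE2
  · exact hW1
  · exact hW2
  · exact hW3
  · exact hW4
  · exact hW5
  · exact har

lemma Cfg.leaf110 (h : Cfg P L r A B C D)
    (hAB : (A ∩ B).Nonempty) (hAC : (A ∩ C).Nonempty)
    (hcov1 : ∀ x, Outl L A B C D x → com C D x → com A B x)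
    (hcov2 : ∀ x, Outl L A B C D x → com B D x → com A C x)
    (he3 : ∀ x, Outl L A B C D x → ¬ com A D x ∧ ¬ com B C x) :
    (r+1) * tau P L ≤ P.card + L.card := by
  obtain ⟨p1, hp1⟩ := hAB
  obtain ⟨p2, hp2⟩ := hAC
  rw [mem_inter] at hp1 hp2
  have hDne : D.Nonempty := by
    rw [← card_pos, h.ucard D h.hD]; have := h.hr; omega
  obtain ⟨d0, hd0⟩ := hDne
  obtain ⟨E, W, hE1, hE2, hW1, hW2, hW3, hW4, hW5, har⟩ := h.count3pack
  apply h.finish 3 {p1, p2, d0} E W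
  · intro p hp
    rcases mem_insert.mp hp with rfl|hp
    · exact h.subP A h.hA hp1.1
    rcases mem_insert.mp hp with rfl|hp
    · exact h.subP A h.hA hp2.1
    · rw [mem_singleton] at hp; subst hp; exact h.subP D h.hD hd0
  · intro l hl
    by_cases eA : l = A
    · exact ⟨p1, by simp, eA ▸ hp1.1⟩
    by_cases eB : l = B
    · exact ⟨p1, by simp, eB ▸ hp1.2⟩
    by_cases eC : l = C
    · exact ⟨p2, by simp, eC ▸ hp2.2⟩
    by_cases eD : l = D
    · exact ⟨d0, by simp, eD ▸ hd0⟩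
    have hout : Outl L A B C D l := ⟨hl, eA, eB, eC, eD⟩
    rcases h.mne hout with hc|hc|hc|hc|hc|hc
    · exact ⟨p1, by simp, h.dblm h.hA h.hB h.nAB hp1.1 hp1.2 hc⟩
    · exact ⟨p1, by simp, h.dblm h.hA h.hB h.nAB hp1.1 hp1.2 (hcov1 l hout hc)⟩
    · exact ⟨p2, by simp, h.dblm h.hA h.hC h.nAC hp2.1 hp2.2 hc⟩
    · exact ⟨p2, by simp, h.dblm h.hA h.hC h.nAC hp2.1 hp2.2 (hcov2 l hout hc)⟩
    · exact absurd hc (he3 l hout).1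
    · exact absurd hc (he3 l hout).2
  · exact card_le_three p1 p2 d0
  · exact hE1
  · exact hE2
  · exact hW1
  · exact hW2
  · exact hW3
  · exact hW4
  · exact hW5
  · exact har

lemma Cfg.leaf210 (h : Cfg P L r A B C D)
    (hAB : (A ∩ B).Nonempty) (hCD : (C ∩ D).Nonempty) (hAC : (A ∩ C).Nonempty)
    (hcov2 : ∀ x, Outl L A B C D x → com B D x → com A C x)
    (he3 : ∀ x, Outl L A B C D x → ¬ com A D x ∧ ¬ com B C x) :
    (r+1) * tau P L ≤ P.card + L.card := by
  obtain ⟨p1, hp1⟩ := hAB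
  obtain ⟨p2, hp2⟩ := hCD
  obtain ⟨p3, hp3⟩ := hAC
  rw [mem_inter] at hp1 hp2 hp3
  obtain ⟨E, W, hE1, hE2, hW1, hW2, hW3, hW4, hW5, har⟩ := h.count3pack
  apply h.finish 3 {p1, p2, p3} E W
  · intro p hp
    rcases mem_insert.mp hp with rfl|hp
    · exact h.subP A h.hA hp1.1
    rcases mem_insert.mp hp with rfl|hp
    · exact h.subP C h.hC hp2.1
    · rw [mem_singleton] at hp; subst hp; exact h.subP A h.hA hp3.1
  · intro l hl
    by_cases eA : l = A
    · exact ⟨p1, by simp, eA ▸ hp1.1⟩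
    by_cases eB : l = B
    · exact ⟨p1, by simp, eB ▸ hp1.2⟩
    by_cases eC : l = C
    · exact ⟨p2, by simp, eC ▸ hp2.1⟩
    by_cases eD : l = D
    · exact ⟨p2, by simp, eD ▸ hp2.2⟩
    have hout : Outl L A B C D l := ⟨hl, eA, eB, eC, eD⟩
    rcases h.mne hout with hc|hc|hc|hc|hc|hc
    · exact ⟨p1, by simp, h.dblm h.hA h.hB h.nAB hp1.1 hp1.2 hc⟩
    · exact ⟨p2, by simp, h.dblm h.hC h.hD h.nCD hp2.1 hp2.2 hc⟩
    · exact ⟨p3, by simp, h.dblm h.hA h.hC h.nAC hp3.1 hp3.2 hc⟩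
    · exact ⟨p3, by simp, h.dblm h.hA h.hC h.nAC hp3.1 hp3.2 (hcov2 l hout hc)⟩
    · exact absurd hc (he3 l hout).1
    · exact absurd hc (he3 l hout).2
  · exact card_le_three p1 p2 p3
  · exact hE1
  · exact hE2
  · exact hW1
  · exact hW2
  · exact hW3
  · exact hW4
  · exact hW5
  · exact har

lemma Cfg.leafSTAR (h : Cfg P L r A B C D)
    (hAB : (A ∩ B).Nonempty) (hAC : (A ∩ C).Nonempty) (hAD : (A ∩ D).Nonempty)
    (hcov1 : ∀ x, Outl L A B C D x → com C D x → com A B x)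
    (hcov2 : ∀ x, Outl L A B C D x → com B D x → com A C x)
    (hcov3 : ∀ x, Outl L A B C D x → com B C x → com A D x) :
    (r+1) * tau P L ≤ P.card + L.card := by
  obtain ⟨p1, hp1⟩ := hAB
  obtain ⟨p2, hp2⟩ := hAC
  obtain ⟨p3, hp3⟩ := hAD
  rw [mem_inter] at hp1 hp2 hp3
  obtain ⟨E, W, hE1, hE2, hW1, hW2, hW3, hW4, hW5, har⟩ := h.count3pack
  apply h.finish 3 {p1, p2, p3} E W
  · intro p hp
    rcases mem_insert.mp hp with rfl|hp
    · exact h.subP A h.hA hp1.1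
    rcases mem_insert.mp hp with rfl|hp
    · exact h.subP A h.hA hp2.1
    · rw [mem_singleton] at hp; subst hp; exact h.subP A h.hA hp3.1
  · intro l hl
    by_cases eA : l = A
    · exact ⟨p1, by simp, eA ▸ hp1.1⟩
    by_cases eB : l = B
    · exact ⟨p1, by simp, eB ▸ hp1.2⟩
    by_cases eC : l = C
    · exact ⟨p2, by simp, eC ▸ hp2.2⟩
    by_cases eD : l = D
    · exact ⟨p3, by simp, eD ▸ hp3.2⟩
    have hout : Outl L A B C D l := ⟨hl, eA, eB, eC, eD⟩
    rcases h.mne hout with hc|hc|hc|hc|hc|hc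
    · exact ⟨p1, by simp, h.dblm h.hA h.hB h.nAB hp1.1 hp1.2 hc⟩
    · exact ⟨p1, by simp, h.dblm h.hA h.hB h.nAB hp1.1 hp1.2 (hcov1 l hout hc)⟩
    · exact ⟨p2, by simp, h.dblm h.hA h.hC h.nAC hp2.1 hp2.2 hc⟩
    · exact ⟨p2, by simp, h.dblm h.hA h.hC h.nAC hp2.1 hp2.2 (hcov2 l hout hc)⟩
    · exact ⟨p3, by simp, h.dblm h.hA h.hD h.nAD hp3.1 hp3.2 hc⟩
    · exact ⟨p3, by simp, h.dblm h.hA h.hD h.nAD hp3.1 hp3.2 (hcov3 l hout hc)⟩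
  · exact card_le_three p1 p2 p3
  · exact hE1
  · exact hE2
  · exact hW1
  · exact hW2
  · exact hW3
  · exact hW4
  · exact hW5
  · exact har

/-! ### glue helpers -/

lemma mkcov {L : Finset (Finset α)} {A B C D X Y Z W : Finset α}
    (hn : ¬ ∃ x, Outl L A B C D x ∧ com X Y x ∧ ¬ com Z W x) :
    ∀ x, Outl L A B C D x → com X Y x → com Z W x := fun x hx h' =>
  Classical.byContradiction fun hn' => hn ⟨x, hx, h', hn'⟩

lemma mkne {L : Finset (Finset α)} {A B C D X Y Z W : Finset α}
    (hcls : ∃ x, Outl L A B C D x ∧ (com X Y x ∨ com Z W x))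
    (hcov : ∀ x, Outl L A B C D x → com Z W x → com X Y x) : (X ∩ Y).Nonempty := by
  obtain ⟨w, hw, ht⟩ := hcls
  have h' : com X Y w := ht.elim id (hcov w hw)
  obtain ⟨p, p1, p2, -⟩ := h'
  exact ⟨p, mem_inter.mpr ⟨p1, p2⟩⟩

lemma mkemp {L : Finset (Finset α)} {A B C D X Y Z W : Finset α}
    (hn : ¬ ∃ x, Outl L A B C D x ∧ (com X Y x ∨ com Z W x)) :
    ∀ x, Outl L A B C D x → ¬ com X Y x ∧ ¬ com Z W x := fun x hx =>
  ⟨fun h' => hn ⟨x, hx, Or.inl h'⟩, fun h' => hn ⟨x, hx, Or.inr h'⟩⟩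

set_option maxHeartbeats 4000000 in
lemma Cfg.main0 (h : Cfg P L r A B C D)
    (hn1 : ¬ ((∃ x, Outl L A B C D x ∧ com A B x ∧ ¬ com C D x) ∧
              (∃ x, Outl L A B C D x ∧ com C D x ∧ ¬ com A B x)))
    (hn2 : ¬ ((∃ x, Outl L A B C D x ∧ com A C x ∧ ¬ com B D x) ∧
              (∃ x, Outl L A B C D x ∧ com B D x ∧ ¬ com A C x)))
    (hn3 : ¬ ((∃ x, Outl L A B C D x ∧ com A D x ∧ ¬ com B C x) ∧
              (∃ x, Outl L A B C D x ∧ com B C x ∧ ¬ com A D x))) :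
    (r+1) * tau P L ≤ P.card + L.card := by
  by_cases c1 : ∃ x, Outl L A B C D x ∧ (com A B x ∨ com C D x)
  · by_cases c2 : ∃ x, Outl L A B C D x ∧ (com A C x ∨ com B D x)
    · by_cases c3 : ∃ x, Outl L A B C D x ∧ (com A D x ∨ com B C x)
      · -- all three classes nonempty : star or triangle
        by_cases sCD : ∃ x, Outl L A B C D x ∧ com C D x ∧ ¬ com A B x
        · -- class 1 covered by CD
          have nsAB : ¬ ∃ x, Outl L A B C D x ∧ com A B x ∧ ¬ com C D x :=
            fun h' => hn1 ⟨h', sCD⟩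
          have cov1 := mkcov nsAB
          have ne1 : (C ∩ D).Nonempty := by
            obtain ⟨w, hw, h1, -⟩ := sCD
            obtain ⟨p, p1, p2, -⟩ := h1
            exact ⟨p, mem_inter.mpr ⟨p1, p2⟩⟩
          by_cases sAC : ∃ x, Outl L A B C D x ∧ com A C x ∧ ¬ com B D x
          · have nsBD : ¬ ∃ x, Outl L A B C D x ∧ com B D x ∧ ¬ com A C x :=
              fun h' => hn2 ⟨sAC, h'⟩
            have cov2 := mkcov nsBD
            by_cases sAD : ∃ x, Outl L A B C D x ∧ com A D x ∧ ¬ com B C x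
            · -- triangle {A,C,D} : instance (C,D,A,B)
              have nsBC : ¬ ∃ x, Outl L A B C D x ∧ com B C x ∧ ¬ com A D x :=
                fun h' => hn3 ⟨sAD, h'⟩
              obtain ⟨b0, hb0, hb1, hb2⟩ := id sCD
              obtain ⟨c0, hc0, hc1, hc2⟩ := id sAC
              obtain ⟨d0, hd0, hd1, hd2⟩ := id sAD
              exact (h.pCDAB).leafTRI
                ⟨hb0.1, hb0.2.2.2.1, hb0.2.2.2.2, hb0.2.1, hb0.2.2.1⟩ hb1 hb2
                ⟨hc0.1, hc0.2.2.2.1, hc0.2.2.2.2, hc0.2.1, hc0.2.2.1⟩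
                (com_swap hc1) (fun h' => hc2 (com_swap h'))
                ⟨hd0.1, hd0.2.2.2.1, hd0.2.2.2.2, hd0.2.1, hd0.2.2.1⟩
                (com_swap hd1) (fun h' => hd2 (com_swap h'))
                (fun x hx h' => mkcov nsAB x
                  ⟨hx.1, hx.2.2.2.1, hx.2.2.2.2, hx.2.1, hx.2.2.1⟩ h')
                (fun x hx h' => com_swap (mkcov nsBD x
                  ⟨hx.1, hx.2.2.2.1, hx.2.2.2.2, hx.2.1, hx.2.2.1⟩ (com_swap h')))
                (fun x hx h' => com_swap (mkcov nsBC x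
                  ⟨hx.1, hx.2.2.2.1, hx.2.2.2.2, hx.2.1, hx.2.2.1⟩ (com_swap h')))
            · -- star C : (CD, AC, BC)
              have cov3 := mkcov sAD
              have ne2 : (A ∩ C).Nonempty := by
                obtain ⟨w, hw, h1, -⟩ := sAC
                obtain ⟨p, p1, p2, -⟩ := h1
                exact ⟨p, mem_inter.mpr ⟨p1, p2⟩⟩
              have ne3 : (B ∩ C).Nonempty := mkne
                (by obtain ⟨w, hw, ht⟩ := c3; exact ⟨w, hw, ht.symm⟩) cov3
              apply (h.pCDAB).leafSTAR ne1
              · rwa [inter_comm]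
              · rwa [inter_comm]
              · intro x hx h'
                exact cov1 x ⟨hx.1, hx.2.2.2.1, hx.2.2.2.2, hx.2.1, hx.2.2.1⟩ h'
              · intro x hx h'
                exact com_swap (cov2 x ⟨hx.1, hx.2.2.2.1, hx.2.2.2.2, hx.2.1, hx.2.2.1⟩
                  (com_swap h'))
              · intro x hx h'
                exact com_swap (cov3 x ⟨hx.1, hx.2.2.2.1, hx.2.2.2.2, hx.2.1, hx.2.2.1⟩
                  (com_swap h'))
          · -- class 2 covered by BD
            have cov2 := mkcov sAC
            by_cases sBC : ∃ x, Outl L A B C D x ∧ com B C x ∧ ¬ com A D x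
            · by_cases sBD : ∃ x, Outl L A B C D x ∧ com B D x ∧ ¬ com A C x
              · -- triangle {B,C,D} : instance (D,C,B,A)
                have nsAD : ¬ ∃ x, Outl L A B C D x ∧ com A D x ∧ ¬ com B C x :=
                  fun h' => hn3 ⟨h', sBC⟩
                obtain ⟨b0, hb0, hb1, hb2⟩ := id sCD
                obtain ⟨c0, hc0, hc1, hc2⟩ := id sBD
                obtain ⟨d0, hd0, hd1, hd2⟩ := id sBC
                exact (h.pDCBA).leafTRI
                  ⟨hb0.1, hb0.2.2.2.2, hb0.2.2.2.1, hb0.2.2.1, hb0.2.1⟩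
                  (com_swap hb1) (fun h' => hb2 (com_swap h'))
                  ⟨hc0.1, hc0.2.2.2.2, hc0.2.2.2.1, hc0.2.2.1, hc0.2.1⟩
                  (com_swap hc1) (fun h' => hc2 (com_swap h'))
                  ⟨hd0.1, hd0.2.2.2.2, hd0.2.2.2.1, hd0.2.2.1, hd0.2.1⟩
                  (com_swap hd1) (fun h' => hd2 (com_swap h'))
                  (fun x hx h' => com_swap (cov1 x
                    ⟨hx.1, hx.2.2.2.2, hx.2.2.2.1, hx.2.2.1, hx.2.1⟩ (com_swap h')))
                  (fun x hx h' => com_swap (cov2 x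
                    ⟨hx.1, hx.2.2.2.2, hx.2.2.2.1, hx.2.2.1, hx.2.1⟩ (com_swap h')))
                  (fun x hx h' => com_swap (mkcov nsAD x
                    ⟨hx.1, hx.2.2.2.2, hx.2.2.2.1, hx.2.2.1, hx.2.1⟩ (com_swap h')))
              · -- star C again : (CD, AC, BC) with class2 covered by... need AC-cover
                -- here ¬sBD, so AC covers class 2
                have cov2' := mkcov sBD
                have cov3 : ∀ x, Outl L A B C D x → com A D x → com B C x := by
                  intro x hx h'
                  by_contra h''
                  exact hn3 ⟨⟨x, hx, h', h''⟩, sBC⟩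
                have ne2 : (A ∩ C).Nonempty := mkne c2 cov2'
                have ne3 : (B ∩ C).Nonempty := by
                  obtain ⟨w, hw, h1, -⟩ := sBC
                  obtain ⟨p, p1, p2, -⟩ := h1
                  exact ⟨p, mem_inter.mpr ⟨p1, p2⟩⟩
                apply (h.pCDAB).leafSTAR ne1
                · rwa [inter_comm]
                · rwa [inter_comm]
                · intro x hx h'
                  exact cov1 x ⟨hx.1, hx.2.2.2.1, hx.2.2.2.2, hx.2.1, hx.2.2.1⟩ h'
                · intro x hx h'
                  exact com_swap (cov2' x ⟨hx.1, hx.2.2.2.1, hx.2.2.2.2, hx.2.1, hx.2.2.1⟩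
                    (com_swap h'))
                · intro x hx h'
                  exact com_swap (cov3 x ⟨hx.1, hx.2.2.2.1, hx.2.2.2.2, hx.2.1, hx.2.2.1⟩
                    (com_swap h'))
            · -- star D : (CD, BD, AD)
              have cov3 := mkcov sBC
              have ne1' : (D ∩ C).Nonempty := by rwa [inter_comm] at ne1
              have ne2 : (B ∩ D).Nonempty := mkne
                (by obtain ⟨w, hw, ht⟩ := c2; exact ⟨w, hw, ht.symm⟩) cov2
              have ne3 : (A ∩ D).Nonempty := mkne c3 cov3
              apply (h.pDCBA).leafSTAR ne1'
              · rwa [inter_comm]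
              · rwa [inter_comm]
              · intro x hx h'
                exact com_swap (cov1 x ⟨hx.1, hx.2.2.2.2, hx.2.2.2.1, hx.2.2.1, hx.2.1⟩
                  (com_swap h'))
              · intro x hx h'
                exact com_swap (cov2 x ⟨hx.1, hx.2.2.2.2, hx.2.2.2.1, hx.2.2.1, hx.2.1⟩
                  (com_swap h'))
              · intro x hx h'
                exact com_swap (cov3 x ⟨hx.1, hx.2.2.2.2, hx.2.2.2.1, hx.2.2.1, hx.2.1⟩
                  (com_swap h'))
        · -- class 1 covered by AB
          have cov1 := mkcov sCD
          have ne1 : (A ∩ B).Nonempty := mkne c1 cov1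
          by_cases sBD : ∃ x, Outl L A B C D x ∧ com B D x ∧ ¬ com A C x
          · have nsAC : ¬ ∃ x, Outl L A B C D x ∧ com A C x ∧ ¬ com B D x :=
              fun h' => hn2 ⟨h', sBD⟩
            have cov2 := mkcov nsAC
            by_cases sBC : ∃ x, Outl L A B C D x ∧ com B C x ∧ ¬ com A D x
            · -- star B : (AB, BD, BC)
              have nsAD : ¬ ∃ x, Outl L A B C D x ∧ com A D x ∧ ¬ com B C x :=
                fun h' => hn3 ⟨h', sBC⟩
              have cov3 := mkcov nsAD
              have ne2 : (B ∩ D).Nonempty := by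
                obtain ⟨w, hw, h1, -⟩ := sBD
                obtain ⟨p, p1, p2, -⟩ := h1
                exact ⟨p, mem_inter.mpr ⟨p1, p2⟩⟩
              have ne3 : (B ∩ C).Nonempty := by
                obtain ⟨w, hw, h1, -⟩ := sBC
                obtain ⟨p, p1, p2, -⟩ := h1
                exact ⟨p, mem_inter.mpr ⟨p1, p2⟩⟩
              apply (h.pBADC).leafSTAR
              · rwa [inter_comm]
              · exact ne2
              · exact ne3
              · intro x hx h'
                exact com_swap (cov1 x (hx.swap12.swap34) (com_swap h'))
              · intro x hx h'
                exact cov2 x (hx.swap12.swap34) h'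
              · intro x hx h'
                exact cov3 x (hx.swap12.swap34) h'
            · by_cases sAD : ∃ x, Outl L A B C D x ∧ com A D x ∧ ¬ com B C x
              · by_cases sAB : ∃ x, Outl L A B C D x ∧ com A B x ∧ ¬ com C D x
                · -- triangle {A,B,D} : instance (B,A,D,C)
                  obtain ⟨b0, hb0, hb1, hb2⟩ := id sAB
                  obtain ⟨c0, hc0, hc1, hc2⟩ := id sBD
                  obtain ⟨d0, hd0, hd1, hd2⟩ := id sAD
                  exact (h.pBADC).leafTRI
                    (hb0.swap12.swap34) (com_swap hb1) (fun h' => hb2 (com_swap h'))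
                    (hc0.swap12.swap34) hc1 hc2
                    (hd0.swap12.swap34) hd1 hd2
                    (fun x hx h' => com_swap (cov1 x (hx.swap12.swap34) (com_swap h')))
                    (fun x hx h' => cov2 x (hx.swap12.swap34) h')
                    (fun x hx h' => mkcov sBC x (hx.swap12.swap34) h')
                · -- star D : (CD, BD, AD)  with class1 covered by CD?? no: ¬sAB means CD covers
                  have cov1' := mkcov sAB
                  have cov3 := mkcov sBC
                  have ne1' : (D ∩ C).Nonempty := by
                    have := mkne (by obtain ⟨w, hw, ht⟩ := c1; exact ⟨w, hw, ht.symm⟩) cov1'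
                    rwa [inter_comm] at this
                  have ne2 : (B ∩ D).Nonempty := by
                    obtain ⟨w, hw, h1, -⟩ := sBD
                    obtain ⟨p, p1, p2, -⟩ := h1
                    exact ⟨p, mem_inter.mpr ⟨p1, p2⟩⟩
                  have ne3 : (A ∩ D).Nonempty := by
                    obtain ⟨w, hw, h1, -⟩ := sAD
                    obtain ⟨p, p1, p2, -⟩ := h1
                    exact ⟨p, mem_inter.mpr ⟨p1, p2⟩⟩
                  apply (h.pDCBA).leafSTAR ne1'
                  · rwa [inter_comm]
                  · rwa [inter_comm]
                  · intro x hx h'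
                    exact com_swap (cov1' x ⟨hx.1, hx.2.2.2.2, hx.2.2.2.1, hx.2.2.1, hx.2.1⟩
                      (com_swap h'))
                  · intro x hx h'
                    exact com_swap (cov2 x ⟨hx.1, hx.2.2.2.2, hx.2.2.2.1, hx.2.2.1, hx.2.1⟩
                      (com_swap h'))
                  · intro x hx h'
                    exact com_swap (cov3 x ⟨hx.1, hx.2.2.2.2, hx.2.2.2.1, hx.2.2.1, hx.2.1⟩
                      (com_swap h'))
              · -- star B : (AB, BD, BC)
                have cov3 := mkcov sAD
                have ne2 : (B ∩ D).Nonempty := by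
                  obtain ⟨w, hw, h1, -⟩ := sBD
                  obtain ⟨p, p1, p2, -⟩ := h1
                  exact ⟨p, mem_inter.mpr ⟨p1, p2⟩⟩
                have ne3 : (B ∩ C).Nonempty :=
                  mkne (by obtain ⟨w, hw, ht⟩ := c3; exact ⟨w, hw, ht.symm⟩) cov3
                apply (h.pBADC).leafSTAR
                · rwa [inter_comm]
                · exact ne2
                · exact ne3
                · intro x hx h'
                  exact com_swap (cov1 x (hx.swap12.swap34) (com_swap h'))
                · intro x hx h'
                  exact cov2 x (hx.swap12.swap34) h'
                · intro x hx h'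
                  exact cov3 x (hx.swap12.swap34) h'
          · -- class 2 covered by AC
            have cov2 := mkcov sBD
            by_cases sBC : ∃ x, Outl L A B C D x ∧ com B C x ∧ ¬ com A D x
            · by_cases sAB : ∃ x, Outl L A B C D x ∧ com A B x ∧ ¬ com C D x
              · by_cases sAC : ∃ x, Outl L A B C D x ∧ com A C x ∧ ¬ com B D x
                · -- triangle {A,B,C} : base instance
                  obtain ⟨b0, hb0, hb1, hb2⟩ := id sAB
                  obtain ⟨c0, hc0, hc1, hc2⟩ := id sAC
                  obtain ⟨d0, hd0, hd1, hd2⟩ := id sBC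
                  have nsAD : ¬ ∃ x, Outl L A B C D x ∧ com A D x ∧ ¬ com B C x :=
                    fun h' => hn3 ⟨h', sBC⟩
                  exact h.leafTRI hb0 hb1 hb2 hc0 hc1 hc2 hd0 hd1 hd2
                    cov1 cov2 (mkcov nsAD)
                · -- star B : (AB, BD, BC) with class2 covered by BD (¬sAC)
                  have cov2' := mkcov sAC
                  have nsAD : ¬ ∃ x, Outl L A B C D x ∧ com A D x ∧ ¬ com B C x :=
                    fun h' => hn3 ⟨h', sBC⟩
                  have cov3 := mkcov nsAD
                  have ne2 : (B ∩ D).Nonempty :=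
                    mkne (by obtain ⟨w, hw, ht⟩ := c2; exact ⟨w, hw, ht.symm⟩) cov2'
                  have ne3 : (B ∩ C).Nonempty := by
                    obtain ⟨w, hw, h1, -⟩ := sBC
                    obtain ⟨p, p1, p2, -⟩ := h1
                    exact ⟨p, mem_inter.mpr ⟨p1, p2⟩⟩
                  apply (h.pBADC).leafSTAR
                  · rwa [inter_comm]
                  · exact ne2
                  · exact ne3
                  · intro x hx h'
                    exact com_swap (cov1 x (hx.swap12.swap34) (com_swap h'))
                  · intro x hx h'
                    exact cov2' x (hx.swap12.swap34) h'
                  · intro x hx h'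
                    exact cov3 x (hx.swap12.swap34) h'
              · -- star C : (CD, AC, BC) with class1 covered by CD (¬sAB)
                have cov1' := mkcov sAB
                have cov3 : ∀ x, Outl L A B C D x → com A D x → com B C x := by
                  intro x hx h'
                  by_contra h''
                  exact hn3 ⟨⟨x, hx, h', h''⟩, sBC⟩
                have ne1' : (C ∩ D).Nonempty := by
                  have := mkne (by obtain ⟨w, hw, ht⟩ := c1; exact ⟨w, hw, ht.symm⟩) cov1'
                  exact this
                have ne2 : (A ∩ C).Nonempty := mkne c2 cov2
                have ne3 : (B ∩ C).Nonempty := by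
                  obtain ⟨w, hw, h1, -⟩ := sBC
                  obtain ⟨p, p1, p2, -⟩ := h1
                  exact ⟨p, mem_inter.mpr ⟨p1, p2⟩⟩
                apply (h.pCDAB).leafSTAR ne1'
                · rwa [inter_comm]
                · rwa [inter_comm]
                · intro x hx h'
                  exact cov1' x ⟨hx.1, hx.2.2.2.1, hx.2.2.2.2, hx.2.1, hx.2.2.1⟩ h'
                · intro x hx h'
                  exact com_swap (cov2 x ⟨hx.1, hx.2.2.2.1, hx.2.2.2.2, hx.2.1, hx.2.2.1⟩
                    (com_swap h'))
                · intro x hx h'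
                  exact com_swap (cov3 x ⟨hx.1, hx.2.2.2.1, hx.2.2.2.2, hx.2.1, hx.2.2.1⟩
                    (com_swap h'))
            · -- star A : (AB, AC, AD)
              have cov3 := mkcov sBC
              have ne2 : (A ∩ C).Nonempty := mkne c2 cov2
              have ne3 : (A ∩ D).Nonempty := mkne c3 cov3
              exact h.leafSTAR ne1 ne2 ne3 cov1 cov2 cov3
      · -- class 3 empty : classes 1 and 2 present
        have he3 := mkemp c3
        by_cases sCD : ∃ x, Outl L A B C D x ∧ com C D x ∧ ¬ com A B x
        · have nsAB : ¬ ∃ x, Outl L A B C D x ∧ com A B x ∧ ¬ com C D x :=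
            fun h' => hn1 ⟨h', sCD⟩
          have cov1 := mkcov nsAB
          have ne1 : (C ∩ D).Nonempty := by
            obtain ⟨w, hw, h1, -⟩ := id sCD
            obtain ⟨p, p1, p2, -⟩ := h1
            exact ⟨p, mem_inter.mpr ⟨p1, p2⟩⟩
          by_cases sBD : ∃ x, Outl L A B C D x ∧ com B D x ∧ ¬ com A C x
          · have nsAC : ¬ ∃ x, Outl L A B C D x ∧ com A C x ∧ ¬ com B D x :=
              fun h' => hn2 ⟨h', sBD⟩
            have cov2 := mkcov nsAC
            have ne2 : (B ∩ D).Nonempty := by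
              obtain ⟨w, hw, h1, -⟩ := id sBD
              obtain ⟨p, p1, p2, -⟩ := h1
              exact ⟨p, mem_inter.mpr ⟨p1, p2⟩⟩
            apply (h.pDCBA).leaf110
            · rwa [inter_comm]
            · rwa [inter_comm]
            · intro x hx h'
              exact com_swap (cov1 x ⟨hx.1, hx.2.2.2.2, hx.2.2.2.1, hx.2.2.1, hx.2.1⟩
                (com_swap h'))
            · intro x hx h'
              exact com_swap (cov2 x ⟨hx.1, hx.2.2.2.2, hx.2.2.2.1, hx.2.2.1, hx.2.1⟩
                (com_swap h'))
            · intro x hx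
              have := he3 x ⟨hx.1, hx.2.2.2.2, hx.2.2.2.1, hx.2.2.1, hx.2.1⟩
              exact ⟨fun h' => this.1 (com_swap h'), fun h' => this.2 (com_swap h')⟩
          · have cov2 := mkcov sBD
            have ne2 : (A ∩ C).Nonempty := mkne c2 cov2
            apply (h.pCDAB).leaf110 ne1
            · rwa [inter_comm]
            · intro x hx h'
              exact cov1 x ⟨hx.1, hx.2.2.2.1, hx.2.2.2.2, hx.2.1, hx.2.2.1⟩ h'
            · intro x hx h'
              exact com_swap (cov2 x ⟨hx.1, hx.2.2.2.1, hx.2.2.2.2, hx.2.1, hx.2.2.1⟩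
                (com_swap h'))
            · intro x hx
              have := he3 x ⟨hx.1, hx.2.2.2.1, hx.2.2.2.2, hx.2.1, hx.2.2.1⟩
              exact ⟨fun h' => this.2 (com_swap h'), fun h' => this.1 (com_swap h')⟩
        · have cov1 := mkcov sCD
          have ne1 : (A ∩ B).Nonempty := mkne c1 cov1
          by_cases sBD : ∃ x, Outl L A B C D x ∧ com B D x ∧ ¬ com A C x
          · have nsAC : ¬ ∃ x, Outl L A B C D x ∧ com A C x ∧ ¬ com B D x :=
              fun h' => hn2 ⟨h', sBD⟩
            have cov2 := mkcov nsAC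
            have ne2 : (B ∩ D).Nonempty := by
              obtain ⟨w, hw, h1, -⟩ := id sBD
              obtain ⟨p, p1, p2, -⟩ := h1
              exact ⟨p, mem_inter.mpr ⟨p1, p2⟩⟩
            apply (h.pBADC).leaf110
            · rwa [inter_comm]
            · exact ne2
            · intro x hx h'
              exact com_swap (cov1 x (hx.swap12.swap34) (com_swap h'))
            · intro x hx h'
              exact cov2 x (hx.swap12.swap34) h'
            · intro x hx
              have := he3 x (hx.swap12.swap34)
              exact ⟨this.2, this.1⟩
          · have cov2 := mkcov sBD
            have ne2 : (A ∩ C).Nonempty := mkne c2 cov2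
            exact h.leaf110 ne1 ne2 cov1 cov2 he3
    · -- class 2 empty
      have he2 := mkemp c2
      by_cases c3 : ∃ x, Outl L A B C D x ∧ (com A D x ∨ com B C x)
      · -- classes 1 and 3 present
        by_cases sCD : ∃ x, Outl L A B C D x ∧ com C D x ∧ ¬ com A B x
        · have nsAB : ¬ ∃ x, Outl L A B C D x ∧ com A B x ∧ ¬ com C D x :=
            fun h' => hn1 ⟨h', sCD⟩
          have cov1 := mkcov nsAB
          have ne1 : (C ∩ D).Nonempty := by
            obtain ⟨w, hw, h1, -⟩ := id sCD
            obtain ⟨p, p1, p2, -⟩ := h1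
            exact ⟨p, mem_inter.mpr ⟨p1, p2⟩⟩
          by_cases sBC : ∃ x, Outl L A B C D x ∧ com B C x ∧ ¬ com A D x
          · have nsAD : ¬ ∃ x, Outl L A B C D x ∧ com A D x ∧ ¬ com B C x :=
              fun h' => hn3 ⟨h', sBC⟩
            have cov3 := mkcov nsAD
            have ne3 : (B ∩ C).Nonempty := by
              obtain ⟨w, hw, h1, -⟩ := id sBC
              obtain ⟨p, p1, p2, -⟩ := h1
              exact ⟨p, mem_inter.mpr ⟨p1, p2⟩⟩
            apply (h.pCDBA).leaf110 ne1
            · rwa [inter_comm]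
            · intro x hx h'
              exact cov1 x ⟨hx.1, hx.2.2.2.2, hx.2.2.2.1, hx.2.1, hx.2.2.1⟩ (com_swap h')
            · intro x hx h'
              exact com_swap (cov3 x ⟨hx.1, hx.2.2.2.2, hx.2.2.2.1, hx.2.1, hx.2.2.1⟩
                (com_swap h'))
            · intro x hx
              have := he2 x ⟨hx.1, hx.2.2.2.2, hx.2.2.2.1, hx.2.1, hx.2.2.1⟩
              exact ⟨fun h' => this.1 (com_swap h'), fun h' => this.2 (com_swap h')⟩
          · have cov3 := mkcov sBC
            have ne3 : (A ∩ D).Nonempty := mkne c3 cov3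
            apply (h.pDCAB).leaf110
            · rwa [inter_comm]
            · rwa [inter_comm]
            · intro x hx h'
              exact com_swap (cov1 x ⟨hx.1, hx.2.2.2.1, hx.2.2.2.2, hx.2.2.1, hx.2.1⟩ h')
            · intro x hx h'
              exact com_swap (cov3 x ⟨hx.1, hx.2.2.2.1, hx.2.2.2.2, hx.2.2.1, hx.2.1⟩
                (com_swap h'))
            · intro x hx
              have := he2 x ⟨hx.1, hx.2.2.2.1, hx.2.2.2.2, hx.2.2.1, hx.2.1⟩
              exact ⟨fun h' => this.2 (com_swap h'), fun h' => this.1 (com_swap h')⟩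
        · have cov1 := mkcov sCD
          have ne1 : (A ∩ B).Nonempty := mkne c1 cov1
          by_cases sBC : ∃ x, Outl L A B C D x ∧ com B C x ∧ ¬ com A D x
          · have nsAD : ¬ ∃ x, Outl L A B C D x ∧ com A D x ∧ ¬ com B C x :=
              fun h' => hn3 ⟨h', sBC⟩
            have cov3 := mkcov nsAD
            have ne3 : (B ∩ C).Nonempty := by
              obtain ⟨w, hw, h1, -⟩ := id sBC
              obtain ⟨p, p1, p2, -⟩ := h1
              exact ⟨p, mem_inter.mpr ⟨p1, p2⟩⟩
            apply (h.pBACD).leaf110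
            · rwa [inter_comm]
            · exact ne3
            · intro x hx h'
              exact com_swap (cov1 x (hx.swap12) h')
            · intro x hx h'
              exact cov3 x (hx.swap12) h'
            · intro x hx
              have := he2 x (hx.swap12)
              exact ⟨this.2, this.1⟩
          · have cov3 := mkcov sBC
            have ne3 : (A ∩ D).Nonempty := mkne c3 cov3
            apply (h.pABDC).leaf110 ne1 ne3
            · intro x hx h'
              exact cov1 x (hx.swap34) (com_swap h')
            · intro x hx h'
              exact cov3 x (hx.swap34) h'
            · intro x hx
              exact he2 x (hx.swap34)
      · -- only class 1 present
        have he3 := mkemp c3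
        by_cases sCD : ∃ x, Outl L A B C D x ∧ com C D x ∧ ¬ com A B x
        · have nsAB : ¬ ∃ x, Outl L A B C D x ∧ com A B x ∧ ¬ com C D x :=
            fun h' => hn1 ⟨h', sCD⟩
          have cov1 := mkcov nsAB
          have ne1 : (C ∩ D).Nonempty := by
            obtain ⟨w, hw, h1, -⟩ := id sCD
            obtain ⟨p, p1, p2, -⟩ := h1
            exact ⟨p, mem_inter.mpr ⟨p1, p2⟩⟩
          apply (h.pCDAB).leaf100 ne1
          · intro x hx h'
            exact cov1 x ⟨hx.1, hx.2.2.2.1, hx.2.2.2.2, hx.2.1, hx.2.2.1⟩ h'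
          · intro x hx
            have := he2 x ⟨hx.1, hx.2.2.2.1, hx.2.2.2.2, hx.2.1, hx.2.2.1⟩
            exact ⟨fun h' => this.1 (com_swap h'), fun h' => this.2 (com_swap h')⟩
          · intro x hx
            have := he3 x ⟨hx.1, hx.2.2.2.1, hx.2.2.2.2, hx.2.1, hx.2.2.1⟩
            exact ⟨fun h' => this.2 (com_swap h'), fun h' => this.1 (com_swap h')⟩
        · have cov1 := mkcov sCD
          have ne1 : (A ∩ B).Nonempty := mkne c1 cov1
          exact h.leaf100 ne1 cov1 he2 he3
  · -- class 1 empty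
    have he1 := mkemp c1
    by_cases c2 : ∃ x, Outl L A B C D x ∧ (com A C x ∨ com B D x)
    · by_cases c3 : ∃ x, Outl L A B C D x ∧ (com A D x ∨ com B C x)
      · -- classes 2 and 3 present
        by_cases sBD : ∃ x, Outl L A B C D x ∧ com B D x ∧ ¬ com A C x
        · have nsAC : ¬ ∃ x, Outl L A B C D x ∧ com A C x ∧ ¬ com B D x :=
            fun h' => hn2 ⟨h', sBD⟩
          have cov2 := mkcov nsAC
          have ne2 : (B ∩ D).Nonempty := by
            obtain ⟨w, hw, h1, -⟩ := id sBD
            obtain ⟨p, p1, p2, -⟩ := h1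
            exact ⟨p, mem_inter.mpr ⟨p1, p2⟩⟩
          by_cases sBC : ∃ x, Outl L A B C D x ∧ com B C x ∧ ¬ com A D x
          · have nsAD : ¬ ∃ x, Outl L A B C D x ∧ com A D x ∧ ¬ com B C x :=
              fun h' => hn3 ⟨h', sBC⟩
            have cov3 := mkcov nsAD
            have ne3 : (B ∩ C).Nonempty := by
              obtain ⟨w, hw, h1, -⟩ := id sBC
              obtain ⟨p, p1, p2, -⟩ := h1
              exact ⟨p, mem_inter.mpr ⟨p1, p2⟩⟩
            apply (h.pBDCA).leaf110 ne2 ne3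
            · intro x hx h'
              exact cov2 x ⟨hx.1, hx.2.2.2.2, hx.2.1, hx.2.2.2.1, hx.2.2.1⟩ (com_swap h')
            · intro x hx h'
              exact cov3 x ⟨hx.1, hx.2.2.2.2, hx.2.1, hx.2.2.2.1, hx.2.2.1⟩ (com_swap h')
            · intro x hx
              have := he1 x ⟨hx.1, hx.2.2.2.2, hx.2.1, hx.2.2.2.1, hx.2.2.1⟩
              exact ⟨fun h' => this.1 (com_swap h'), fun h' => this.2 (com_swap h')⟩
          · have cov3 := mkcov sBC
            have ne3 : (A ∩ D).Nonempty := mkne c3 cov3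
            apply (h.pDBAC).leaf110
            · rwa [inter_comm]
            · rwa [inter_comm]
            · intro x hx h'
              exact com_swap (cov2 x ⟨hx.1, hx.2.2.2.1, hx.2.2.1, hx.2.2.2.2, hx.2.1⟩ h')
            · intro x hx h'
              exact com_swap (cov3 x ⟨hx.1, hx.2.2.2.1, hx.2.2.1, hx.2.2.2.2, hx.2.1⟩ h')
            · intro x hx
              have := he1 x ⟨hx.1, hx.2.2.2.1, hx.2.2.1, hx.2.2.2.2, hx.2.1⟩
              exact ⟨fun h' => this.2 (com_swap h'), fun h' => this.1 (com_swap h')⟩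
        · have cov2 := mkcov sBD
          have ne2 : (A ∩ C).Nonempty := mkne c2 cov2
          by_cases sBC : ∃ x, Outl L A B C D x ∧ com B C x ∧ ¬ com A D x
          · have nsAD : ¬ ∃ x, Outl L A B C D x ∧ com A D x ∧ ¬ com B C x :=
              fun h' => hn3 ⟨h', sBC⟩
            have cov3 := mkcov nsAD
            have ne3 : (B ∩ C).Nonempty := by
              obtain ⟨w, hw, h1, -⟩ := id sBC
              obtain ⟨p, p1, p2, -⟩ := h1
              exact ⟨p, mem_inter.mpr ⟨p1, p2⟩⟩
            apply (h.pCABD).leaf110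
            · rwa [inter_comm]
            · rwa [inter_comm]
            · intro x hx h'
              exact com_swap (cov2 x ⟨hx.1, hx.2.2.1, hx.2.2.2.1, hx.2.1, hx.2.2.2.2⟩ h')
            · intro x hx h'
              exact com_swap (cov3 x ⟨hx.1, hx.2.2.1, hx.2.2.2.1, hx.2.1, hx.2.2.2.2⟩ h')
            · intro x hx
              have := he1 x ⟨hx.1, hx.2.2.1, hx.2.2.2.1, hx.2.1, hx.2.2.2.2⟩
              exact ⟨this.2, this.1⟩
          · have cov3 := mkcov sBC
            have ne3 : (A ∩ D).Nonempty := mkne c3 cov3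
            apply (h.pACDB).leaf110 ne2 ne3
            · intro x hx h'
              exact cov2 x ⟨hx.1, hx.2.1, hx.2.2.2.2, hx.2.2.1, hx.2.2.2.1⟩ (com_swap h')
            · intro x hx h'
              exact cov3 x ⟨hx.1, hx.2.1, hx.2.2.2.2, hx.2.2.1, hx.2.2.2.1⟩ (com_swap h')
            · intro x hx
              exact he1 x ⟨hx.1, hx.2.1, hx.2.2.2.2, hx.2.2.1, hx.2.2.2.1⟩
      · -- only class 2 present
        have he3 := mkemp c3
        by_cases sBD : ∃ x, Outl L A B C D x ∧ com B D x ∧ ¬ com A C x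
        · have nsAC : ¬ ∃ x, Outl L A B C D x ∧ com A C x ∧ ¬ com B D x :=
            fun h' => hn2 ⟨h', sBD⟩
          have cov2 := mkcov nsAC
          have ne2 : (B ∩ D).Nonempty := by
            obtain ⟨w, hw, h1, -⟩ := id sBD
            obtain ⟨p, p1, p2, -⟩ := h1
            exact ⟨p, mem_inter.mpr ⟨p1, p2⟩⟩
          apply (h.pBDAC).leaf100 ne2
          · intro x hx h'
            exact cov2 x ⟨hx.1, hx.2.2.2.1, hx.2.1, hx.2.2.2.2, hx.2.2.1⟩ h'
          · intro x hx
            have := he1 x ⟨hx.1, hx.2.2.2.1, hx.2.1, hx.2.2.2.2, hx.2.2.1⟩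
            exact ⟨fun h' => this.1 (com_swap h'), fun h' => this.2 (com_swap h')⟩
          · intro x hx
            have := he3 x ⟨hx.1, hx.2.2.2.1, hx.2.1, hx.2.2.2.2, hx.2.2.1⟩
            exact ⟨this.2, fun h' => this.1 (com_swap h')⟩
        · have cov2 := mkcov sBD
          have ne2 : (A ∩ C).Nonempty := mkne c2 cov2
          apply (h.swapBC).leaf100 ne2
          · intro x hx h'
            exact cov2 x (hx.swap23) h'
          · intro x hx
            have := he1 x (hx.swap23)
            exact ⟨this.1, this.2⟩
          · intro x hx
            have := he3 x (hx.swap23)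
            exact ⟨this.1, fun h' => this.2 (com_swap h')⟩
    · by_cases c3 : ∃ x, Outl L A B C D x ∧ (com A D x ∨ com B C x)
      · -- only class 3 present
        have he2 := mkemp c2
        by_cases sBC : ∃ x, Outl L A B C D x ∧ com B C x ∧ ¬ com A D x
        · have nsAD : ¬ ∃ x, Outl L A B C D x ∧ com A D x ∧ ¬ com B C x :=
            fun h' => hn3 ⟨h', sBC⟩
          have cov3 := mkcov nsAD
          have ne3 : (B ∩ C).Nonempty := by
            obtain ⟨w, hw, h1, -⟩ := id sBC
            obtain ⟨p, p1, p2, -⟩ := h1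
            exact ⟨p, mem_inter.mpr ⟨p1, p2⟩⟩
          apply (h.pBCAD).leaf100 ne3
          · intro x hx h'
            exact cov3 x ⟨hx.1, hx.2.2.2.1, hx.2.1, hx.2.2.1, hx.2.2.2.2⟩ h'
          · intro x hx
            have := he1 x ⟨hx.1, hx.2.2.2.1, hx.2.1, hx.2.2.1, hx.2.2.2.2⟩
            exact ⟨fun h' => this.1 (com_swap h'), this.2⟩
          · intro x hx
            have := he2 x ⟨hx.1, hx.2.2.2.1, hx.2.1, hx.2.2.1, hx.2.2.2.2⟩
            exact ⟨this.2, fun h' => this.1 (com_swap h')⟩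
        · have cov3 := mkcov sBC
          have ne3 : (A ∩ D).Nonempty := mkne c3 cov3
          apply (h.pADBC).leaf100 ne3
          · intro x hx h'
            exact cov3 x ⟨hx.1, hx.2.1, hx.2.2.2.1, hx.2.2.2.2, hx.2.2.1⟩ h'
          · intro x hx
            have := he1 x ⟨hx.1, hx.2.1, hx.2.2.2.1, hx.2.2.2.2, hx.2.2.1⟩
            exact ⟨this.1, fun h' => this.2 (com_swap h')⟩
          · intro x hx
            have := he2 x ⟨hx.1, hx.2.1, hx.2.2.2.1, hx.2.2.2.2, hx.2.2.1⟩
            exact ⟨this.1, fun h' => this.2 (com_swap h')⟩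
      · -- no outside lines at all : contradiction
        exfalso
        obtain ⟨w, hw⟩ := h.outside_exists
        rcases h.mne hw with hc|hc|hc|hc|hc|hc
        · exact c1 ⟨w, hw, Or.inl hc⟩
        · exact c1 ⟨w, hw, Or.inr hc⟩
        · exact c2 ⟨w, hw, Or.inl hc⟩
        · exact c2 ⟨w, hw, Or.inr hc⟩
        · exact c3 ⟨w, hw, Or.inl hc⟩
        · exact c3 ⟨w, hw, Or.inr hc⟩

set_option maxHeartbeats 4000000 in
lemma Cfg.main2 (h : Cfg P L r A B C D)
    (hsAB : ∃ x, Outl L A B C D x ∧ com A B x ∧ ¬ com C D x)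
    (hsCD : ∃ x, Outl L A B C D x ∧ com C D x ∧ ¬ com A B x)
    (hnt2 : ¬ ((∃ x, Outl L A B C D x ∧ com A C x ∧ ¬ com B D x) ∧
              (∃ x, Outl L A B C D x ∧ com B D x ∧ ¬ com A C x)))
    (hnt3 : ¬ ((∃ x, Outl L A B C D x ∧ com A D x ∧ ¬ com B C x) ∧
              (∃ x, Outl L A B C D x ∧ com B C x ∧ ¬ com A D x))) :
    (r+1) * tau P L ≤ P.card + L.card := by
  obtain ⟨a, ha, haAB, hanCD⟩ := id hsAB
  obtain ⟨b, hb, hbCD, hbnAB⟩ := id hsCD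
  have neAB : (A ∩ B).Nonempty := by
    obtain ⟨p, p1, p2, -⟩ := id haAB; exact ⟨p, mem_inter.mpr ⟨p1, p2⟩⟩
  have neCD : (C ∩ D).Nonempty := by
    obtain ⟨p, p1, p2, -⟩ := id hbCD; exact ⟨p, mem_inter.mpr ⟨p1, p2⟩⟩
  by_cases c2 : ∃ x, Outl L A B C D x ∧ (com A C x ∨ com B D x)
  · by_cases c3 : ∃ x, Outl L A B C D x ∧ (com A D x ∨ com B C x)
    · -- both other classes nonempty : leaf211 variants
      by_cases sBD : ∃ x, Outl L A B C D x ∧ com B D x ∧ ¬ com A C x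
      · have nsAC : ¬ ∃ x, Outl L A B C D x ∧ com A C x ∧ ¬ com B D x :=
          fun h' => hnt2 ⟨h', sBD⟩
        have cov2 := mkcov nsAC
        obtain ⟨z2, hz2o, hz2t⟩ := id c2
        have hz2BD : com B D z2 := hz2t.elim (cov2 z2 hz2o) id
        by_cases sBC : ∃ x, Outl L A B C D x ∧ com B C x ∧ ¬ com A D x
        · have nsAD : ¬ ∃ x, Outl L A B C D x ∧ com A D x ∧ ¬ com B C x :=
            fun h' => hnt3 ⟨h', sBC⟩
          have cov3 := mkcov nsAD
          obtain ⟨z3, hz3o, hz3t⟩ := id c3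
          have hz3BC : com B C z3 := hz3t.elim (cov3 z3 hz3o) id
          -- edges (BD, BC) : instance (B,A,D,C)
          exact (h.pBADC).leaf211 (ha.swap12.swap34) (com_swap haAB)
            (fun h' => hanCD (com_swap h'))
            (hb.swap12.swap34) (com_swap hbCD) (fun h' => hbnAB (com_swap h'))
            (hz2o.swap12.swap34) hz2BD (hz3o.swap12.swap34) hz3BC
            (fun x hx h' => cov2 x (hx.swap12.swap34) h')
            (fun x hx h' => cov3 x (hx.swap12.swap34) h')
        · have cov3 := mkcov sBC
          obtain ⟨z3, hz3o, hz3t⟩ := id c3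
          have hz3AD : com A D z3 := hz3t.elim id (cov3 z3 hz3o)
          -- edges (BD, AD) : instance (D,C,B,A)
          exact (h.pDCBA).leaf211
            ⟨hb.1, hb.2.2.2.2, hb.2.2.2.1, hb.2.2.1, hb.2.1⟩ (com_swap hbCD)
            (fun h' => hbnAB (com_swap h'))
            ⟨ha.1, ha.2.2.2.2, ha.2.2.2.1, ha.2.2.1, ha.2.1⟩ (com_swap haAB)
            (fun h' => hanCD (com_swap h'))
            ⟨hz2o.1, hz2o.2.2.2.2, hz2o.2.2.2.1, hz2o.2.2.1, hz2o.2.1⟩ (com_swap hz2BD)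
            ⟨hz3o.1, hz3o.2.2.2.2, hz3o.2.2.2.1, hz3o.2.2.1, hz3o.2.1⟩ (com_swap hz3AD)
            (fun x hx h' => com_swap (cov2 x
              ⟨hx.1, hx.2.2.2.2, hx.2.2.2.1, hx.2.2.1, hx.2.1⟩ (com_swap h')))
            (fun x hx h' => com_swap (cov3 x
              ⟨hx.1, hx.2.2.2.2, hx.2.2.2.1, hx.2.2.1, hx.2.1⟩ (com_swap h')))
      · have cov2 := mkcov sBD
        obtain ⟨z2, hz2o, hz2t⟩ := id c2
        have hz2AC : com A C z2 := hz2t.elim id (cov2 z2 hz2o)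
        by_cases sBC : ∃ x, Outl L A B C D x ∧ com B C x ∧ ¬ com A D x
        · have nsAD : ¬ ∃ x, Outl L A B C D x ∧ com A D x ∧ ¬ com B C x :=
            fun h' => hnt3 ⟨h', sBC⟩
          have cov3 := mkcov nsAD
          obtain ⟨z3, hz3o, hz3t⟩ := id c3
          have hz3BC : com B C z3 := hz3t.elim (cov3 z3 hz3o) id
          -- edges (AC, BC) : instance (C,D,A,B)
          exact (h.pCDAB).leaf211
            ⟨hb.1, hb.2.2.2.1, hb.2.2.2.2, hb.2.1, hb.2.2.1⟩ hbCD hbnAB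
            ⟨ha.1, ha.2.2.2.1, ha.2.2.2.2, ha.2.1, ha.2.2.1⟩ haAB hanCD
            ⟨hz2o.1, hz2o.2.2.2.1, hz2o.2.2.2.2, hz2o.2.1, hz2o.2.2.1⟩ (com_swap hz2AC)
            ⟨hz3o.1, hz3o.2.2.2.1, hz3o.2.2.2.2, hz3o.2.1, hz3o.2.2.1⟩ (com_swap hz3BC)
            (fun x hx h' => com_swap (cov2 x
              ⟨hx.1, hx.2.2.2.1, hx.2.2.2.2, hx.2.1, hx.2.2.1⟩ (com_swap h')))
            (fun x hx h' => com_swap (cov3 x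
              ⟨hx.1, hx.2.2.2.1, hx.2.2.2.2, hx.2.1, hx.2.2.1⟩ (com_swap h')))
        · have cov3 := mkcov sBC
          obtain ⟨z3, hz3o, hz3t⟩ := id c3
          have hz3AD : com A D z3 := hz3t.elim id (cov3 z3 hz3o)
          -- edges (AC, AD) : base instance
          exact h.leaf211 ha haAB hanCD hb hbCD hbnAB hz2o hz2AC hz3o hz3AD cov2 cov3
    · -- class 3 empty
      have he3 := mkemp c3
      by_cases sBD : ∃ x, Outl L A B C D x ∧ com B D x ∧ ¬ com A C x
      · have nsAC : ¬ ∃ x, Outl L A B C D x ∧ com A C x ∧ ¬ com B D x :=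
          fun h' => hnt2 ⟨h', sBD⟩
        have cov2 := mkcov nsAC
        have neBD : (B ∩ D).Nonempty := by
          obtain ⟨w, hw, h1, -⟩ := id sBD
          obtain ⟨p, p1, p2, -⟩ := h1
          exact ⟨p, mem_inter.mpr ⟨p1, p2⟩⟩
        apply (h.pBADC).leaf210
        · rwa [inter_comm]
        · rwa [inter_comm]
        · exact neBD
        · intro x hx h'
          exact cov2 x (hx.swap12.swap34) h'
        · intro x hx
          have := he3 x (hx.swap12.swap34)
          exact ⟨this.2, this.1⟩
      · have cov2 := mkcov sBD
        have neAC : (A ∩ C).Nonempty := mkne c2 cov2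
        exact h.leaf210 neAB neCD neAC cov2 he3
  · -- class 2 empty
    have he2 := mkemp c2
    by_cases c3 : ∃ x, Outl L A B C D x ∧ (com A D x ∨ com B C x)
    · by_cases sBC : ∃ x, Outl L A B C D x ∧ com B C x ∧ ¬ com A D x
      · have nsAD : ¬ ∃ x, Outl L A B C D x ∧ com A D x ∧ ¬ com B C x :=
          fun h' => hnt3 ⟨h', sBC⟩
        have cov3 := mkcov nsAD
        have neBC : (B ∩ C).Nonempty := by
          obtain ⟨w, hw, h1, -⟩ := id sBC
          obtain ⟨p, p1, p2, -⟩ := h1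
          exact ⟨p, mem_inter.mpr ⟨p1, p2⟩⟩
        apply (h.pBACD).leaf210
        · rwa [inter_comm]
        · exact neCD
        · exact neBC
        · intro x hx h'
          exact cov3 x (hx.swap12) h'
        · intro x hx
          have := he2 x (hx.swap12)
          exact ⟨this.2, this.1⟩
      · have cov3 := mkcov sBC
        have neAD : (A ∩ D).Nonempty := mkne c3 cov3
        apply (h.pABDC).leaf210 neAB
        · rwa [inter_comm]
        · exact neAD
        · intro x hx h'
          exact cov3 x (hx.swap34) h'
        · intro x hx
          exact he2 x (hx.swap34)
    · have he3 := mkemp c3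
      exact h.leaf200 neAB neCD he2 he3

set_option maxHeartbeats 4000000 in
lemma Cfg.main (h : Cfg P L r A B C D) : (r+1) * tau P L ≤ P.card + L.card := by
  by_cases t1 : (∃ x, Outl L A B C D x ∧ com A B x ∧ ¬ com C D x) ∧
      (∃ x, Outl L A B C D x ∧ com C D x ∧ ¬ com A B x)
  · by_cases t2 : (∃ x, Outl L A B C D x ∧ com A C x ∧ ¬ com B D x) ∧
        (∃ x, Outl L A B C D x ∧ com B D x ∧ ¬ com A C x)
    · obtain ⟨⟨a, ha, h1, h2⟩, ⟨b, hb, h3, h4⟩⟩ := t1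
      obtain ⟨⟨c, hc, h5, h6⟩, ⟨d, hd, h7, h8⟩⟩ := t2
      exact h.leaf22 ha h1 h2 hb h3 h4 hc h5 h6 hd h7 h8
    · by_cases t3 : (∃ x, Outl L A B C D x ∧ com A D x ∧ ¬ com B C x) ∧
          (∃ x, Outl L A B C D x ∧ com B C x ∧ ¬ com A D x)
      · obtain ⟨⟨a, ha, h1, h2⟩, ⟨b, hb, h3, h4⟩⟩ := t1
        obtain ⟨⟨c, hc, h5, h6⟩, ⟨d, hd, h7, h8⟩⟩ := t3
        exact (h.swapCD).leaf22 (ha.swap34) h1 (fun h' => h2 (com_swap h'))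
          (hb.swap34) (com_swap h3) h4
          (hc.swap34) h5 h6 (hd.swap34) h7 h8
      · exact h.main2 t1.1 t1.2 t2 t3
  · by_cases t2 : (∃ x, Outl L A B C D x ∧ com A C x ∧ ¬ com B D x) ∧
        (∃ x, Outl L A B C D x ∧ com B D x ∧ ¬ com A C x)
    · by_cases t3 : (∃ x, Outl L A B C D x ∧ com A D x ∧ ¬ com B C x) ∧
          (∃ x, Outl L A B C D x ∧ com B C x ∧ ¬ com A D x)
      · obtain ⟨⟨a, ha, h1, h2⟩, ⟨b, hb, h3, h4⟩⟩ := t2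
        obtain ⟨⟨c, hc, h5, h6⟩, ⟨d, hd, h7, h8⟩⟩ := t3
        exact (h.pACDB).leaf22
          ⟨ha.1, ha.2.1, ha.2.2.2.1, ha.2.2.2.2, ha.2.2.1⟩ h1
          (fun h' => h2 (com_swap h'))
          ⟨hb.1, hb.2.1, hb.2.2.2.1, hb.2.2.2.2, hb.2.2.1⟩ (com_swap h3)
          h4
          ⟨hc.1, hc.2.1, hc.2.2.2.1, hc.2.2.2.2, hc.2.2.1⟩ h5
          (fun h' => h6 (com_swap h'))
          ⟨hd.1, hd.2.1, hd.2.2.2.1, hd.2.2.2.2, hd.2.2.1⟩ (com_swap h7)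
          h8
      · -- only class 2 is a two-class : instance (A,C,B,D)
        apply (h.swapBC).main2 (by
          obtain ⟨x, hx, u1, u2⟩ := t2.1
          exact ⟨x, hx.swap23, u1, u2⟩) (by
          obtain ⟨x, hx, u1, u2⟩ := t2.2
          exact ⟨x, hx.swap23, u1, u2⟩)
        · rintro ⟨⟨x, hx, u1, u2⟩, ⟨y, hy, v1, v2⟩⟩
          exact t1 ⟨⟨x, hx.swap23, u1, u2⟩, ⟨y, hy.swap23, v1, v2⟩⟩
        · rintro ⟨⟨x, hx, u1, u2⟩, ⟨y, hy, v1, v2⟩⟩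
          exact t3 ⟨⟨x, hx.swap23, u1, fun h' => u2 (com_swap h')⟩,
            ⟨y, hy.swap23, com_swap v1, v2⟩⟩
    · by_cases t3 : (∃ x, Outl L A B C D x ∧ com A D x ∧ ¬ com B C x) ∧
          (∃ x, Outl L A B C D x ∧ com B C x ∧ ¬ com A D x)
      · -- only class 3 is a two-class : instance (A,D,B,C)
        apply (h.pADBC).main2 (by
          obtain ⟨x, hx, u1, u2⟩ := t3.1
          exact ⟨x, ⟨hx.1, hx.2.1, hx.2.2.2.2, hx.2.2.1, hx.2.2.2.1⟩, u1, u2⟩) (by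
          obtain ⟨x, hx, u1, u2⟩ := t3.2
          exact ⟨x, ⟨hx.1, hx.2.1, hx.2.2.2.2, hx.2.2.1, hx.2.2.2.1⟩, u1, u2⟩)
        · rintro ⟨⟨x, hx, u1, u2⟩, ⟨y, hy, v1, v2⟩⟩
          exact t1 ⟨⟨x, ⟨hx.1, hx.2.1, hx.2.2.2.1, hx.2.2.2.2, hx.2.2.1⟩, u1,
            fun h' => u2 (com_swap h')⟩,
            ⟨y, ⟨hy.1, hy.2.1, hy.2.2.2.1, hy.2.2.2.2, hy.2.2.1⟩, com_swap v1, v2⟩⟩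
        · rintro ⟨⟨x, hx, u1, u2⟩, ⟨y, hy, v1, v2⟩⟩
          exact t2 ⟨⟨x, ⟨hx.1, hx.2.1, hx.2.2.2.1, hx.2.2.2.2, hx.2.2.1⟩, u1,
            fun h' => u2 (com_swap h')⟩,
            ⟨y, ⟨hy.1, hy.2.1, hy.2.2.2.1, hy.2.2.2.2, hy.2.2.1⟩, com_swap v1, v2⟩⟩
      · exact h.main0 t1 t2 t3

end Stmt12


set_option maxHeartbeats 2000000 in
/-- Any `r`-uniform linear system (`r ≥ 2`) with `|ℒ| > ν₂` and `ν₂ = 4`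
satisfies `(r+1)·τ ≤ |P| + |ℒ|`. -/
theorem stmt12 {α : Type*} [DecidableEq α] (P : Finset α) (L : Finset (Finset α))
    (r : ℕ) (hr : 2 ≤ r) (hLS : IsLinearSystem P L)
    (huniform : ∀ l ∈ L, l.card = r) (hL : nu2 L < L.card) (hν : nu2 L = 4) :
    (r + 1) * tau P L ≤ P.card + L.card := by
  classical
  open Stmt12 in
  -- basic facts
  have hm : 5 ≤ L.card := by omega
  have huniq : ∀ x ∈ L, ∀ y ∈ L, x ≠ y → ∀ p q, p ∈ x → p ∈ y → q ∈ x → q ∈ y → p = q := by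
    intro x hx y hy hxy p q hp1 hp2 hq1 hq2
    by_contra hpq
    have hsub : ({p, q} : Finset α) ⊆ x ∩ y := by
      intro w hw
      rcases mem_insert.mp hw with rfl|hw
      · exact mem_inter.mpr ⟨hp1, hp2⟩
      · rw [mem_singleton] at hw; subst hw; exact mem_inter.mpr ⟨hq1, hq2⟩
    have h2 : 2 ≤ (x ∩ y).card := by
      have := card_le_card hsub
      rwa [card_pair hpq] at this
    have := hLS.2.2 x hx y hy hxy
    omega
  -- extract maximum 2-packing of size 4
  obtain ⟨R, hRp, hR4⟩ := nu2_attained L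
  rw [hν] at hR4
  have hRne : R.Nonempty := by rw [← card_pos, hR4]; norm_num
  obtain ⟨A, hAR⟩ := hRne
  have h3 : (R.erase A).card = 3 := by rw [card_erase_of_mem hAR, hR4]
  obtain ⟨B, C, D, nBC, nBD, nCD, hBCD⟩ := card_eq_three.mp h3
  have hBe : B ∈ R.erase A := by rw [hBCD]; simp
  have hCe : C ∈ R.erase A := by rw [hBCD]; simp
  have hDe : D ∈ R.erase A := by rw [hBCD]; simp
  have hBR : B ∈ R := mem_of_mem_erase hBe
  have hCR : C ∈ R := mem_of_mem_erase hCe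
  have hDR : D ∈ R := mem_of_mem_erase hDe
  have nAB : A ≠ B := (ne_of_mem_erase hBe).symm
  have nAC : A ≠ C := (ne_of_mem_erase hCe).symm
  have nAD : A ≠ D := (ne_of_mem_erase hDe).symm
  have packtriple : ∀ l₁ ∈ R, ∀ l₂ ∈ R, ∀ l₃ ∈ R, l₁ ≠ l₂ → l₁ ≠ l₃ → l₂ ≠ l₃ →
      ∀ p, p ∈ l₁ → p ∈ l₂ → p ∈ l₃ → False := by
    intro l₁ h₁ l₂ h₂ l₃ h₃ n12 n13 n23 p hp1 hp2 hp3
    have he := hRp.2 l₁ h₁ l₂ h₂ l₃ h₃ n12 n13 n23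
    have hpm : p ∈ l₁ ∩ l₂ ∩ l₃ := by rw [mem_inter, mem_inter]; exact ⟨⟨hp1, hp2⟩, hp3⟩
    rw [he] at hpm
    exact notMem_empty p hpm
  -- the K5 property
  have k5main : ∀ x y z u v : Finset α, x ∈ L → y ∈ L → z ∈ L → u ∈ L → v ∈ L →
      x ≠ y → x ≠ z → x ≠ u → x ≠ v → y ≠ z → y ≠ u → y ≠ v → z ≠ u → z ≠ v → u ≠ v →
      com x y z ∨ com x y u ∨ com x y v ∨ com x z u ∨ com x z v ∨ com x u v ∨
      com y z u ∨ com y z v ∨ com y u v ∨ com z u v := by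
    clear hm huniq packtriple hBe hCe hDe hBCD h3 hL hLS huniform hr
    intro x y z u v hx hy hz hu hv nxy nxz nxu nxv nyz nyu nyv nzu nzv nuv
    by_contra hcon
    push_neg at hcon
    obtain ⟨h1, h2, h3', h4, h5, h6, h7, h8, h9, h10⟩ := hcon
    have hpk : Is2Packing L {x,y,z,u,v} := by
      constructor
      · intro l hl
        simp only [mem_insert, mem_singleton] at hl
        rcases hl with rfl|rfl|rfl|rfl|rfl <;> assumption
      · intro l₁ hl₁ l₂ hl₂ l₃ hl₃ n12 n13 n23
        rw [eq_empty_iff_forall_notMem]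
        intro p hp
        rw [mem_inter, mem_inter] at hp
        obtain ⟨⟨hp1, hp2⟩, hp3⟩ := hp
        simp only [mem_insert, mem_singleton] at hl₁ hl₂ hl₃
        rcases hl₁ with rfl|rfl|rfl|rfl|rfl <;>
          rcases hl₂ with rfl|rfl|rfl|rfl|rfl <;>
            rcases hl₃ with rfl|rfl|rfl|rfl|rfl <;>
              first
                | exact n12 rfl
                | exact n13 rfl
                | exact n23 rfl
                | (refine h1 ⟨p, ?_, ?_, ?_⟩ <;> assumption)
                | (refine h2 ⟨p, ?_, ?_, ?_⟩ <;> assumption)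
                | (refine h3' ⟨p, ?_, ?_, ?_⟩ <;> assumption)
                | (refine h4 ⟨p, ?_, ?_, ?_⟩ <;> assumption)
                | (refine h5 ⟨p, ?_, ?_, ?_⟩ <;> assumption)
                | (refine h6 ⟨p, ?_, ?_, ?_⟩ <;> assumption)
                | (refine h7 ⟨p, ?_, ?_, ?_⟩ <;> assumption)
                | (refine h8 ⟨p, ?_, ?_, ?_⟩ <;> assumption)
                | (refine h9 ⟨p, ?_, ?_, ?_⟩ <;> assumption)
                | (refine h10 ⟨p, ?_, ?_, ?_⟩ <;> assumption)
    have hc5 : ({x,y,z,u,v} : Finset (Finset α)).card = 5 := by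
      rw [card_insert_of_notMem (by simp [nxy, nxz, nxu, nxv]),
          card_insert_of_notMem (by simp [nyz, nyu, nyv]),
          card_insert_of_notMem (by simp [nzu, nzv]),
          card_insert_of_notMem (by simp [nuv]), card_singleton]
    have hle := le_nu2 L _ hpk
    rw [hc5, hν] at hle
    omega
  have cfg : Cfg P L r A B C D :=
    { hr := hr
      hm := hm
      ucard := huniform
      subP := hLS.2.1
      uniq := huniq
      hA := hRp.1 hAR
      hB := hRp.1 hBR
      hC := hRp.1 hCR
      hD := hRp.1 hDR
      nAB := nAB
      nAC := nAC
      nAD := nAD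
      nBC := nBC
      nBD := nBD
      nCD := nCD
      pABC := packtriple A hAR B hBR C hCR nAB nAC nBC
      pABD := packtriple A hAR B hBR D hDR nAB nAD nBD
      pACD := packtriple A hAR C hCR D hDR nAC nAD nCD
      pBCD := packtriple B hBR C hCR D hDR nBC nBD nCD
      k5 := k5main }
  exact cfg.main
end

section
/- Let r ≥ 2 and let (P,ℒ) be an r-uniform linear system with |ℒ| > ν₂ and 2-packing number ν₂ ∈ {2,3}. Then (r+1)·τ < |P| + |ℒ| (equivalently, τ < (|P| + |ℒ|)/(r+1)), where τ is the transversal number. -/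
open Finset

section Aux

variable {α : Type*} [DecidableEq α]

lemma nu2_bdd (L : Finset (Finset α)) :
    BddAbove {n | ∃ R : Finset (Finset α), Is2Packing L R ∧ R.card = n} :=
  ⟨L.card, fun _ ⟨R, hR, hc⟩ => hc ▸ Finset.card_le_card hR.1⟩

lemma linearity {P : Finset α} {L : Finset (Finset α)} (hLS : IsLinearSystem P L)
    {m n : Finset α} (hm : m ∈ L) (hn : n ∈ L) (hmn : m ≠ n) {p q : α}
    (hpm : p ∈ m) (hpn : p ∈ n) (hqm : q ∈ m) (hqn : q ∈ n) : p = q :=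
  Finset.card_le_one.mp (hLS.2.2 m hm n hn hmn) p (Finset.mem_inter.mpr ⟨hpm, hpn⟩)
    q (Finset.mem_inter.mpr ⟨hqm, hqn⟩)

lemma pack3 {L : Finset (Finset α)} {x y z : Finset α}
    (hx : x ∈ L) (hy : y ∈ L) (hz : z ∈ L)
    (hxy : x ≠ y) (hxz : x ≠ z) (hyz : y ≠ z)
    (h : ∀ p, p ∈ x → p ∈ y → p ∈ z → False) :
    3 ≤ nu2 L := by
  have hsub : ({x, y, z} : Finset (Finset α)) ⊆ L := by
    intro l hl
    simp only [mem_insert, mem_singleton] at hl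
    rcases hl with rfl | rfl | rfl <;> assumption
  have hpack : Is2Packing L {x, y, z} := by
    refine ⟨hsub, ?_⟩
    intro a ha b hb c hc hab hac hbc
    rw [Finset.eq_empty_iff_forall_notMem]
    intro p hp
    simp only [Finset.mem_inter] at hp
    obtain ⟨⟨hpa, hpb⟩, hpc⟩ := hp
    simp only [mem_insert, mem_singleton] at ha hb hc
    rcases ha with rfl | rfl | rfl <;> rcases hb with rfl | rfl | rfl <;>
      rcases hc with rfl | rfl | rfl <;>
      first
        | exact hab rfl | exact hac rfl | exact hbc rfl
        | exact h p hpa hpb hpc | exact h p hpa hpc hpb | exact h p hpb hpa hpc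
        | exact h p hpb hpc hpa | exact h p hpc hpa hpb | exact h p hpc hpb hpa
  have hcard : ({x, y, z} : Finset (Finset α)).card = 3 := by
    rw [card_insert_of_notMem (by simp [hxy, hxz]),
      card_insert_of_notMem (by simp [hyz]), card_singleton]
  calc 3 = ({x, y, z} : Finset (Finset α)).card := hcard.symm
    _ ≤ nu2 L := le_csSup (nu2_bdd L) ⟨_, hpack, rfl⟩

lemma pack4 {L : Finset (Finset α)} {w x y z : Finset α}
    (hw : w ∈ L) (hx : x ∈ L) (hy : y ∈ L) (hz : z ∈ L)
    (hwx : w ≠ x) (hwy : w ≠ y) (hwz : w ≠ z)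
    (hxy : x ≠ y) (hxz : x ≠ z) (hyz : y ≠ z)
    (h1 : ∀ p, p ∈ w → p ∈ x → p ∈ y → False)
    (h2 : ∀ p, p ∈ w → p ∈ x → p ∈ z → False)
    (h3 : ∀ p, p ∈ w → p ∈ y → p ∈ z → False)
    (h4 : ∀ p, p ∈ x → p ∈ y → p ∈ z → False) :
    4 ≤ nu2 L := by
  have hsub : ({w, x, y, z} : Finset (Finset α)) ⊆ L := by
    intro l hl
    simp only [mem_insert, mem_singleton] at hl
    rcases hl with rfl | rfl | rfl | rfl <;> assumption
  have hpack : Is2Packing L {w, x, y, z} := by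
    refine ⟨hsub, ?_⟩
    intro a ha b hb c hc hab hac hbc
    rw [Finset.eq_empty_iff_forall_notMem]
    intro p hp
    simp only [Finset.mem_inter] at hp
    obtain ⟨⟨hpa, hpb⟩, hpc⟩ := hp
    simp only [mem_insert, mem_singleton] at ha hb hc
    rcases ha with rfl | rfl | rfl | rfl <;> rcases hb with rfl | rfl | rfl | rfl <;>
      rcases hc with rfl | rfl | rfl | rfl <;>
      first
        | exact hab rfl | exact hac rfl | exact hbc rfl
        | exact h1 p hpa hpb hpc | exact h1 p hpa hpc hpb | exact h1 p hpb hpa hpc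
        | exact h1 p hpb hpc hpa | exact h1 p hpc hpa hpb | exact h1 p hpc hpb hpa
        | exact h2 p hpa hpb hpc | exact h2 p hpa hpc hpb | exact h2 p hpb hpa hpc
        | exact h2 p hpb hpc hpa | exact h2 p hpc hpa hpb | exact h2 p hpc hpb hpa
        | exact h3 p hpa hpb hpc | exact h3 p hpa hpc hpb | exact h3 p hpb hpa hpc
        | exact h3 p hpb hpc hpa | exact h3 p hpc hpa hpb | exact h3 p hpc hpb hpa
        | exact h4 p hpa hpb hpc | exact h4 p hpa hpc hpb | exact h4 p hpb hpa hpc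
        | exact h4 p hpb hpc hpa | exact h4 p hpc hpa hpb | exact h4 p hpc hpb hpa
  have hcard : ({w, x, y, z} : Finset (Finset α)).card = 4 := by
    rw [card_insert_of_notMem (by simp [hwx, hwy, hwz]),
      card_insert_of_notMem (by simp [hxy, hxz]),
      card_insert_of_notMem (by simp [hyz]), card_singleton]
  calc 4 = ({w, x, y, z} : Finset (Finset α)).card := hcard.symm
    _ ≤ nu2 L := le_csSup (nu2_bdd L) ⟨_, hpack, rfl⟩

/-- Building a transversal from two points covering all lines. -/
lemma pair_transversal {P : Finset α} {L : Finset (Finset α)} (hLS : IsLinearSystem P L)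
    {u v : α} (hu : u ∈ P) (hv : v ∈ P)
    (hcov : ∀ l ∈ L, u ∈ l ∨ v ∈ l) :
    ∃ T : Finset α, IsTransversal P L T ∧ T.card ≤ 2 := by
  refine ⟨{u, v}, ⟨?_, ?_⟩, ?_⟩
  · intro y hy
    rcases Finset.mem_insert.mp hy with rfl | hy
    · exact hu
    · exact (Finset.mem_singleton.mp hy) ▸ hv
  · intro l hl
    rcases hcov l hl with h | h
    · exact ⟨u, Finset.mem_inter.mpr ⟨by simp, h⟩⟩
    · exact ⟨v, Finset.mem_inter.mpr ⟨by simp, h⟩⟩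
  · exact le_trans (card_insert_le _ _) (by simp)

/-- Case: exactly one of the pairwise intersections is nonempty. -/
lemma caseC1 {P : Finset α} {L : Finset (Finset α)} (hLS : IsLinearSystem P L)
    (no4 : ∀ w x y z : Finset α, w ∈ L → x ∈ L → y ∈ L → z ∈ L →
      w ≠ x → w ≠ y → w ≠ z → x ≠ y → x ≠ z → y ≠ z →
      (∀ p, p ∈ w → p ∈ x → p ∈ y → False) →
      (∀ p, p ∈ w → p ∈ x → p ∈ z → False) →
      (∀ p, p ∈ w → p ∈ y → p ∈ z → False) →
      (∀ p, p ∈ x → p ∈ y → p ∈ z → False) → False)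
    {l1 l2 l3 : Finset α} {p : α}
    (h1 : l1 ∈ L) (h2 : l2 ∈ L) (h3 : l3 ∈ L)
    (h12 : l1 ≠ l2) (h13 : l1 ≠ l3) (h23 : l2 ≠ l3)
    (hp1 : p ∈ l1) (hp2 : p ∈ l2)
    (e13 : ∀ q, q ∈ l1 → q ∈ l3 → False)
    (e23 : ∀ q, q ∈ l2 → q ∈ l3 → False) :
    ∃ T : Finset α, IsTransversal P L T ∧ T.card ≤ 2 := by
  obtain ⟨x, hx⟩ := hLS.1 l3 h3
  have cover : ∀ l ∈ L, p ∈ l ∨ x ∈ l := by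
    intro l hl
    by_cases hl3 : l = l3
    · exact Or.inr (hl3 ▸ hx)
    by_cases hl1 : l = l1
    · exact Or.inl (hl1 ▸ hp1)
    by_cases hl2 : l = l2
    · exact Or.inl (hl2 ▸ hp2)
    left
    by_contra hpl
    refine no4 l1 l2 l3 l h1 h2 h3 hl h12 h13 (fun h => hl1 h.symm) h23
      (fun h => hl2 h.symm) (fun h => hl3 h.symm)
      (fun q a _ c => e13 q a c)
      (fun q a b c => hpl ((linearity hLS h1 h2 h12 a b hp1 hp2) ▸ c))
      (fun q a b _ => e13 q a b)
      (fun q a b _ => e23 q a b)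
  exact pair_transversal hLS (hLS.2.1 l1 h1 hp1) (hLS.2.1 l3 h3 hx) cover

/-- Case: exactly two of the pairwise intersections are nonempty, with `l1` the common line. -/
lemma caseC2 {P : Finset α} {L : Finset (Finset α)} (hLS : IsLinearSystem P L)
    (no4 : ∀ w x y z : Finset α, w ∈ L → x ∈ L → y ∈ L → z ∈ L →
      w ≠ x → w ≠ y → w ≠ z → x ≠ y → x ≠ z → y ≠ z →
      (∀ p, p ∈ w → p ∈ x → p ∈ y → False) →
      (∀ p, p ∈ w → p ∈ x → p ∈ z → False) →
      (∀ p, p ∈ w → p ∈ y → p ∈ z → False) →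
      (∀ p, p ∈ x → p ∈ y → p ∈ z → False) → False)
    {l1 l2 l3 : Finset α} {p12 p13 : α}
    (h1 : l1 ∈ L) (h2 : l2 ∈ L) (h3 : l3 ∈ L)
    (h12 : l1 ≠ l2) (h13 : l1 ≠ l3) (h23 : l2 ≠ l3)
    (ha : p12 ∈ l1) (hb : p12 ∈ l2) (hc : p13 ∈ l1) (hd : p13 ∈ l3)
    (e23 : ∀ q, q ∈ l2 → q ∈ l3 → False) :
    ∃ T : Finset α, IsTransversal P L T ∧ T.card ≤ 2 := by
  have cover : ∀ l ∈ L, p12 ∈ l ∨ p13 ∈ l := by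
    intro l hl
    by_cases hl1 : l = l1
    · exact Or.inl (hl1 ▸ ha)
    by_cases hl2 : l = l2
    · exact Or.inl (hl2 ▸ hb)
    by_cases hl3 : l = l3
    · exact Or.inr (hl3 ▸ hd)
    by_contra hpl
    push_neg at hpl
    obtain ⟨c12, c13⟩ := hpl
    refine no4 l1 l2 l3 l h1 h2 h3 hl h12 h13 (fun h => hl1 h.symm) h23
      (fun h => hl2 h.symm) (fun h => hl3 h.symm)
      (fun q _ b c => e23 q b c)
      (fun q a b c => c12 ((linearity hLS h1 h2 h12 a b ha hb) ▸ c))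
      (fun q a b c => c13 ((linearity hLS h1 h3 h13 a b hc hd) ▸ c))
      (fun q a b _ => e23 q a b)
  exact pair_transversal hLS (hLS.2.1 l1 h1 ha) (hLS.2.1 l1 h1 hc) cover

/-- Case: all three pairwise intersections are nonempty (the triangle case). -/
lemma caseC3 {P : Finset α} {L : Finset (Finset α)} (hLS : IsLinearSystem P L)
    (no4 : ∀ w x y z : Finset α, w ∈ L → x ∈ L → y ∈ L → z ∈ L →
      w ≠ x → w ≠ y → w ≠ z → x ≠ y → x ≠ z → y ≠ z →
      (∀ p, p ∈ w → p ∈ x → p ∈ y → False) →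
      (∀ p, p ∈ w → p ∈ x → p ∈ z → False) →
      (∀ p, p ∈ w → p ∈ y → p ∈ z → False) →
      (∀ p, p ∈ x → p ∈ y → p ∈ z → False) → False)
    {l1 l2 l3 : Finset α} {p12 p13 p23 : α}
    (h1 : l1 ∈ L) (h2 : l2 ∈ L) (h3 : l3 ∈ L)
    (h12 : l1 ≠ l2) (h13 : l1 ≠ l3) (h23 : l2 ≠ l3)
    (hE : ∀ p, p ∈ l1 → p ∈ l2 → p ∈ l3 → False)
    (ha : p12 ∈ l1) (hb : p12 ∈ l2) (hc : p13 ∈ l1) (hd : p13 ∈ l3)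
    (he : p23 ∈ l2) (hf : p23 ∈ l3) :
    ∃ T : Finset α, IsTransversal P L T ∧ T.card ≤ 2 := by
  have n123 : p12 ∉ l3 := fun h => hE p12 ha hb h
  have n132 : p13 ∉ l2 := fun h => hE p13 hc h hd
  have n231 : p23 ∉ l1 := fun h => hE p23 h he hf
  have cover : ∀ l ∈ L, p12 ∈ l ∨ p13 ∈ l ∨ p23 ∈ l := by
    intro l hl
    by_cases hl1 : l = l1
    · exact Or.inl (hl1 ▸ ha)
    by_cases hl2 : l = l2
    · exact Or.inl (hl2 ▸ hb)
    by_cases hl3 : l = l3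
    · exact Or.inr (Or.inl (hl3 ▸ hd))
    by_contra hpl
    push_neg at hpl
    obtain ⟨c12, c13, c23⟩ := hpl
    refine no4 l1 l2 l3 l h1 h2 h3 hl h12 h13 (fun h => hl1 h.symm) h23
      (fun h => hl2 h.symm) (fun h => hl3 h.symm)
      hE
      (fun q a b c => c12 ((linearity hLS h1 h2 h12 a b ha hb) ▸ c))
      (fun q a b c => c13 ((linearity hLS h1 h3 h13 a b hc hd) ▸ c))
      (fun q a b c => c23 ((linearity hLS h2 h3 h23 a b he hf) ▸ c))
  by_cases t1 : ∀ l ∈ L, p12 ∈ l ∨ p13 ∈ l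
  · exact pair_transversal hLS (hLS.2.1 l1 h1 ha) (hLS.2.1 l1 h1 hc) t1
  by_cases t2 : ∀ l ∈ L, p12 ∈ l ∨ p23 ∈ l
  · exact pair_transversal hLS (hLS.2.1 l1 h1 ha) (hLS.2.1 l2 h2 he) t2
  by_cases t3 : ∀ l ∈ L, p13 ∈ l ∨ p23 ∈ l
  · exact pair_transversal hLS (hLS.2.1 l1 h1 hc) (hLS.2.1 l2 h2 he) t3
  exfalso
  push_neg at t1 t2 t3
  obtain ⟨a, haL, ha12, ha13⟩ := t1
  obtain ⟨b, hbL, hb12, hb23⟩ := t2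
  obtain ⟨c, hcL, hc13, hc23⟩ := t3
  have ha23 : p23 ∈ a := ((cover a haL).resolve_left ha12).resolve_left ha13
  have hb13 : p13 ∈ b := by
    rcases cover b hbL with h | h | h
    · exact absurd h hb12
    · exact h
    · exact absurd h hb23
  have hc12 : p12 ∈ c := by
    rcases cover c hcL with h | h | h
    · exact h
    · exact absurd h hc13
    · exact absurd h hc23
  have aneb : a ≠ b := fun h => hb23 (h ▸ ha23)
  have anec : a ≠ c := fun h => hc23 (h ▸ ha23)
  have bnec : b ≠ c := fun h => hc13 (h ▸ hb13)
  have anel1 : a ≠ l1 := fun h => ha12 (by rw [h]; exact ha)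
  have anel2 : a ≠ l2 := fun h => ha12 (by rw [h]; exact hb)
  have anel3 : a ≠ l3 := fun h => ha13 (by rw [h]; exact hd)
  have bnel1 : b ≠ l1 := fun h => hb12 (by rw [h]; exact ha)
  have bnel2 : b ≠ l2 := fun h => hb12 (by rw [h]; exact hb)
  have bnel3 : b ≠ l3 := fun h => hb23 (by rw [h]; exact hf)
  have cnel1 : c ≠ l1 := fun h => hc13 (by rw [h]; exact hc)
  have cnel2 : c ≠ l2 := fun h => hc23 (by rw [h]; exact he)
  have cnel3 : c ≠ l3 := fun h => hc13 (by rw [h]; exact hd)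
  -- the three exceptional lines must share a common point q
  have habc : ∃ q, q ∈ a ∧ q ∈ b ∧ q ∈ c := by
    by_contra hq
    push_neg at hq
    refine no4 a b c l1 haL hbL hcL h1 aneb anec anel1 bnec bnel1 cnel1
      (fun q qa qb qc => hq q qa qb qc)
      (fun q qa qb q1 => ha13 ((linearity hLS hbL h1 bnel1 qb q1 hb13 hc) ▸ qa))
      (fun q qa qc q1 => ha12 ((linearity hLS hcL h1 cnel1 qc q1 hc12 ha) ▸ qa))
      (fun q qb qc q1 => hc13 ((linearity hLS hbL h1 bnel1 qb q1 hb13 hc) ▸ qc))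
  obtain ⟨q, qa, qb, qc⟩ := habc
  have hq12 : q ≠ p12 := fun h => ha12 (h ▸ qa)
  have hq13 : q ≠ p13 := fun h => ha13 (h ▸ qa)
  have hq23 : q ≠ p23 := fun h => hb23 (h ▸ qb)
  by_cases q1 : q ∈ l1
  · have q2 : q ∉ l2 := fun h => hq12 (linearity hLS h1 h2 h12 q1 h ha hb)
    have q3 : q ∉ l3 := fun h => hq13 (linearity hLS h1 h3 h13 q1 h hc hd)
    exact no4 l2 l3 b c h2 h3 hbL hcL h23 bnel2.symm cnel2.symm bnel3.symm cnel3.symm bnec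
      (fun x x2 x3 xb => hb23 ((linearity hLS h2 h3 h23 x2 x3 he hf) ▸ xb))
      (fun x x2 x3 xc => hc23 ((linearity hLS h2 h3 h23 x2 x3 he hf) ▸ xc))
      (fun x x2 xb xc => q2 ((linearity hLS hbL hcL bnec xb xc qb qc) ▸ x2))
      (fun x x3 xb xc => q3 ((linearity hLS hbL hcL bnec xb xc qb qc) ▸ x3))
  by_cases q2 : q ∈ l2
  · have q3 : q ∉ l3 := fun h => hq23 (linearity hLS h2 h3 h23 q2 h he hf)
    exact no4 l1 l3 a c h1 h3 haL hcL h13 anel1.symm cnel1.symm anel3.symm cnel3.symm anec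
      (fun x x1 x3 xa => ha13 ((linearity hLS h1 h3 h13 x1 x3 hc hd) ▸ xa))
      (fun x x1 x3 xc => hc13 ((linearity hLS h1 h3 h13 x1 x3 hc hd) ▸ xc))
      (fun x x1 xa xc => q1 ((linearity hLS haL hcL anec xa xc qa qc) ▸ x1))
      (fun x x3 xa xc => q3 ((linearity hLS haL hcL anec xa xc qa qc) ▸ x3))
  · exact no4 l1 l2 a b h1 h2 haL hbL h12 anel1.symm bnel1.symm anel2.symm bnel2.symm aneb
      (fun x x1 x2 xa => ha12 ((linearity hLS h1 h2 h12 x1 x2 ha hb) ▸ xa))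
      (fun x x1 x2 xb => hb12 ((linearity hLS h1 h2 h12 x1 x2 ha hb) ▸ xb))
      (fun x x1 xa xb => q1 ((linearity hLS haL hbL aneb xa xb qa qb) ▸ x1))
      (fun x x2 xa xb => q2 ((linearity hLS haL hbL aneb xa xb qa qb) ▸ x2))

/-- Main structural lemma: a linear system with no 2-packing of size 4, at least 4 lines,
and a 2-packing of size 3 has a transversal of size at most 2. -/
lemma exists_small_transversal {P : Finset α} {L : Finset (Finset α)}
    (hLS : IsLinearSystem P L) (hno4 : nu2 L ≤ 3) (hL4 : 3 < L.card)
    {l1 l2 l3 : Finset α} (h1 : l1 ∈ L) (h2 : l2 ∈ L) (h3 : l3 ∈ L)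
    (h12 : l1 ≠ l2) (h13 : l1 ≠ l3) (h23 : l2 ≠ l3)
    (hE : ∀ p, p ∈ l1 → p ∈ l2 → p ∈ l3 → False) :
    ∃ T : Finset α, IsTransversal P L T ∧ T.card ≤ 2 := by
  have no4 : ∀ w x y z : Finset α, w ∈ L → x ∈ L → y ∈ L → z ∈ L →
      w ≠ x → w ≠ y → w ≠ z → x ≠ y → x ≠ z → y ≠ z →
      (∀ p, p ∈ w → p ∈ x → p ∈ y → False) →
      (∀ p, p ∈ w → p ∈ x → p ∈ z → False) →
      (∀ p, p ∈ w → p ∈ y → p ∈ z → False) →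
      (∀ p, p ∈ x → p ∈ y → p ∈ z → False) → False := by
    intro w x y z hw hx hy hz hwx hwy hwz hxy hxz hyz g1 g2 g3 g4
    have := pack4 hw hx hy hz hwx hwy hwz hxy hxz hyz g1 g2 g3 g4
    omega
  by_cases e12 : ∃ p, p ∈ l1 ∧ p ∈ l2
  · obtain ⟨p12, hp121, hp122⟩ := e12
    by_cases e13 : ∃ p, p ∈ l1 ∧ p ∈ l3
    · obtain ⟨p13, hp131, hp133⟩ := e13
      by_cases e23 : ∃ p, p ∈ l2 ∧ p ∈ l3
      · obtain ⟨p23, hp232, hp233⟩ := e23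
        exact caseC3 hLS no4 h1 h2 h3 h12 h13 h23 hE hp121 hp122 hp131 hp133 hp232 hp233
      · exact caseC2 hLS no4 h1 h2 h3 h12 h13 h23 hp121 hp122 hp131 hp133
          (fun q a b => e23 ⟨q, a, b⟩)
    · by_cases e23 : ∃ p, p ∈ l2 ∧ p ∈ l3
      · obtain ⟨p23, hp232, hp233⟩ := e23
        exact caseC2 hLS no4 h2 h1 h3 h12.symm h23 h13
          hp122 hp121 hp232 hp233 (fun q a b => e13 ⟨q, a, b⟩)
      · exact caseC1 hLS no4 h1 h2 h3 h12 h13 h23 hp121 hp122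
          (fun q a b => e13 ⟨q, a, b⟩) (fun q a b => e23 ⟨q, a, b⟩)
  · by_cases e13 : ∃ p, p ∈ l1 ∧ p ∈ l3
    · obtain ⟨p13, hp131, hp133⟩ := e13
      by_cases e23 : ∃ p, p ∈ l2 ∧ p ∈ l3
      · obtain ⟨p23, hp232, hp233⟩ := e23
        exact caseC2 hLS no4 h3 h1 h2 h13.symm h23.symm h12
          hp133 hp131 hp233 hp232 (fun q a b => e12 ⟨q, a, b⟩)
      · exact caseC1 hLS no4 h1 h3 h2 h13 h12 h23.symm hp131 hp133
          (fun q a b => e12 ⟨q, a, b⟩) (fun q a b => e23 ⟨q, b, a⟩)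
    · by_cases e23 : ∃ p, p ∈ l2 ∧ p ∈ l3
      · obtain ⟨p23, hp232, hp233⟩ := e23
        exact caseC1 hLS no4 h2 h3 h1 h23 h12.symm h13.symm hp232 hp233
          (fun q a b => e12 ⟨q, b, a⟩) (fun q a b => e13 ⟨q, b, a⟩)
      · -- all pairwise intersections empty: impossible since there is a 4th line
        exfalso
        have hl4 : ∃ l4 ∈ L, l4 ≠ l1 ∧ l4 ≠ l2 ∧ l4 ≠ l3 := by
          by_contra hno
          push_neg at hno
          have hsub : L ⊆ {l1, l2, l3} := by
            intro l hl
            simp only [mem_insert, mem_singleton]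
            by_cases a1 : l = l1
            · exact Or.inl a1
            by_cases a2 : l = l2
            · exact Or.inr (Or.inl a2)
            · exact Or.inr (Or.inr (hno l hl a1 a2))
          have hc1 : ({l1, l2, l3} : Finset (Finset α)).card ≤ 3 := by
            refine le_trans (card_insert_le _ _) (Nat.succ_le_succ ?_)
            refine le_trans (card_insert_le _ _) (Nat.succ_le_succ ?_)
            simp
          have := Finset.card_le_card hsub
          omega
        obtain ⟨l4, hl4L, g1, g2, g3⟩ := hl4
        exact no4 l1 l2 l3 l4 h1 h2 h3 hl4L h12 h13 g1.symm h23 g2.symm g3.symm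
          hE
          (fun q a b _ => e12 ⟨q, a, b⟩)
          (fun q a b _ => e13 ⟨q, a, b⟩)
          (fun q a b _ => e23 ⟨q, a, b⟩)

end Aux

/-- Any `r`-uniform linear system (`r ≥ 2`) with `|ℒ| > ν₂` and
`ν₂ ∈ {2,3}` satisfies `(r+1)·τ < |P| + |ℒ|`. -/
theorem stmt13 {α : Type*} [DecidableEq α] (P : Finset α) (L : Finset (Finset α))
    (r : ℕ) (hr : 2 ≤ r) (hLS : IsLinearSystem P L)
    (huniform : ∀ l ∈ L, l.card = r) (hL : nu2 L < L.card)
    (hν : nu2 L = 2 ∨ nu2 L = 3) :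
    (r + 1) * tau P L < P.card + L.card := by
  rcases hν with h2 | h3
  · -- ν₂ = 2 : all triples of lines are concurrent, hence a common point; τ ≤ 1
    rw [h2] at hL
    obtain ⟨x, y, z, hx, hy, hz, hxy, hxz, hyz⟩ := Finset.two_lt_card_iff.mp hL
    have hcommon : ∀ u v w : Finset α, u ∈ L → v ∈ L → w ∈ L → u ≠ v → u ≠ w → v ≠ w →
        ∃ p, p ∈ u ∧ p ∈ v ∧ p ∈ w := by
      intro u v w hu hv hw huv huw hvw
      by_contra hno
      have := pack3 hu hv hw huv huw hvw (fun p a b c => hno ⟨p, a, b, c⟩)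
      omega
    obtain ⟨p, px, py, pz⟩ := hcommon x y z hx hy hz hxy hxz hyz
    have cover : ∀ l ∈ L, p ∈ l := by
      intro l hl
      by_cases a1 : l = x
      · exact a1 ▸ px
      by_cases a2 : l = y
      · exact a2 ▸ py
      obtain ⟨q, qx, qy, ql⟩ := hcommon x y l hx hy hl hxy
        (fun h => a1 h.symm) (fun h => a2 h.symm)
      exact (linearity hLS hx hy hxy qx qy px py) ▸ ql
    have hT : IsTransversal P L {p} := by
      refine ⟨?_, ?_⟩
      · intro t ht
        rw [Finset.mem_singleton.mp ht]
        exact hLS.2.1 x hx px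
      · intro l hl
        exact ⟨p, Finset.mem_inter.mpr ⟨Finset.mem_singleton_self p, cover l hl⟩⟩
    have htau : tau P L ≤ 1 := Nat.sInf_le ⟨{p}, hT, Finset.card_singleton p⟩
    have hmul : (r + 1) * tau P L ≤ (r + 1) * 1 := Nat.mul_le_mul_left _ htau
    have hPr : r ≤ P.card := by
      have := Finset.card_le_card (hLS.2.1 x hx)
      rw [huniform x hx] at this
      exact this
    omega
  · -- ν₂ = 3 : τ ≤ 2 and |P| ≥ 2r - 1
    rw [h3] at hL
    have hbdd := nu2_bdd L
    have hne : {n | ∃ R : Finset (Finset α), Is2Packing L R ∧ R.card = n}.Nonempty :=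
      ⟨0, ∅, ⟨Finset.empty_subset L, by intro a ha; exact absurd ha (Finset.notMem_empty a)⟩,
        Finset.card_empty⟩
    have hmem := Nat.sSup_mem hne hbdd
    rw [show sSup {n | ∃ R : Finset (Finset α), Is2Packing L R ∧ R.card = n} = nu2 L from rfl,
      h3] at hmem
    obtain ⟨R, hR, hRcard⟩ := hmem
    obtain ⟨l1, l2, l3, h12, h13, h23, hReq⟩ := Finset.card_eq_three.mp hRcard
    have m1 : l1 ∈ R := by rw [hReq]; simp
    have m2 : l2 ∈ R := by rw [hReq]; simp
    have m3 : l3 ∈ R := by rw [hReq]; simp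
    have h1 : l1 ∈ L := hR.1 m1
    have h2 : l2 ∈ L := hR.1 m2
    have h3' : l3 ∈ L := hR.1 m3
    have hE : ∀ p, p ∈ l1 → p ∈ l2 → p ∈ l3 → False := by
      intro p a b c
      have := hR.2 l1 m1 l2 m2 l3 m3 h12 h13 h23
      have hp : p ∈ l1 ∩ l2 ∩ l3 := by
        simp only [Finset.mem_inter]
        exact ⟨⟨a, b⟩, c⟩
      rw [this] at hp
      exact absurd hp (Finset.notMem_empty p)
    obtain ⟨T, hT, hTcard⟩ := exists_small_transversal hLS (le_of_eq h3) hL h1 h2 h3' h12 h13 h23 hE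
    have htau : tau P L ≤ 2 := le_trans (Nat.sInf_le ⟨T, hT, rfl⟩) hTcard
    have hmul : (r + 1) * tau P L ≤ (r + 1) * 2 := Nat.mul_le_mul_left _ htau
    -- |P| ≥ 2r - 1
    have hunion : (l1 ∪ l2).card + (l1 ∩ l2).card = l1.card + l2.card :=
      Finset.card_union_add_card_inter l1 l2
    have hint : (l1 ∩ l2).card ≤ 1 := hLS.2.2 l1 h1 l2 h2 h12
    have hsubP : l1 ∪ l2 ⊆ P := Finset.union_subset (hLS.2.1 l1 h1) (hLS.2.1 l2 h2)
    have hP2 : (l1 ∪ l2).card ≤ P.card := Finset.card_le_card hsubP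
    have hc1 : l1.card = r := huniform l1 h1
    have hc2 : l2.card = r := huniform l2 h2
    omega
end
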